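/- arXiv:1009.1817 — 4 statements merged into one kernel-verified Lean document; each statement's English description precedes it below -/
import Mathlib

section
/- For every n ≥ 1, the (n+1)-st Eulerian polynomial satisfies E_{n+1}(t) = Σ_{I ⊆ S} ((n+1)!/|W_I|) (t-1)^{|I|}, where the sum is over all subsets I of the set S of simple transpositions of S_{n+1} and W_I is the parabolic subgroup generated by I. -/
open Polynomial Finset

/-- Number of descents of a permutation of `Fin m`. -/
noncomputable def des {m : ℕ} (σ : Equiv.Perm (Fin m)) : ℕ :=
  Nat.card {i : Fin m // ∃ h : (i : ℕ) + 1 < m, σ ⟨(i : ℕ) + 1, h⟩ < σ i}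

/-- The `m`-th Eulerian polynomial `∑_{σ ∈ S_m} t^{des σ}` (over `ℚ`). -/
noncomputable def Euler (m : ℕ) : Polynomial ℚ :=
  ∑ σ : Equiv.Perm (Fin m), X ^ des σ

/-- The simple transposition `s_{i+1} = (i+1, i+2)` in `S_{n+1}`. -/
def sT {n : ℕ} (i : Fin n) : Equiv.Perm (Fin (n + 1)) :=
  Equiv.swap i.castSucc i.succ

/-- The standard parabolic subgroup of `S_{n+1}` generated by a set of simple
transpositions (indexed by `A ⊆ Fin n`). -/
def Wsub {n : ℕ} (A : Finset (Fin n)) : Subgroup (Equiv.Perm (Fin (n + 1))) :=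
  Subgroup.closure (sT '' (A : Set (Fin n)))

/-! ### Auxiliary development -/

variable {n : ℕ}

/-- `gI I j` counts the "block cuts" strictly below `j`: the number of simple positions
not in `I` below `j`.  Its fibers are the blocks of the composition determined by `I`. -/
def gI (I : Finset (Fin n)) (j : Fin (n + 1)) : ℕ :=
  (univ.filter fun i : Fin n => i ∉ I ∧ (i : ℕ) < (j : ℕ)).card

lemma gI_mono (I : Finset (Fin n)) {x y : Fin (n + 1)} (h : x ≤ y) : gI I x ≤ gI I y := by
  apply Finset.card_le_card
  intro i hi
  simp only [mem_filter] at hi ⊢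
  exact ⟨hi.1, hi.2.1, lt_of_lt_of_le hi.2.2 h⟩

lemma lt_of_gI_lt {I : Finset (Fin n)} {x y : Fin (n + 1)} (h : gI I x < gI I y) : x < y := by
  by_contra hxy
  exact absurd (gI_mono I (not_lt.mp hxy)) (not_le.mpr h)

lemma gI_succ_of_mem {I : Finset (Fin n)} {i : Fin n} (hi : i ∈ I) :
    gI I i.succ = gI I i.castSucc := by
  unfold gI
  congr 1
  apply Finset.filter_congr
  intro k _
  simp only [Fin.val_succ, Fin.coe_castSucc]
  constructor
  · rintro ⟨hk, hlt⟩
    refine ⟨hk, ?_⟩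
    rcases Nat.lt_succ_iff_lt_or_eq.mp hlt with h | h
    · exact h
    · exact absurd (Fin.val_injective h ▸ hi) hk
  · rintro ⟨hk, hlt⟩
    exact ⟨hk, Nat.lt_succ_of_lt hlt⟩

lemma gI_succ_of_not_mem {I : Finset (Fin n)} {i : Fin n} (hi : i ∉ I) :
    gI I i.succ = gI I i.castSucc + 1 := by
  unfold gI
  have : (univ.filter fun k : Fin n => k ∉ I ∧ (k : ℕ) < (i.succ : ℕ)) =
      insert i (univ.filter fun k : Fin n => k ∉ I ∧ (k : ℕ) < (i.castSucc : ℕ)) := by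
    ext k
    simp only [mem_filter, mem_insert, mem_univ, true_and, Fin.val_succ, Fin.coe_castSucc]
    constructor
    · rintro ⟨hk, hlt⟩
      rcases Nat.lt_succ_iff_lt_or_eq.mp hlt with h | h
      · exact Or.inr ⟨hk, h⟩
      · exact Or.inl (Fin.val_injective h)
    · rintro (rfl | ⟨hk, hlt⟩)
      · exact ⟨hi, Nat.lt_succ_self _⟩
      · exact ⟨hk, Nat.lt_succ_of_lt hlt⟩
  rw [this, Finset.card_insert_of_notMem]
  simp

lemma gI_eq_iff {I : Finset (Fin n)} {i : Fin n} :
    gI I i.castSucc = gI I i.succ ↔ i ∈ I := by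
  constructor
  · intro h
    by_contra hi
    rw [gI_succ_of_not_mem hi] at h
    omega
  · intro h
    exact (gI_succ_of_mem h).symm

/-- The subgroup of permutations preserving each block of the composition given by `I`. -/
def PI (I : Finset (Fin n)) : Subgroup (Equiv.Perm (Fin (n + 1))) where
  carrier := {w | ∀ x, gI I (w x) = gI I x}
  one_mem' := fun _ => rfl
  mul_mem' := by
    intro a b ha hb x
    simp only [Set.mem_setOf_eq] at ha hb ⊢
    rw [Equiv.Perm.mul_apply, ha, hb]
  inv_mem' := by
    intro a ha x
    simp only [Set.mem_setOf_eq] at ha ⊢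
    conv_rhs => rw [← (Equiv.apply_symm_apply a x : a (a⁻¹ x) = x), ha]
    rfl

lemma mem_PI {I : Finset (Fin n)} {w : Equiv.Perm (Fin (n + 1))} :
    w ∈ PI I ↔ ∀ x, gI I (w x) = gI I x := Iff.rfl

lemma sT_mem_PI {I : Finset (Fin n)} {i : Fin n} (hi : i ∈ I) : sT i ∈ PI I := by
  intro x
  have hcs : gI I i.castSucc = gI I i.succ := gI_eq_iff.mpr hi
  rcases eq_or_ne x i.castSucc with rfl | h1
  · rw [sT, Equiv.swap_apply_left, hcs]
  rcases eq_or_ne x i.succ with rfl | h2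
  · rw [sT, Equiv.swap_apply_right, hcs]
  · rw [sT, Equiv.swap_apply_of_ne_of_ne h1 h2]

/-- If `ρ` ascends at every simple position in `I`, it is strictly increasing on each block. -/
lemma chain {I : Finset (Fin n)} {ρ : Equiv.Perm (Fin (n + 1))}
    (hρ : ∀ i ∈ I, ρ i.castSucc < ρ i.succ) :
    ∀ k : ℕ, ∀ x y : Fin (n + 1), (y : ℕ) - (x : ℕ) = k → x < y → gI I x = gI I y → ρ x < ρ y := by
  intro k
  induction k with
  | zero =>
    intro x y hk hxy _
    have := Fin.lt_iff_val_lt_val.mp hxy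
    omega
  | succ k ih =>
    intro x y hk hxy hg
    have hxv : (x : ℕ) < (y : ℕ) := Fin.lt_iff_val_lt_val.mp hxy
    have hyn : (y : ℕ) ≤ n := Nat.lt_succ_iff.mp y.isLt
    have hxn : (x : ℕ) < n := by omega
    let i : Fin n := ⟨(x : ℕ), hxn⟩
    have hxc : x = i.castSucc := by apply Fin.ext; rfl
    have hsv : (i.succ : ℕ) = (x : ℕ) + 1 := rfl
    have hsy : i.succ ≤ y := by rw [Fin.le_iff_val_le_val, hsv]; omega
    have h1 : gI I x ≤ gI I i.succ := by rw [hxc]; exact gI_mono I (le_of_lt (Fin.castSucc_lt_succ (i := i)))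
    have h2 : gI I i.succ ≤ gI I y := gI_mono I hsy
    have hgsucc : gI I i.castSucc = gI I i.succ := by rw [← hxc]; omega
    have hiI : i ∈ I := gI_eq_iff.mp hgsucc
    have hstep : ρ x < ρ i.succ := by rw [hxc]; exact hρ i hiI
    rcases eq_or_lt_of_le hsy with heq | hlt
    · rw [← heq]; exact hstep
    · refine lt_trans hstep (ih i.succ y ?_ hlt ?_)
      · have := Fin.lt_iff_val_lt_val.mp hlt
        omega
      · have h3 : gI I i.succ ≤ gI I y := gI_mono I (le_of_lt hlt)
        omega

lemma perm_eq_one_of_strictMono {m : ℕ} {w : Equiv.Perm (Fin m)} (h : StrictMono w) :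
    w = 1 := by
  have hr : Set.range (⇑w) = Set.range (id : Fin m → Fin m) := by
    simp [Equiv.range_eq_univ]
  have h2 : ⇑w = id := by
    have inst : WellFoundedLT (Fin m) := inferInstance
    exact (@StrictMono.range_inj (Fin m) (Fin m) _ _ inst _ _ h strictMono_id).mp hr
  ext x
  exact congrArg Fin.val (congrFun h2 x)

/-- A block-preserving permutation with no `I`-descents is the identity. -/
lemma eq_one_of_mem_PI {I : Finset (Fin n)} {w : Equiv.Perm (Fin (n + 1))}
    (hw : w ∈ PI I) (hasc : ∀ i ∈ I, w i.castSucc < w i.succ) : w = 1 := by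
  apply perm_eq_one_of_strictMono
  intro x y hxy
  rcases eq_or_lt_of_le (gI_mono I (le_of_lt hxy)) with hg | hg
  · exact chain hasc _ x y rfl hxy hg
  · apply lt_of_gI_lt (I := I)
    rw [hw x, hw y]
    exact hg

/-- The weight used for the bubble-sort induction. -/
def mM (w : Equiv.Perm (Fin (n + 1))) : ℕ := ∑ x : Fin (n + 1), (x : ℕ) * (w x : ℕ)

lemma mM_lt {w : Equiv.Perm (Fin (n + 1))} {i : Fin n} (hd : w i.succ < w i.castSucc) :
    mM w < mM (w * sT i) := by
  have hne : i.castSucc ≠ i.succ := ne_of_lt (Fin.castSucc_lt_succ (i := i))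
  have hsmem : i.succ ∈ (univ : Finset (Fin (n + 1))).erase i.castSucc := by
    simp [hne.symm]
  have key : ∀ v : Equiv.Perm (Fin (n + 1)),
      mM v = (∑ x ∈ ((univ : Finset (Fin (n+1))).erase i.castSucc).erase i.succ,
          (x : ℕ) * (v x : ℕ)) + ((i.succ : ℕ) * (v i.succ : ℕ) + (i.castSucc : ℕ) * (v i.castSucc : ℕ)) := by
    intro v
    rw [mM, ← Finset.sum_erase_add _ _ (Finset.mem_univ i.castSucc),
        ← Finset.sum_erase_add _ _ hsmem]
    ring
  rw [key w, key (w * sT i)]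
  have hrest : ∀ x ∈ ((univ : Finset (Fin (n+1))).erase i.castSucc).erase i.succ,
      (x : ℕ) * ((w * sT i) x : ℕ) = (x : ℕ) * (w x : ℕ) := by
    intro x hx
    simp only [Finset.mem_erase] at hx
    rw [Equiv.Perm.mul_apply, sT, Equiv.swap_apply_of_ne_of_ne hx.2.1 hx.1]
  rw [Finset.sum_congr rfl hrest]
  have h1 : (w * sT i) i.succ = w i.castSucc := by
    rw [Equiv.Perm.mul_apply, sT, Equiv.swap_apply_right]
  have h2 : (w * sT i) i.castSucc = w i.succ := by
    rw [Equiv.Perm.mul_apply, sT, Equiv.swap_apply_left]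
  rw [h1, h2]
  have hv : ((i.succ : Fin (n+1)) : ℕ) = ((i.castSucc : Fin (n+1)) : ℕ) + 1 := rfl
  have hdv : (w i.succ : ℕ) < (w i.castSucc : ℕ) := hd
  apply Nat.add_lt_add_left
  rw [hv]
  set a := ((i.castSucc : Fin (n+1)) : ℕ)
  set b := (w i.castSucc : ℕ)
  set c := (w i.succ : ℕ)
  calc (a + 1) * c + a * b = a * c + a * b + c := by ring
    _ < a * c + a * b + b := by omega
    _ = (a + 1) * b + a * c := by ring

lemma mM_le (w : Equiv.Perm (Fin (n + 1))) : mM w ≤ ∑ x : Fin (n + 1), (x : ℕ) * n := by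
  apply Finset.sum_le_sum
  intro x _
  exact Nat.mul_le_mul_left _ (Nat.lt_succ_iff.mp (w x).isLt)

lemma Wsub_eq_PI (I : Finset (Fin n)) : Wsub I = PI I := by
  apply le_antisymm
  · rw [Wsub, Subgroup.closure_le]
    rintro _ ⟨i, hi, rfl⟩
    exact sT_mem_PI hi
  · intro w hw
    set B := ∑ x : Fin (n + 1), (x : ℕ) * n with hB
    have main : ∀ k : ℕ, ∀ w : Equiv.Perm (Fin (n + 1)), w ∈ PI I → B - mM w = k →
        w ∈ Wsub I := by
      intro k
      induction k using Nat.strong_induction_on with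
      | _ k ih =>
        intro w hw hk
        by_cases hasc : ∀ i ∈ I, w i.castSucc < w i.succ
        · rw [eq_one_of_mem_PI hw hasc]
          exact Subgroup.one_mem _
        · push_neg at hasc
          obtain ⟨i, hiI, hge⟩ := hasc
          have hne : w i.succ ≠ w i.castSucc := fun h =>
            (ne_of_lt (Fin.castSucc_lt_succ (i := i))) (w.injective h.symm)
          have hd : w i.succ < w i.castSucc := lt_of_le_of_ne hge hne
          have hlt : mM w < mM (w * sT i) := mM_lt hd
          have hle : mM (w * sT i) ≤ B := mM_le _
          have hw' : w * sT i ∈ PI I := (PI I).mul_mem hw (sT_mem_PI hiI)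
          have hmem : w * sT i ∈ Wsub I := by
            apply ih (B - mM (w * sT i)) (by omega) _ hw' rfl
          have hsT : sT i ∈ Wsub I := Subgroup.subset_closure ⟨i, hiI, rfl⟩
          have : w = (w * sT i) * sT i := by
            rw [mul_assoc, sT, Equiv.swap_mul_self, mul_one]
          rw [this]
          exact Subgroup.mul_mem _ hmem hsT
    exact main (B - mM w) w hw rfl

lemma card_perm_eq {I : Finset (Fin n)} :
    Fintype.card (Equiv.Perm (Fin (n + 1))) =
      (univ.filter fun ρ : Equiv.Perm (Fin (n + 1)) =>
        ∀ i ∈ I, ρ i.castSucc < ρ i.succ).card * Nat.card (PI I) := by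
  classical
  set s : Finset (Equiv.Perm (Fin (n + 1))) :=
    univ.filter (fun ρ : Equiv.Perm (Fin (n + 1)) => ∀ i ∈ I, ρ i.castSucc < ρ i.succ) with hs
  let Φ : s × (PI I) → Equiv.Perm (Fin (n + 1)) :=
    fun p => (p.1 : Equiv.Perm (Fin (n + 1))) * (p.2 : Equiv.Perm (Fin (n + 1)))
  have happ : ∀ (ρ u : Equiv.Perm (Fin (n + 1))) (z : Fin (n + 1)), ρ ((ρ⁻¹ * u) z) = u z := by
    intro ρ u z
    rw [Equiv.Perm.mul_apply]; exact Equiv.apply_symm_apply ρ (u z)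
  have hinj : Function.Injective Φ := by
    rintro ⟨⟨ρ₁, hρ₁⟩, ⟨w₁, hw₁⟩⟩ ⟨⟨ρ₂, hρ₂⟩, ⟨w₂, hw₂⟩⟩ h
    simp only [Φ] at h
    have hρ₁' : ∀ i ∈ I, ρ₁ i.castSucc < ρ₁ i.succ := (mem_filter.mp hρ₁).2
    have hρ₂' : ∀ i ∈ I, ρ₂ i.castSucc < ρ₂ i.succ := (mem_filter.mp hρ₂).2
    have hu : ρ₂⁻¹ * ρ₁ = w₂ * w₁⁻¹ := by
      have h2 : ρ₂⁻¹ * (ρ₁ * w₁) * w₁⁻¹ = ρ₂⁻¹ * (ρ₂ * w₂) * w₁⁻¹ := by rw [h]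
      simpa [mul_assoc] using h2
    have huPI : ρ₂⁻¹ * ρ₁ ∈ PI I := by
      rw [hu]; exact mul_mem hw₂ (inv_mem hw₁)
    have hu1 : ρ₂⁻¹ * ρ₁ = 1 := by
      apply perm_eq_one_of_strictMono
      intro x y hxy
      rcases eq_or_lt_of_le (gI_mono I (le_of_lt hxy)) with hg | hg
      · have hx1 : ρ₁ x < ρ₁ y := chain hρ₁' _ x y rfl hxy hg
        rcases lt_trichotomy ((ρ₂⁻¹ * ρ₁) x) ((ρ₂⁻¹ * ρ₁) y) with h' | h' | h'
        · exact h'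
        · exact absurd ((ρ₂⁻¹ * ρ₁).injective h') (ne_of_lt hxy)
        · exfalso
          have hgu : gI I ((ρ₂⁻¹ * ρ₁) y) = gI I ((ρ₂⁻¹ * ρ₁) x) := by
            rw [huPI x, huPI y, hg]
          have := chain hρ₂' _ _ _ rfl h' hgu
          rw [happ ρ₂ ρ₁ x, happ ρ₂ ρ₁ y] at this
          exact absurd hx1 (not_lt.mpr (le_of_lt this))
      · apply lt_of_gI_lt (I := I)
        rw [huPI x, huPI y]
        exact hg
    have hρeq : ρ₁ = ρ₂ := by
      have := congrArg (fun z => ρ₂ * z) hu1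
      simpa [← mul_assoc] using this
    subst hρeq
    have hweq : w₁ = w₂ := mul_left_cancel h
    subst hweq
    rfl
  have hsurj : Function.Surjective Φ := by
    intro σ
    set C : Finset (Equiv.Perm (Fin (n + 1))) :=
      univ.filter (fun ρ => σ⁻¹ * ρ ∈ PI I) with hC
    have hCne : C.Nonempty := ⟨σ, by simp [hC, (PI I).one_mem]⟩
    obtain ⟨ρ, hρC, hmax⟩ := Finset.exists_max_image C mM hCne
    have hρPI : σ⁻¹ * ρ ∈ PI I := (mem_filter.mp hρC).2
    have hcond : ∀ i ∈ I, ρ i.castSucc < ρ i.succ := by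
      intro i hi
      by_contra hge
      have hne : ρ i.succ ≠ ρ i.castSucc := fun h' =>
        (ne_of_lt (Fin.castSucc_lt_succ (i := i))) (ρ.injective h'.symm)
      have hd : ρ i.succ < ρ i.castSucc := lt_of_le_of_ne (not_lt.mp hge) hne
      have hmem : ρ * sT i ∈ C := by
        refine mem_filter.mpr ⟨mem_univ _, ?_⟩
        rw [← mul_assoc]
        exact mul_mem hρPI (sT_mem_PI hi)
      exact absurd (mM_lt hd) (not_lt.mpr (hmax _ hmem))
    have hwmem : ρ⁻¹ * σ ∈ PI I := by
      have := inv_mem hρPI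
      simpa [mul_inv_rev] using this
    refine ⟨⟨⟨ρ, mem_filter.mpr ⟨mem_univ _, hcond⟩⟩, ⟨ρ⁻¹ * σ, hwmem⟩⟩, ?_⟩
    simp only [Φ]
    rw [← mul_assoc, mul_inv_cancel, one_mul]
  have hcard := Fintype.card_congr (Equiv.ofBijective Φ ⟨hinj, hsurj⟩)
  rw [← hcard, Fintype.card_prod, Fintype.card_coe, Nat.card_eq_fintype_card]

lemma des_eq (σ : Equiv.Perm (Fin (n + 1))) :
    des σ = (univ.filter fun i : Fin n => σ i.succ < σ i.castSucc).card := by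
  classical
  rw [des, Nat.card_eq_fintype_card, Fintype.card_subtype]
  refine Finset.card_bij'
    (fun (a : Fin (n+1)) (ha : a ∈ univ.filter fun i : Fin (n+1) =>
        ∃ h : (i : ℕ) + 1 < n + 1, σ ⟨(i : ℕ) + 1, h⟩ < σ i) =>
      (⟨(a : ℕ), by obtain ⟨h, -⟩ := (mem_filter.mp ha).2; omega⟩ : Fin n))
    (fun (b : Fin n) _ => b.castSucc) ?_ ?_ ?_ ?_
  · intro a ha
    obtain ⟨h, hlt⟩ := (mem_filter.mp ha).2
    refine mem_filter.mpr ⟨mem_univ _, ?_⟩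
    have e1 : (⟨(a : ℕ), by omega⟩ : Fin n).succ = (⟨(a : ℕ) + 1, h⟩ : Fin (n+1)) := rfl
    have e2 : (⟨(a : ℕ), by omega⟩ : Fin n).castSucc = a := Fin.ext rfl
    rw [e1, e2]
    exact hlt
  · intro b hb
    have hlt := (mem_filter.mp hb).2
    refine mem_filter.mpr ⟨mem_univ _, ?_⟩
    have hb1 : ((b.castSucc : Fin (n+1)) : ℕ) + 1 < n + 1 := by
      simp only [Fin.coe_castSucc]; omega
    refine ⟨hb1, ?_⟩
    have e1 : (⟨((b.castSucc : Fin (n+1)) : ℕ) + 1, hb1⟩ : Fin (n+1)) = b.succ := Fin.ext rfl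
    rw [e1]
    exact hlt
  · intro a _
    exact Fin.ext rfl
  · intro b _
    exact Fin.ext rfl

theorem eulerian_sum_over_parabolics (n : ℕ) (hn : 1 ≤ n) :
    Euler (n + 1) =
      ∑ I : Finset (Fin n),
        (((n + 1).factorial : ℚ) / (Nat.card ↥(Wsub I) : ℚ)) • (X - 1) ^ I.card := by
  classical
  have key : ∀ I : Finset (Fin n),
      (((n + 1).factorial : ℚ) / (Nat.card ↥(Wsub I) : ℚ)) =
        ((univ.filter fun ρ : Equiv.Perm (Fin (n + 1)) =>
          ∀ i ∈ I, ρ i.castSucc < ρ i.succ).card : ℚ) := by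
    intro I
    have h2 := card_perm_eq (n := n) (I := I)
    rw [Fintype.card_perm, Fintype.card_fin] at h2
    have hpos : 0 < Nat.card (PI I) := Nat.card_pos
    rw [Wsub_eq_PI, div_eq_iff (show (Nat.card (PI I) : ℚ) ≠ 0 by exact_mod_cast hpos.ne')]
    exact_mod_cast h2
  have powsum : ∀ A : Finset (Fin n),
      ∑ t ∈ A.powerset, ((X : ℚ[X]) - 1) ^ t.card = X ^ A.card := by
    intro A
    have h := Finset.prod_add (fun _ : Fin n => (X : ℚ[X]) - 1) (fun _ => 1) A
    simp only [prod_const, prod_const_one, one_pow, mul_one, sub_add_cancel] at h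
    exact h.symm
  have hdes : ∀ ρ : Equiv.Perm (Fin (n + 1)), des (Fin.revPerm * ρ) =
      (univ.filter fun i : Fin n => ρ i.castSucc < ρ i.succ).card := by
    intro ρ
    rw [des_eq]
    congr 1
    apply Finset.filter_congr
    intro i _
    simp only [Equiv.Perm.mul_apply, Fin.revPerm_apply]
    exact Fin.rev_lt_rev
  have hL : Euler (n + 1) = ∑ ρ : Equiv.Perm (Fin (n + 1)),
      (X : ℚ[X]) ^ (univ.filter fun i : Fin n => ρ i.castSucc < ρ i.succ).card := by
    rw [Euler,
      ← Equiv.sum_comp (Equiv.mulLeft (Fin.revPerm : Equiv.Perm (Fin (n + 1))))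
        (fun σ => (X : ℚ[X]) ^ des σ)]
    refine Finset.sum_congr rfl fun ρ _ => ?_
    simp only [Equiv.coe_mulLeft]
    rw [hdes ρ]
  rw [hL]
  symm
  calc ∑ I : Finset (Fin n),
        (((n + 1).factorial : ℚ) / (Nat.card ↥(Wsub I) : ℚ)) • (X - 1) ^ I.card
      = ∑ I : Finset (Fin n),
          ((univ.filter fun ρ : Equiv.Perm (Fin (n + 1)) =>
            ∀ i ∈ I, ρ i.castSucc < ρ i.succ).card) • ((X : ℚ[X]) - 1) ^ I.card := by
        refine Finset.sum_congr rfl fun I _ => ?_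
        rw [key I, Nat.cast_smul_eq_nsmul]
    _ = ∑ I : Finset (Fin n),
          ∑ _ρ ∈ univ.filter fun ρ : Equiv.Perm (Fin (n + 1)) =>
            ∀ i ∈ I, ρ i.castSucc < ρ i.succ, ((X : ℚ[X]) - 1) ^ I.card := by
        refine Finset.sum_congr rfl fun I _ => (Finset.sum_const _).symm
    _ = ∑ I : Finset (Fin n), ∑ ρ : Equiv.Perm (Fin (n + 1)),
          if (∀ i ∈ I, ρ i.castSucc < ρ i.succ) then ((X : ℚ[X]) - 1) ^ I.card else 0 := by
        refine Finset.sum_congr rfl fun I _ => Finset.sum_filter _ _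
    _ = ∑ ρ : Equiv.Perm (Fin (n + 1)), ∑ I : Finset (Fin n),
          if (∀ i ∈ I, ρ i.castSucc < ρ i.succ) then ((X : ℚ[X]) - 1) ^ I.card else 0 :=
        Finset.sum_comm
    _ = ∑ ρ : Equiv.Perm (Fin (n + 1)),
          ∑ I ∈ (univ.filter fun i : Fin n => ρ i.castSucc < ρ i.succ).powerset,
            ((X : ℚ[X]) - 1) ^ I.card := by
        refine Finset.sum_congr rfl fun ρ _ => ?_
        rw [← Finset.sum_filter]
        congr 1
        ext I
        simp only [Finset.mem_filter, Finset.mem_univ, true_and, Finset.mem_powerset,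
          Finset.subset_iff]
    _ = ∑ ρ : Equiv.Perm (Fin (n + 1)),
          (X : ℚ[X]) ^ (univ.filter fun i : Fin n => ρ i.castSucc < ρ i.succ).card :=
        Finset.sum_congr rfl fun ρ _ => powsum _
end

section
/- Let n ≥ 2 and S = {s_1,...,s_n} be the simple transpositions of S_{n+1}. Let M_0 = {A ⊆ S : s_{n-1} ∈ A}. Then Σ_{A ⊆ M_0} ((n+1)!/|W_A|) (t-1)^{|A|} = E_{n+1}(t) - (n(n+1)/2)(t+1) E_{n-1}(t). -/
open Polynomial Finset

def DesSet {m : ℕ} (σ : Equiv.Perm (Fin (m+1))) : Finset (Fin m) :=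
  univ.filter (fun i => σ i.succ < σ i.castSucc)

lemma mem_DesSet {m : ℕ} (σ : Equiv.Perm (Fin (m+1))) (i : Fin m) :
    i ∈ DesSet σ ↔ σ i.succ < σ i.castSucc := by simp [DesSet]

lemma des_eq_s5 {m : ℕ} (σ : Equiv.Perm (Fin (m+1))) : des σ = (DesSet σ).card := by
  rw [des, ← Nat.card_eq_finsetCard]
  apply Nat.card_congr
  refine ⟨fun x => ⟨⟨x.1, by obtain ⟨h, _⟩ := x.2; omega⟩, ?_⟩,
          fun j => ⟨j.1.castSucc, ⟨by simp, ?_⟩⟩, ?_, ?_⟩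
  · obtain ⟨h, hlt⟩ := x.2
    simp only [mem_DesSet]
    convert hlt using 2 <;> ext <;> simp [Fin.succ, Fin.castSucc, Fin.castAdd, Fin.castLE]
  · have := (mem_DesSet σ j.1).1 j.2
    convert this using 2 <;> ext <;> simp [Fin.succ, Fin.castSucc, Fin.castAdd, Fin.castLE]
  · intro x; ext; simp [Fin.castSucc, Fin.castAdd, Fin.castLE]
  · intro j; ext; simp [Fin.castSucc, Fin.castAdd, Fin.castLE]

variable {n : ℕ} (A : Finset (Fin n))

def blk (p : Fin (n+1)) : ℕ := (univ.filter (fun k : Fin n => (k:ℕ) < (p:ℕ) ∧ k ∉ A)).card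

lemma blk_mono {p q : Fin (n+1)} (h : (p:ℕ) ≤ (q:ℕ)) : blk A p ≤ blk A q := by
  apply Finset.card_le_card
  intro k hk; simp only [mem_filter, mem_univ, true_and] at *
  exact ⟨by omega, hk.2⟩

lemma blk_succ_of_mem {i : Fin n} (hi : i ∈ A) : blk A i.succ = blk A i.castSucc := by
  unfold blk
  congr 1
  ext k
  simp only [mem_filter, mem_univ, true_and, Fin.val_succ, Fin.coe_castSucc]
  constructor
  · rintro ⟨hk, hkA⟩
    refine ⟨?_, hkA⟩
    rcases Nat.lt_succ_iff_lt_or_eq.1 hk with h | h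
    · exact h
    · exfalso; apply hkA; have : k = i := Fin.ext h; exact this ▸ hi
  · rintro ⟨hk, hkA⟩; exact ⟨by omega, hkA⟩

lemma mem_of_blk_eq {i : Fin n} (h : blk A i.castSucc = blk A i.succ) : i ∈ A := by
  by_contra hiA
  have hss : (univ.filter (fun k : Fin n => (k:ℕ) < (i.castSucc:ℕ) ∧ k ∉ A)) ⊂
      (univ.filter (fun k : Fin n => (k:ℕ) < (i.succ:ℕ) ∧ k ∉ A)) := by
    constructor
    · intro k hk; simp only [mem_filter, mem_univ, true_and, Fin.val_succ, Fin.coe_castSucc] at *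
      exact ⟨by omega, hk.2⟩
    · intro hsub
      have : i ∈ (univ.filter (fun k : Fin n => (k:ℕ) < (i.succ:ℕ) ∧ k ∉ A)) := by
        simp [hiA]
      have := hsub this
      simp at this
  exact absurd h (Nat.ne_of_lt (Finset.card_lt_card hss))

lemma sT_apply_val {i : Fin n} (x : Fin (n+1)) :
    ((sT i x : Fin (n+1)) : ℕ) = if (x:ℕ) = (i:ℕ) then (i:ℕ)+1
      else if (x:ℕ) = (i:ℕ)+1 then (i:ℕ) else (x:ℕ) := by
  unfold sT
  rcases eq_or_ne x i.castSucc with h | h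
  · subst h
    have h1 : ((i.castSucc : Fin (n+1)) : ℕ) = (i:ℕ) := rfl
    simp only [Equiv.swap_apply_left, Fin.val_succ, h1]
    simp
  · rcases eq_or_ne x i.succ with h2 | h2
    · subst h2
      have h1 : ((i.succ : Fin (n+1)) : ℕ) = (i:ℕ)+1 := rfl
      simp only [Equiv.swap_apply_right, Fin.coe_castSucc, h1]
      simp
    · rw [Equiv.swap_apply_of_ne_of_ne h h2]
      have hv1 : (x:ℕ) ≠ (i:ℕ) := fun hc => h (Fin.ext (by simpa using hc))
      have hv2 : (x:ℕ) ≠ (i:ℕ)+1 := fun hc => h2 (Fin.ext (by simpa using hc))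
      rw [if_neg hv1, if_neg hv2]

lemma blk_sT {i : Fin n} (hi : i ∈ A) (p : Fin (n+1)) : blk A (sT i p) = blk A p := by
  have hb : blk A i.succ = blk A i.castSucc := blk_succ_of_mem A hi
  rcases eq_or_ne p i.castSucc with h | h
  · subst h
    have h1 : sT i i.castSucc = i.succ := by unfold sT; simp
    rw [h1, hb]
  · rcases eq_or_ne p i.succ with h2 | h2
    · subst h2
      have h1 : sT i i.succ = i.castSucc := by unfold sT; simp
      rw [h1, hb]
    · have h1 : sT i p = p := Equiv.swap_apply_of_ne_of_ne h h2
      rw [h1]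

lemma blk_of_mem_Wsub {w : Equiv.Perm (Fin (n+1))} (hw : w ∈ Wsub A) (p : Fin (n+1)) :
    blk A (w p) = blk A p := by
  have key : ∀ w ∈ Wsub A, ∀ p : Fin (n+1), blk A (w p) = blk A p := by
    intro w hw
    induction hw using Subgroup.closure_induction with
    | mem g hg =>
        obtain ⟨i, hi, rfl⟩ := hg
        exact blk_sT A hi
    | one => intro p; simp
    | mul g h _ _ hg hh => intro p; rw [Equiv.Perm.mul_apply, hg, hh]
    | inv g _ hg => intro p; rw [← hg (g⁻¹ p)]; simp
  exact key w hw p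
-- continuing: reps monotone lemma
theorem Equiv.Perm.apply_inv_self_port {α : Type*} (f : Equiv.Perm α) (x : α) : f (f⁻¹ x) = x :=
  f.apply_symm_apply x

def IsRep {n : ℕ} (A : Finset (Fin n)) (σ : Equiv.Perm (Fin (n+1))) : Prop :=
  ∀ i ∈ A, ¬ σ i.succ < σ i.castSucc

lemma rep_adjacent {σ : Equiv.Perm (Fin (n+1))} (hσ : IsRep A σ) {i : Fin n}
    (hi : i ∈ A) : σ i.castSucc < σ i.succ := by
  have hne : σ i.castSucc ≠ σ i.succ := by
    intro hc
    exact absurd (σ.injective hc) (Fin.castSucc_lt_succ (i := i)).ne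
  exact lt_of_le_of_ne (not_lt.1 (hσ i hi)) hne

lemma rep_strictMono {σ : Equiv.Perm (Fin (n+1))} (hσ : IsRep A σ) :
    ∀ m : ℕ, ∀ p q : Fin (n+1), (q:ℕ) = (p:ℕ) + m + 1 → blk A p = blk A q → σ p < σ q := by
  intro m
  induction m with
  | zero =>
      intro p q hq hblk
      have hpn : (p:ℕ) < n := by have := q.isLt; omega
      set i : Fin n := ⟨(p:ℕ), hpn⟩ with hidef
      have hpc : p = i.castSucc := Fin.ext rfl
      have hqs : q = i.succ := Fin.ext (by simp [hq, hidef])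
      have hiA : i ∈ A := mem_of_blk_eq A (by rw [← hpc, ← hqs]; exact hblk)
      rw [hpc, hqs]
      exact rep_adjacent A hσ hiA
  | succ m ih =>
      intro p q hq hblk
      have hpn : (p:ℕ) < n := by have := q.isLt; omega
      set i : Fin n := ⟨(p:ℕ), hpn⟩ with hidef
      have hpc : p = i.castSucc := Fin.ext rfl
      have hble : blk A p ≤ blk A i.succ := blk_mono A (Nat.le_succ _)
      have hble2 : blk A i.succ ≤ blk A q := blk_mono A (by show (p:ℕ)+1 ≤ (q:ℕ); omega)
      have hb1 : blk A p = blk A i.succ := le_antisymm hble (hblk ▸ hble2)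
      have hiA : i ∈ A := mem_of_blk_eq A (hpc ▸ hb1)
      have h1 : σ p < σ i.succ := by rw [hpc]; exact rep_adjacent A hσ hiA
      have h2 : σ i.succ < σ q := ih i.succ q (by show (q:ℕ) = (p:ℕ)+1+m+1; omega) (by rw [← hb1, hblk])
      exact h1.trans h2

lemma rep_lt {σ : Equiv.Perm (Fin (n+1))} (hσ : IsRep A σ) {p q : Fin (n+1)}
    (hpq : p < q) (hblk : blk A p = blk A q) : σ p < σ q := by
  have : (q:ℕ) = (p:ℕ) + ((q:ℕ) - (p:ℕ) - 1) + 1 := by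
    have := Fin.lt_iff_val_lt_val.1 hpq; omega
  exact rep_strictMono A hσ _ p q this hblk

def Minv {n : ℕ} (A : Finset (Fin n)) (σ : Equiv.Perm (Fin (n+1))) : ℕ :=
  ((univ : Finset (Fin (n+1) × Fin (n+1))).filter
    (fun p => p.1 < p.2 ∧ blk A p.1 = blk A p.2 ∧ σ p.2 < σ p.1)).card

lemma sT_lt {i : Fin n} {p q : Fin (n+1)} (hpq : p < q)
    (hne : ¬ (p = i.castSucc ∧ q = i.succ)) : sT i p < sT i q := by
  have h1 := sT_apply_val (i := i) p
  have h2 := sT_apply_val (i := i) q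
  have hv : (p:ℕ) < (q:ℕ) := hpq
  have hic : ((i.castSucc : Fin (n+1)) : ℕ) = (i:ℕ) := rfl
  have his : ((i.succ : Fin (n+1)) : ℕ) = (i:ℕ)+1 := rfl
  have hne' : ¬ ((p:ℕ) = (i:ℕ) ∧ (q:ℕ) = (i:ℕ)+1) := by
    rintro ⟨ha, hb⟩
    exact hne ⟨Fin.ext (by rw [ha, hic]), Fin.ext (by rw [hb, his])⟩
  rw [Fin.lt_iff_val_lt_val, h1, h2]
  have hq1 : (q:ℕ) < n+1 := q.isLt
  have hi1 : (i:ℕ) < n := i.isLt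
  split_ifs <;> omega

lemma Minv_lt {σ : Equiv.Perm (Fin (n+1))} {i : Fin n} (hi : i ∈ A)
    (hdes : σ i.succ < σ i.castSucc) : Minv A (σ * sT i) < Minv A σ := by
  classical
  set S1 := ((univ : Finset (Fin (n+1) × Fin (n+1))).filter
    (fun p => p.1 < p.2 ∧ blk A p.1 = blk A p.2 ∧ (σ * sT i) p.2 < (σ * sT i) p.1)) with hS1
  set S2 := ((univ : Finset (Fin (n+1) × Fin (n+1))).filter
    (fun p => p.1 < p.2 ∧ blk A p.1 = blk A p.2 ∧ σ p.2 < σ p.1)) with hS2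
  have hmem : (i.castSucc, i.succ) ∈ S2 := by
    simp only [hS2, mem_filter, mem_univ, true_and]
    exact ⟨Fin.castSucc_lt_succ (i := i), (blk_succ_of_mem A hi).symm, hdes⟩
  have hcard : S1.card ≤ (S2.erase (i.castSucc, i.succ)).card := by
    apply Finset.card_le_card_of_injOn (fun p => (sT i p.1, sT i p.2))
    · rintro ⟨p, q⟩ hpq
      change (p, q) ∈ S1 at hpq
      simp only [hS1, mem_filter, mem_univ, true_and] at hpq
      obtain ⟨hlt, hblk, hinv⟩ := hpq
      have hnepair : ¬ (p = i.castSucc ∧ q = i.succ) := by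
        rintro ⟨rfl, rfl⟩
        have e1 : sT i i.succ = i.castSucc := by unfold sT; simp
        have e2 : sT i i.castSucc = i.succ := by unfold sT; simp
        rw [Equiv.Perm.mul_apply, Equiv.Perm.mul_apply, e1, e2] at hinv
        exact absurd hdes (not_lt.2 hinv.le)
      have hlt' : sT i p < sT i q := sT_lt hlt hnepair
      show (sT i p, sT i q) ∈ S2.erase (i.castSucc, i.succ)
      simp only [mem_erase, hS2, mem_filter, mem_univ, true_and]
      refine ⟨?_, hlt', ?_, ?_⟩
      · intro hc
        have hp : sT i p = i.castSucc := congrArg Prod.fst hc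
        have hq : sT i q = i.succ := congrArg Prod.snd hc
        have e1 : sT i i.castSucc = i.succ := by unfold sT; simp
        have e2 : sT i i.succ = i.castSucc := by unfold sT; simp
        have hinv2 : ∀ x : Fin (n+1), sT i (sT i x) = x := by
          intro x; unfold sT; exact Equiv.swap_apply_self _ _ _
        have hp' : p = i.succ := by rw [← hinv2 p, hp, e1]
        have hq' : q = i.castSucc := by rw [← hinv2 q, hq, e2]
        rw [hp', hq'] at hlt
        exact absurd ((Fin.castSucc_lt_succ (i := i)).trans hlt) (lt_irrefl _)
      · rw [blk_sT A hi, blk_sT A hi]; exact hblk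
      · simpa [Equiv.Perm.mul_apply] using hinv
    · rintro ⟨p, q⟩ _ ⟨p', q'⟩ _ hpq
      have h1 : sT i p = sT i p' := congrArg Prod.fst hpq
      have h2 : sT i q = sT i q' := congrArg Prod.snd hpq
      exact Prod.ext ((sT i).injective h1) ((sT i).injective h2)
  calc S1.card ≤ (S2.erase (i.castSucc, i.succ)).card := hcard
    _ < S2.card := Finset.card_erase_lt_of_mem hmem

lemma rep_exists (σ : Equiv.Perm (Fin (n+1))) :
    ∃ r w, IsRep A r ∧ w ∈ Wsub A ∧ σ = r * w := by
  classical
  generalize hM : Minv A σ = M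
  induction M using Nat.strong_induction_on generalizing σ with
  | _ M ih =>
    by_cases hrep : IsRep A σ
    · exact ⟨σ, 1, hrep, one_mem _, (mul_one σ).symm⟩
    · rw [IsRep] at hrep
      push_neg at hrep
      obtain ⟨i, hi, hdes⟩ := hrep
      have hlt : Minv A (σ * sT i) < M := hM ▸ Minv_lt A hi hdes
      obtain ⟨r, w, hr, hw, heq⟩ := ih _ hlt (σ * sT i) rfl
      refine ⟨r, w * sT i, hr, mul_mem hw (Subgroup.subset_closure ⟨i, by simpa using hi, rfl⟩), ?_⟩
      have hss : (sT i : Equiv.Perm (Fin (n+1))) * sT i = 1 := by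
        unfold sT; rw [Equiv.swap_mul_self]
      have : σ = (σ * sT i) * sT i := by rw [mul_assoc, hss, mul_one]
      rw [this, heq, mul_assoc]

lemma rep_unique {r₁ r₂ w : Equiv.Perm (Fin (n+1))}
    (h1 : IsRep A r₁) (h2 : IsRep A r₂) (hw : w ∈ Wsub A) (heq : r₂ = r₁ * w) : w = 1 := by
  have key : ∀ m : ℕ, ∀ p : Fin (n+1), (p:ℕ) = m → w p = p := by
    intro m
    induction m using Nat.strong_induction_on with
    | _ m ih =>
      intro p hp
      have hfix : ∀ q : Fin (n+1), q < p → w q = q := fun q hq => ih (q:ℕ) (by omega) q rfl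
      have h3 : p ≤ w p := by
        rw [← not_lt]
        intro hc
        have h4 : w (w p) = w p := hfix (w p) hc
        exact absurd (w.injective h4) hc.ne
      have h5 : p ≤ w⁻¹ p := by
        rw [← not_lt]
        intro hc
        have h4 : w (w⁻¹ p) = w⁻¹ p := hfix (w⁻¹ p) hc
        rw [Equiv.Perm.apply_inv_self_port] at h4
        rw [← h4] at hc
        exact lt_irrefl p hc
      rcases eq_or_lt_of_le h3 with heqp | hltp
      · exact heqp.symm
      · exfalso
        have h6 : p < w⁻¹ p := by
          rcases eq_or_lt_of_le h5 with h | h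
          · exfalso
            have hwp : w p = p := by
              have h7 : w (w⁻¹ p) = p := Equiv.Perm.apply_inv_self_port w p
              rw [← h] at h7
              exact h7
            rw [hwp] at hltp
            exact lt_irrefl p hltp
          · exact h
        have hblk : blk A p = blk A (w p) := (blk_of_mem_Wsub A hw p).symm
        have hblk2 : blk A p = blk A (w⁻¹ p) := (blk_of_mem_Wsub A (inv_mem hw) p).symm
        have ha : r₁ p < r₁ (w p) := rep_lt A h1 hltp hblk
        have hb : r₂ p < r₂ (w⁻¹ p) := rep_lt A h2 h6 hblk2
        have hc1 : r₂ p = r₁ (w p) := by rw [heq]; rfl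
        have hc2 : r₂ (w⁻¹ p) = r₁ p := by
          rw [heq]
          show r₁ (w (w⁻¹ p)) = r₁ p
          rw [Equiv.Perm.apply_inv_self_port]
        rw [hc1] at hb
        rw [hc2] at hb
        exact absurd (ha.trans hb) (lt_irrefl _)
  ext p
  rw [key (p:ℕ) p rfl]
  rfl

instance IsRep.decidable (σ : Equiv.Perm (Fin (n+1))) : Decidable (IsRep A σ) :=
  decidable_of_iff (∀ i ∈ A, ¬ σ i.succ < σ i.castSucc) Iff.rfl

lemma card_Wsub_mul :
    Nat.card (Wsub A) *
      (univ.filter (fun σ : Equiv.Perm (Fin (n+1)) => IsRep A σ)).card = (n+1).factorial := by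
  classical
  set R := univ.filter (fun σ : Equiv.Perm (Fin (n+1)) => IsRep A σ) with hR
  have hbij : Function.Bijective
      (fun x : {σ // σ ∈ R} × (Wsub A) => (x.1.1 * x.2.1 : Equiv.Perm (Fin (n+1)))) := by
    constructor
    · rintro ⟨⟨ra, hra⟩, ⟨wa, hwa⟩⟩ ⟨⟨rb, hrb⟩, ⟨wb, hwb⟩⟩ hab
      simp only at hab
      rw [hR, mem_filter] at hra hrb
      have hwm : wa * wb⁻¹ ∈ Wsub A := mul_mem hwa (inv_mem hwb)
      have heq2 : rb = ra * (wa * wb⁻¹) := by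
        rw [← mul_assoc, hab, mul_assoc, mul_inv_cancel, mul_one]
      have := rep_unique A hra.2 hrb.2 hwm heq2
      have hww : wa = wb := by
        have : wa * wb⁻¹ = 1 := this
        rw [mul_inv_eq_one] at this
        exact this
      subst hww
      have hrr : ra = rb := by
        have := mul_right_cancel hab
        exact this
      subst hrr
      rfl
    · intro σ
      obtain ⟨r, w, hr, hw, heq⟩ := rep_exists A σ
      exact ⟨⟨⟨r, by rw [hR, mem_filter]; exact ⟨mem_univ _, hr⟩⟩, ⟨w, hw⟩⟩, heq.symm⟩
  have hcards := Fintype.card_of_bijective hbij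
  rw [Fintype.card_prod, Fintype.card_coe, Fintype.card_perm, Fintype.card_fin] at hcards
  rw [Nat.card_eq_fintype_card]
  rw [mul_comm] at hcards
  exact hcards

lemma sum_powerset_sub_one (U : Finset (Fin n)) :
    ∑ B ∈ U.powerset, ((X : Polynomial ℚ) - 1) ^ B.card = X ^ U.card := by
  classical
  have h := Finset.prod_add (fun _ : Fin n => (X : Polynomial ℚ) - 1) (fun _ => 1) U
  simp only [sub_add_cancel, Finset.prod_const, one_pow, mul_one, Finset.prod_const_one] at h
  rw [← h]

lemma isRep_iff_subset {σ : Equiv.Perm (Fin (n+1))} {B T : Finset (Fin n)} (hBT : B ⊆ T) :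
    IsRep B σ ↔ B ⊆ T \ DesSet σ := by
  constructor
  · intro h i hi
    rw [Finset.mem_sdiff]
    refine ⟨hBT hi, ?_⟩
    rw [mem_DesSet]
    exact h i hi
  · intro h i hi
    have := h hi
    rw [Finset.mem_sdiff, mem_DesSet] at this
    exact this.2

lemma sum_reps_powerset (T : Finset (Fin n)) :
    ∑ B ∈ T.powerset,
      (((univ.filter (fun σ : Equiv.Perm (Fin (n+1)) => IsRep B σ)).card : ℚ)) • ((X : Polynomial ℚ) - 1) ^ B.card
      = ∑ σ : Equiv.Perm (Fin (n+1)), (X : Polynomial ℚ) ^ (T \ DesSet σ).card := by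
  classical
  have step1 : ∀ B ∈ T.powerset,
      (((univ.filter (fun σ : Equiv.Perm (Fin (n+1)) => IsRep B σ)).card : ℚ)) • ((X : Polynomial ℚ) - 1) ^ B.card
      = ∑ σ : Equiv.Perm (Fin (n+1)), if IsRep B σ then ((X : Polynomial ℚ) - 1) ^ B.card else 0 := by
    intro B _
    rw [Finset.card_filter]
    push_cast
    rw [Finset.sum_smul]
    congr 1
    ext σ
    split_ifs <;> simp
  rw [Finset.sum_congr rfl step1, Finset.sum_comm]
  apply Finset.sum_congr rfl
  intro σ _
  have : ∀ B ∈ T.powerset, (if IsRep B σ then ((X : Polynomial ℚ) - 1) ^ B.card else 0)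
      = (if B ⊆ T \ DesSet σ then ((X : Polynomial ℚ) - 1) ^ B.card else 0) := by
    intro B hB
    rw [Finset.mem_powerset] at hB
    congr 1
    · exact propext (isRep_iff_subset hB)
  rw [Finset.sum_congr rfl this]
  rw [← Finset.sum_filter]
  have hfil : T.powerset.filter (fun B => B ⊆ T \ DesSet σ) = (T \ DesSet σ).powerset := by
    ext B
    simp only [Finset.mem_filter, Finset.mem_powerset]
    constructor
    · rintro ⟨_, h⟩; exact h
    · intro h; exact ⟨h.trans (Finset.sdiff_subset), h⟩
  rw [hfil, sum_powerset_sub_one]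

lemma desSet_rev (σ : Equiv.Perm (Fin (n+1))) (i : Fin n) :
    i ∈ DesSet (σ * (Fin.revPerm : Equiv.Perm (Fin (n+1)))) ↔ i.rev ∉ DesSet σ := by
  rw [mem_DesSet, mem_DesSet]
  have h1 : (σ * (Fin.revPerm : Equiv.Perm (Fin (n+1)))) i.succ = σ (i.rev.castSucc) := by
    rw [Equiv.Perm.mul_apply]
    congr 1
    show (i.succ).rev = i.rev.castSucc
    exact Fin.rev_succ i
  have h2 : (σ * (Fin.revPerm : Equiv.Perm (Fin (n+1)))) i.castSucc = σ (i.rev.succ) := by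
    rw [Equiv.Perm.mul_apply]
    congr 1
    show (i.castSucc).rev = i.rev.succ
    exact Fin.rev_castSucc i
  rw [h1, h2, not_lt]
  constructor
  · intro h; exact h.le
  · intro h
    rcases lt_or_eq_of_le h with h' | h'
    · exact h'
    · exact absurd (σ.injective h') (Fin.castSucc_lt_succ (i := i.rev)).ne

lemma card_sdiff_rev (σ : Equiv.Perm (Fin (n+1))) (T : Finset (Fin n)) :
    (T \ DesSet (σ * (Fin.revPerm : Equiv.Perm (Fin (n+1))))).card
      = (T.image Fin.rev ∩ DesSet σ).card := by
  classical
  have himg : (T \ DesSet (σ * (Fin.revPerm : Equiv.Perm (Fin (n+1))))).image Fin.rev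
      = T.image Fin.rev ∩ DesSet σ := by
    ext j
    simp only [Finset.mem_image, Finset.mem_sdiff, Finset.mem_inter]
    constructor
    · rintro ⟨i, ⟨hiT, hiD⟩, rfl⟩
      rw [desSet_rev] at hiD
      push_neg at hiD
      exact ⟨⟨i, hiT, rfl⟩, hiD⟩
    · rintro ⟨⟨i, hiT, rfl⟩, hD⟩
      refine ⟨i, ⟨hiT, ?_⟩, rfl⟩
      rw [desSet_rev]
      intro hc
      exact hc hD
  rw [← himg, Finset.card_image_of_injective _ Fin.rev_injective]

lemma sum_rev (T : Finset (Fin n)) :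
    ∑ σ : Equiv.Perm (Fin (n+1)), (X : Polynomial ℚ) ^ (T \ DesSet σ).card
      = ∑ σ : Equiv.Perm (Fin (n+1)), (X : Polynomial ℚ) ^ (T.image Fin.rev ∩ DesSet σ).card := by
  refine (Fintype.sum_equiv (Equiv.mulRight (Fin.revPerm : Equiv.Perm (Fin (n+1))))
    (fun σ => (X : Polynomial ℚ) ^ (T.image Fin.rev ∩ DesSet σ).card)
    (fun σ => (X : Polynomial ℚ) ^ (T \ DesSet σ).card) ?_).symm
  intro σ
  simp only [Equiv.coe_mulRight]
  rw [card_sdiff_rev]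

section Split
variable {k : ℕ}

lemma compl_card {V : Finset (Fin (k+3))} (hV : V.card = 2) : (Vᶜ).card = k+1 := by
  rw [Finset.card_compl, hV]
  simp

def juxt (V : Finset (Fin (k+3))) (hV : V.card = 2) (τ : Equiv.Perm (Fin 2))
    (π : Equiv.Perm (Fin (k+1))) : Fin (k+3) → Fin (k+3) :=
  fun p => if h : (p:ℕ) < 2 then V.orderEmbOfFin hV (τ ⟨p, h⟩)
    else (Vᶜ).orderEmbOfFin (compl_card hV) (π ⟨(p:ℕ)-2, by have := p.isLt; omega⟩)

lemma juxt_lt_mem (V : Finset (Fin (k+3))) (hV : V.card = 2) (τ : Equiv.Perm (Fin 2))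
    (π : Equiv.Perm (Fin (k+1))) (p : Fin (k+3)) (h : (p:ℕ) < 2) :
    juxt V hV τ π p ∈ V := by
  rw [juxt, dif_pos h]
  exact Finset.orderEmbOfFin_mem _ _ _

lemma juxt_ge_mem (V : Finset (Fin (k+3))) (hV : V.card = 2) (τ : Equiv.Perm (Fin 2))
    (π : Equiv.Perm (Fin (k+1))) (p : Fin (k+3)) (h : ¬ (p:ℕ) < 2) :
    juxt V hV τ π p ∈ Vᶜ := by
  rw [juxt, dif_neg h]
  exact Finset.orderEmbOfFin_mem _ _ _

lemma juxt_bijective (V : Finset (Fin (k+3))) (hV : V.card = 2) (τ : Equiv.Perm (Fin 2))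
    (π : Equiv.Perm (Fin (k+1))) : Function.Bijective (juxt V hV τ π) := by
  rw [Fintype.bijective_iff_injective_and_card]
  refine ⟨?_, rfl⟩
  intro p q hpq
  by_cases hp : (p:ℕ) < 2 <;> by_cases hq : (q:ℕ) < 2
  · simp only [juxt] at hpq
    rw [dif_pos hp, dif_pos hq] at hpq
    have h1 := (V.orderEmbOfFin hV).injective hpq
    have h2 := τ.injective h1
    have h3 := congrArg Fin.val h2
    exact Fin.ext h3
  · exfalso
    have h1 := juxt_lt_mem V hV τ π p hp
    have h2 := juxt_ge_mem V hV τ π q hq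
    rw [hpq] at h1
    exact (Finset.mem_compl.1 h2) h1
  · exfalso
    have h1 := juxt_ge_mem V hV τ π p hp
    have h2 := juxt_lt_mem V hV τ π q hq
    rw [hpq] at h1
    exact (Finset.mem_compl.1 h1) h2
  · simp only [juxt] at hpq
    rw [dif_neg hp, dif_neg hq] at hpq
    have h1 := (Vᶜ.orderEmbOfFin (compl_card hV)).injective hpq
    have h2 := π.injective h1
    have h3 := congrArg Fin.val h2
    simp only at h3
    exact Fin.ext (by have := p.isLt; have := q.isLt; omega)

noncomputable def juxtPerm (V : Finset (Fin (k+3))) (hV : V.card = 2) (τ : Equiv.Perm (Fin 2))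
    (π : Equiv.Perm (Fin (k+1))) : Equiv.Perm (Fin (k+3)) :=
  Equiv.ofBijective _ (juxt_bijective V hV τ π)

lemma juxtPerm_apply (V : Finset (Fin (k+3))) (hV : V.card = 2) (τ : Equiv.Perm (Fin 2))
    (π : Equiv.Perm (Fin (k+1))) (p : Fin (k+3)) :
    juxtPerm V hV τ π p = juxt V hV τ π p := rfl

end Split

section Split2
variable {k : ℕ}

lemma juxt_apply_lt (V : Finset (Fin (k+3))) (hV : V.card = 2) (τ : Equiv.Perm (Fin 2))
    (π : Equiv.Perm (Fin (k+1))) (p : Fin (k+3)) (h : (p:ℕ) < 2) :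
    juxt V hV τ π p = V.orderEmbOfFin hV (τ ⟨p, h⟩) := by
  simp only [juxt]
  rw [dif_pos h]

lemma juxt_apply_ge (V : Finset (Fin (k+3))) (hV : V.card = 2) (τ : Equiv.Perm (Fin 2))
    (π : Equiv.Perm (Fin (k+1))) (p : Fin (k+3)) (h : ¬ (p:ℕ) < 2) :
    juxt V hV τ π p = (Vᶜ).orderEmbOfFin (compl_card hV) (π ⟨(p:ℕ)-2, by have := p.isLt; omega⟩) := by
  simp only [juxt]
  rw [dif_neg h]

lemma des_juxt_zero (V : Finset (Fin (k+3))) (hV : V.card = 2) (τ : Equiv.Perm (Fin 2))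
    (π : Equiv.Perm (Fin (k+1))) (i : Fin (k+2)) (h0 : (i:ℕ) = 0) :
    (i ∈ DesSet (juxtPerm V hV τ π)) ↔ ((⟨0, Nat.one_pos⟩ : Fin 1) ∈ DesSet τ) := by
  rw [mem_DesSet, mem_DesSet]
  have h1 : juxtPerm V hV τ π i.succ = V.orderEmbOfFin hV (τ ((⟨0, Nat.one_pos⟩ : Fin 1).succ)) := by
    rw [juxtPerm_apply, juxt_apply_lt V hV τ π i.succ (by simp [Fin.val_succ, h0])]
    congr 2
    exact Fin.ext (by simp [Fin.val_succ, h0])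
  have h2 : juxtPerm V hV τ π i.castSucc
      = V.orderEmbOfFin hV (τ ((⟨0, Nat.one_pos⟩ : Fin 1).castSucc)) := by
    rw [juxtPerm_apply, juxt_apply_lt V hV τ π i.castSucc (by simp [h0])]
    congr 2
    exact Fin.ext (by simp [h0])
  rw [h1, h2]
  exact (V.orderEmbOfFin hV).lt_iff_lt

lemma des_juxt_two (V : Finset (Fin (k+3))) (hV : V.card = 2) (τ : Equiv.Perm (Fin 2))
    (π : Equiv.Perm (Fin (k+1))) (i : Fin (k+2)) (j : Fin k) (hj : (i:ℕ) = (j:ℕ)+2) :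
    (i ∈ DesSet (juxtPerm V hV τ π)) ↔ (j ∈ DesSet π) := by
  rw [mem_DesSet, mem_DesSet]
  have h1 : juxtPerm V hV τ π i.succ = (Vᶜ).orderEmbOfFin (compl_card hV) (π j.succ) := by
    rw [juxtPerm_apply, juxt_apply_ge V hV τ π i.succ (by simp [Fin.val_succ, hj])]
    congr 2
    exact Fin.ext (by simp [Fin.val_succ, hj])
  have h2 : juxtPerm V hV τ π i.castSucc = (Vᶜ).orderEmbOfFin (compl_card hV) (π j.castSucc) := by
    rw [juxtPerm_apply, juxt_apply_ge V hV τ π i.castSucc (by simp [hj])]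
    congr 2
    exact Fin.ext (by simp [hj])
  rw [h1, h2]
  exact ((Vᶜ).orderEmbOfFin (compl_card hV)).lt_iff_lt

lemma desSet_juxt_card (V : Finset (Fin (k+3))) (hV : V.card = 2) (τ : Equiv.Perm (Fin 2))
    (π : Equiv.Perm (Fin (k+1))) :
    ((DesSet (juxtPerm V hV τ π)).erase ⟨1, by omega⟩).card
      = (DesSet τ).card + (DesSet π).card := by
  classical
  have hE : (DesSet (juxtPerm V hV τ π)).erase ⟨1, by omega⟩
      = (DesSet τ).image (fun _ : Fin 1 => (⟨0, by omega⟩ : Fin (k+2)))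
        ∪ (DesSet π).image (fun j : Fin k => (⟨(j:ℕ)+2, by have := j.isLt; omega⟩ : Fin (k+2))) := by
    ext i
    rw [Finset.mem_erase, Finset.mem_union, Finset.mem_image, Finset.mem_image]
    constructor
    · rintro ⟨hne, hdes⟩
      have hne1 : (i:ℕ) ≠ 1 := fun hc => hne (Fin.ext hc)
      by_cases hi0 : (i:ℕ) = 0
      · left
        exact ⟨⟨0, Nat.one_pos⟩, (des_juxt_zero V hV τ π i hi0).1 hdes, Fin.ext (by simp [hi0])⟩
      · right
        have hik : (i:ℕ) - 2 < k := by have := i.isLt; omega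
        refine ⟨⟨(i:ℕ)-2, hik⟩, ?_, Fin.ext (by simp; omega)⟩
        exact (des_juxt_two V hV τ π i ⟨(i:ℕ)-2, hik⟩ (by simp; omega)).1 hdes
    · rintro (⟨j, hj, rfl⟩ | ⟨j, hj, rfl⟩)
      · refine ⟨by intro hc; exact absurd (congrArg Fin.val hc) (by simp), ?_⟩
        have hj' : j = (⟨0, Nat.one_pos⟩ : Fin 1) := Subsingleton.elim _ _
        rw [hj'] at hj
        exact (des_juxt_zero V hV τ π _ rfl).2 hj
      · refine ⟨by intro hc; exact absurd (congrArg Fin.val hc) (by simp), ?_⟩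
        exact (des_juxt_two V hV τ π _ j rfl).2 hj
  have hinj2 : Function.Injective (fun j : Fin k => (⟨(j:ℕ)+2, by have := j.isLt; omega⟩ : Fin (k+2))) := by
    intro a b hab
    exact Fin.ext (by have := congrArg Fin.val hab; simpa using this)
  have hdisj : Disjoint ((DesSet τ).image (fun _ : Fin 1 => (⟨0, by omega⟩ : Fin (k+2))))
      ((DesSet π).image (fun j : Fin k => (⟨(j:ℕ)+2, by have := j.isLt; omega⟩ : Fin (k+2)))) := by
    rw [Finset.disjoint_left]
    intro x hx1 hx2
    rw [Finset.mem_image] at hx1 hx2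
    obtain ⟨j, _, hj1⟩ := hx1
    obtain ⟨j', _, hj2⟩ := hx2
    rw [← hj1] at hj2
    exact absurd (congrArg Fin.val hj2) (by simp)
  rw [hE, Finset.card_union_of_disjoint hdisj,
      Finset.card_image_of_injective _ (fun a b _ => Subsingleton.elim a b),
      Finset.card_image_of_injective _ hinj2]
end Split2

section Split3
variable {k : ℕ}

lemma mem_V_iff (V : Finset (Fin (k+3))) (hV : V.card = 2) (τ : Equiv.Perm (Fin 2))
    (π : Equiv.Perm (Fin (k+1))) (v : Fin (k+3)) :
    v ∈ V ↔ ∃ p : Fin (k+3), (p:ℕ) < 2 ∧ juxt V hV τ π p = v := by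
  constructor
  · intro hv
    have hrange : v ∈ Set.range (V.orderEmbOfFin hV) := by
      rw [Finset.range_orderEmbOfFin]
      exact hv
    obtain ⟨j, hj⟩ := hrange
    refine ⟨⟨(τ.symm j : ℕ), by have := (τ.symm j).isLt; omega⟩, by
      have := (τ.symm j).isLt; simpa using this, ?_⟩
    rw [juxt_apply_lt _ _ _ _ _ (by have := (τ.symm j).isLt; simpa using this)]
    have harg : (⟨((⟨(τ.symm j : ℕ), by have := (τ.symm j).isLt; omega⟩ : Fin (k+3)) : ℕ),
        by have := (τ.symm j).isLt; simpa using this⟩ : Fin 2) = τ.symm j := Fin.ext rfl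
    rw [harg, Equiv.apply_symm_apply]
    exact hj
  · rintro ⟨p, hp, rfl⟩
    exact juxt_lt_mem V hV τ π p hp

lemma juxt_inj {V V' : Finset (Fin (k+3))} {hV : V.card = 2} {hV' : V'.card = 2}
    {τ τ' : Equiv.Perm (Fin 2)} {π π' : Equiv.Perm (Fin (k+1))}
    (h : juxtPerm V hV τ π = juxtPerm V' hV' τ' π') : V = V' ∧ τ = τ' ∧ π = π' := by
  have happ : ∀ p, juxt V hV τ π p = juxt V' hV' τ' π' p := by
    intro p
    have := congrArg (fun e : Equiv.Perm (Fin (k+3)) => e p) h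
    simpa [juxtPerm_apply] using this
  have hVV : V = V' := by
    ext v
    rw [mem_V_iff V hV τ π v, mem_V_iff V' hV' τ' π' v]
    constructor
    · rintro ⟨p, hp, hpv⟩; exact ⟨p, hp, by rw [← happ]; exact hpv⟩
    · rintro ⟨p, hp, hpv⟩; exact ⟨p, hp, by rw [happ]; exact hpv⟩
  subst hVV
  refine ⟨rfl, ?_, ?_⟩
  · ext j
    have hj2 : ((j:ℕ) : ℕ) < 2 := by have := j.isLt; omega
    have hp := happ ⟨(j:ℕ), by omega⟩
    rw [juxt_apply_lt _ _ _ _ _ (by simpa using hj2), juxt_apply_lt _ _ _ _ _ (by simpa using hj2)] at hp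
    have := (V.orderEmbOfFin hV).injective hp
    have harg : (⟨((⟨(j:ℕ), by omega⟩ : Fin (k+3)) : ℕ), by simpa using hj2⟩ : Fin 2) = j :=
      Fin.ext rfl
    rw [harg] at this
    exact congrArg Fin.val this
  · ext j
    have hj3 : (j:ℕ)+2 < k+3 := by have := j.isLt; omega
    have hp := happ ⟨(j:ℕ)+2, hj3⟩
    have hge : ¬ (((⟨(j:ℕ)+2, hj3⟩ : Fin (k+3)) : ℕ) < 2) := by simp
    rw [juxt_apply_ge _ _ _ _ _ hge, juxt_apply_ge _ _ _ _ _ hge] at hp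
    have h2 := (Vᶜ.orderEmbOfFin (compl_card hV)).injective hp
    have harg : (⟨((⟨(j:ℕ)+2, hj3⟩ : Fin (k+3)) : ℕ) - 2, by simp; omega⟩ : Fin (k+1)) = j :=
      Fin.ext (by simp)
    rw [harg] at h2
    exact congrArg Fin.val h2

lemma split_sum (k : ℕ) :
    ∑ σ : Equiv.Perm (Fin (k+3)), (X : Polynomial ℚ) ^ ((DesSet σ).erase ⟨1, by omega⟩).card
      = ((k+3).choose 2) •
        ((X + 1) * ∑ π : Equiv.Perm (Fin (k+1)), (X : Polynomial ℚ) ^ (DesSet π).card) := by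
  classical
  set G : ({V : Finset (Fin (k+3)) // V.card = 2} × Equiv.Perm (Fin 2) × Equiv.Perm (Fin (k+1)))
      → Equiv.Perm (Fin (k+3)) := fun x => juxtPerm x.1.1 x.1.2 x.2.1 x.2.2 with hG
  have hGinj : Function.Injective G := by
    rintro ⟨⟨V, hV⟩, τ, π⟩ ⟨⟨V', hV'⟩, τ', π'⟩ hx
    obtain ⟨h1, h2, h3⟩ := juxt_inj hx
    subst h1; subst h2; subst h3
    rfl
  have hcard : Fintype.card ({V : Finset (Fin (k+3)) // V.card = 2}
      × Equiv.Perm (Fin 2) × Equiv.Perm (Fin (k+1))) = Fintype.card (Equiv.Perm (Fin (k+3))) := by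
    rw [Fintype.card_prod, Fintype.card_prod, Fintype.card_finset_len, Fintype.card_perm,
      Fintype.card_perm, Fintype.card_fin, Fintype.card_fin, Fintype.card_perm, Fintype.card_fin]
    have := Nat.choose_mul_factorial_mul_factorial (show 2 ≤ k+3 by omega)
    have h23 : k + 3 - 2 = k + 1 := by omega
    rw [h23] at this
    calc (k+3).choose 2 * (Nat.factorial 2 * Nat.factorial (k+1))
        = (k+3).choose 2 * Nat.factorial 2 * Nat.factorial (k+1) := by ring
      _ = Nat.factorial (k+3) := this
    rw [Fintype.card_fin]
  have hGbij : Function.Bijective G := (Fintype.bijective_iff_injective_and_card G).2 ⟨hGinj, hcard⟩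
  rw [← Fintype.sum_bijective G hGbij
    (fun x => (X : Polynomial ℚ) ^ ((DesSet x.2.1).card + (DesSet x.2.2).card)) _
    (fun x =>
      (congrArg (fun c => (X : Polynomial ℚ) ^ c) (desSet_juxt_card x.1.1 x.1.2 x.2.1 x.2.2)).symm)]
  -- now sum over the product type
  rw [Fintype.sum_prod_type]
  have hEach : ∀ V : {V : Finset (Fin (k+3)) // V.card = 2},
      (∑ y : Equiv.Perm (Fin 2) × Equiv.Perm (Fin (k+1)),
        (X : Polynomial ℚ) ^ ((DesSet y.1).card + (DesSet y.2).card))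
      = (X + 1) * ∑ π : Equiv.Perm (Fin (k+1)), (X : Polynomial ℚ) ^ (DesSet π).card := by
    intro V
    rw [Fintype.sum_prod_type]
    have : ∀ τ : Equiv.Perm (Fin 2), ∑ π : Equiv.Perm (Fin (k+1)),
        (X : Polynomial ℚ) ^ ((DesSet τ).card + (DesSet π).card)
        = (X : Polynomial ℚ) ^ (DesSet τ).card * ∑ π : Equiv.Perm (Fin (k+1)),
            (X : Polynomial ℚ) ^ (DesSet π).card := by
      intro τ
      rw [Finset.mul_sum]
      apply Finset.sum_congr rfl
      intro π _
      rw [pow_add]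
    rw [Finset.sum_congr rfl (fun τ _ => this τ), ← Finset.sum_mul]
    congr 1
    have huniv : (univ : Finset (Equiv.Perm (Fin 2))) = {1, Equiv.swap 0 1} := by decide
    rw [huniv, Finset.sum_insert (by decide), Finset.sum_singleton]
    rw [show (DesSet (1 : Equiv.Perm (Fin 2))).card = 0 from by decide,
        show (DesSet (Equiv.swap (0:Fin 2) 1)).card = 1 from by decide]
    ring
  rw [Finset.sum_congr rfl (fun V _ => hEach V), Finset.sum_const, Finset.card_univ,
    Fintype.card_finset_len, Fintype.card_fin]

end Split3


set_option maxHeartbeats 1000000 in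
theorem sum_M0_eq (n : ℕ) (hn : 2 ≤ n) :
    ∑ A ∈ Finset.univ.filter (fun A : Finset (Fin n) =>
        (⟨n - 2, by omega⟩ : Fin n) ∈ A),
      (((n + 1).factorial : ℚ) / (Nat.card ↥(Wsub A) : ℚ)) • (X - 1) ^ A.card
      = Euler (n + 1) - ((n : ℚ) * (n + 1) / 2) • ((X + 1) * Euler (n - 1)) := by
  classical
  obtain ⟨k, rfl⟩ : ∃ k, n = k + 2 := ⟨n - 2, by omega⟩
  set F : Finset (Fin (k+2)) → Polynomial ℚ := fun A =>
    (((univ.filter (fun σ : Equiv.Perm (Fin (k+2+1)) => IsRep A σ)).card : ℚ))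
      • ((X : Polynomial ℚ) - 1) ^ A.card with hF
  have hcoef : ∀ A : Finset (Fin (k+2)),
      (((k+2+1).factorial : ℚ) / (Nat.card ↥(Wsub A) : ℚ)) • ((X:Polynomial ℚ) - 1) ^ A.card
        = F A := by
    intro A
    rw [hF]
    congr 1
    have h := card_Wsub_mul A
    have hpos : (0:ℚ) < (Nat.card ↥(Wsub A) : ℚ) := by exact_mod_cast Nat.card_pos
    rw [div_eq_iff hpos.ne']
    exact_mod_cast (mul_comm (Nat.card ↥(Wsub A)) _ ▸ h).symm
  refine (Finset.sum_congr rfl (fun A _ => hcoef A)).trans ?_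
  have hsplit := Finset.sum_filter_add_sum_filter_not (univ : Finset (Finset (Fin (k+2))))
    (fun A => (⟨k + 2 - 2, by omega⟩ : Fin (k+2)) ∈ A) F
  have step2 : ∑ A ∈ univ.filter (fun A : Finset (Fin (k+2)) =>
        (⟨k + 2 - 2, by omega⟩ : Fin (k+2)) ∈ A), F A
      = (∑ A ∈ univ, F A) - ∑ A ∈ univ.filter (fun A : Finset (Fin (k+2)) =>
        ¬ (⟨k + 2 - 2, by omega⟩ : Fin (k+2)) ∈ A), F A := eq_sub_of_add_eq hsplit
  rw [step2]
  have himgrev : (univ : Finset (Fin (k+2))).image Fin.rev = univ := by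
    ext j
    simp only [Finset.mem_image, Finset.mem_univ, iff_true]
    exact ⟨j.rev, trivial, Fin.rev_rev j⟩
  have stepU : ∑ A ∈ (univ : Finset (Finset (Fin (k+2)))), F A = Euler (k+2+1) := by
    rw [← Finset.powerset_univ]
    refine (sum_reps_powerset univ).trans ?_
    refine (sum_rev univ).trans ?_
    rw [himgrev]
    rw [Euler]
    refine Finset.sum_congr rfl (fun σ _ => ?_)
    rw [des_eq_s5 σ, Finset.univ_inter]
  have hfilnot : univ.filter (fun A : Finset (Fin (k+2)) =>
        ¬ (⟨k + 2 - 2, by omega⟩ : Fin (k+2)) ∈ A)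
      = ((univ : Finset (Fin (k+2))).erase ⟨k + 2 - 2, by omega⟩).powerset := by
    ext A
    simp [Finset.subset_erase]
  have hrevm : ((⟨k + 2 - 2, by omega⟩ : Fin (k+2)).rev) = (⟨1, by omega⟩ : Fin (k+2)) := by
    apply Fin.ext
    rw [Fin.val_rev]
    simp
  have stepE : ∑ A ∈ univ.filter (fun A : Finset (Fin (k+2)) =>
        ¬ (⟨k + 2 - 2, by omega⟩ : Fin (k+2)) ∈ A), F A
      = ((k+3).choose 2) • (((X : Polynomial ℚ) + 1) * Euler (k+1)) := by
    rw [hfilnot]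
    refine (sum_reps_powerset _).trans ?_
    refine (sum_rev _).trans ?_
    have himg2 : ((univ : Finset (Fin (k+2))).erase ⟨k + 2 - 2, by omega⟩).image Fin.rev
        = (univ : Finset (Fin (k+2))).erase ⟨1, by omega⟩ := by
      rw [Finset.image_erase Fin.rev_injective, himgrev, hrevm]
    rw [himg2]
    have hint : ∀ σ : Equiv.Perm (Fin (k+2+1)),
        ((univ : Finset (Fin (k+2))).erase ⟨1, by omega⟩) ∩ DesSet σ
          = (DesSet σ).erase ⟨1, by omega⟩ := by
      intro σ
      ext j
      simp only [Finset.mem_inter, Finset.mem_erase, Finset.mem_univ, true_and]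
      tauto
    refine (Finset.sum_congr rfl (fun σ _ => by rw [hint σ])).trans ?_
    refine (split_sum k).trans ?_
    congr 2
    rw [Euler]
    refine Finset.sum_congr rfl (fun π _ => ?_)
    rw [des_eq_s5 π]
  rw [stepU, stepE]
  congr 1
  rw [← Nat.cast_smul_eq_nsmul ℚ]
  have h1 : ((k+3).choose 2 : ℚ) = ((k+2 : ℕ) : ℚ) * (((k+2 : ℕ) : ℚ) + 1) / 2 := by
    have h2 : 2 ∣ (k+3)*(k+2) := by
      have : Even ((k+2)*(k+3)) := Nat.even_mul_succ_self (k+2)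
      rw [mul_comm] at this
      exact this.two_dvd
    have h3 : (k+3).choose 2 * 2 = (k+3)*(k+2) := by
      rw [Nat.choose_two_right, show k+3-1 = k+2 from rfl]
      exact Nat.div_mul_cancel h2
    have h4 := congrArg (Nat.cast : ℕ → ℚ) h3
    push_cast at h4 ⊢
    field_simp
    linarith
  rw [h1]
  rfl
end

section
/- Let n ≥ 2, S = {s_1,...,s_n} the simple transpositions of S_{n+1}, and define h(t) = Σ_{A} ((n+1)!/|W_{A*}|)(t-1)^{|A|}, where the sum is over all A ⊆ S such that no connected component of A is contained in {s_n}, and A* = A ∪ {s ∈ {s_n} : s commutes with all t ∈ A}. Then h(t) = E_{n+1}(t) - C(n+1,2)·t·E_{n-1}(t). -/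
open Polynomial Finset

/-- `x` and `y` lie in the same connected component of `A` in the type `A_n`
Coxeter graph (path graph: `s_i ~ s_{i+1}`). -/
def sameComp {n : ℕ} (A : Finset (Fin n)) (x y : Fin n) : Prop :=
  Relation.ReflTransGen
    (fun a b => a ∈ A ∧ b ∈ A ∧ ((a : ℕ) + 1 = (b : ℕ) ∨ (b : ℕ) + 1 = (a : ℕ))) x y

/-- No connected component of `A` is contained entirely in `J`. -/
def noCompIn {n : ℕ} (A J : Finset (Fin n)) : Prop :=
  ∀ a ∈ A, ∃ b ∈ A, b ∉ J ∧ sameComp A a b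

open scoped Classical in
/-- `A* = A ∪ {s ∈ J : s commutes with all t ∈ A}`. -/
noncomputable def Astar {n : ℕ} (A J : Finset (Fin n)) : Finset (Fin n) :=
  A ∪ J.filter (fun j => ∀ a ∈ A, Commute (sT j) (sT a))

section Aux
open Equiv Equiv.Perm
open scoped Classical

variable {M : ℕ}

/-- descent set as a Finset -/
noncomputable def DesF (σ : Equiv.Perm (Fin (M+1))) : Finset (Fin M) :=
  Finset.univ.filter (fun i => σ i.succ < σ i.castSucc)

def Ainc (A : Finset (Fin M)) (σ : Equiv.Perm (Fin (M+1))) : Prop :=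
  ∀ a ∈ A, σ a.castSucc < σ a.succ

noncomputable def Ncount (A : Finset (Fin M)) : ℕ :=
  (Finset.univ.filter (fun σ : Equiv.Perm (Fin (M+1)) => Ainc A σ)).card

lemma des_eq_card (σ : Equiv.Perm (Fin (M+1))) : des σ = (DesF σ).card := by
  classical
  have : des σ = Nat.card {i : Fin M // σ i.succ < σ i.castSucc} := by
    apply Nat.card_congr
    refine ⟨fun s => ⟨⟨s.1.val, ?_⟩, ?_⟩, fun s => ⟨⟨s.1.val, by omega⟩, ?_⟩, ?_, ?_⟩
    · obtain ⟨h, _⟩ := s.2; omega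
    · obtain ⟨h, hlt⟩ := s.2
      have h1 : (⟨s.1.val, by omega⟩ : Fin M).succ = ⟨s.1.val + 1, h⟩ := rfl
      have h2 : (⟨s.1.val, by omega⟩ : Fin M).castSucc = s.1 := by
        apply Fin.ext; rfl
      rw [h1, h2]; exact hlt
    · have hP : ((⟨(s.1 : ℕ), by omega⟩ : Fin (M+1)) : ℕ) + 1 < M + 1 := by
        simp only []; omega
      refine ⟨hP, ?_⟩
      have h1 : (⟨((⟨(s.1 : ℕ), by omega⟩ : Fin (M+1)) : ℕ) + 1, hP⟩ : Fin (M+1)) = s.1.succ := rfl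
      have h2 : (⟨(s.1 : ℕ), by omega⟩ : Fin (M+1)) = s.1.castSucc := rfl
      rw [h1, h2]; exact s.2
    · intro s; apply Subtype.ext; apply Fin.ext; rfl
    · intro s; apply Subtype.ext; apply Fin.ext; rfl
  rw [this, Nat.card_eq_fintype_card, DesF, Fintype.card_subtype]

lemma ainc_iff_disjoint (A : Finset (Fin M)) (σ : Equiv.Perm (Fin (M+1))) :
    Ainc A σ ↔ ∀ a ∈ A, a ∉ DesF σ := by
  unfold Ainc DesF
  apply forall_congr'; intro a; apply imp_congr_right; intro _
  simp only [mem_filter, mem_univ, true_and, not_lt]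
  constructor
  · intro h; exact le_of_lt h
  · intro h
    rcases lt_or_eq_of_le h with h' | h'
    · exact h'
    · exfalso
      have := σ.injective h'
      have : (a.castSucc : ℕ) = a.succ := congrArg Fin.val this
      simp at this
/-- positions x,y connected through A -/
def conn (A : Finset (Fin M)) (x y : Fin (M+1)) : Prop :=
  ∀ k (hk : k < M), min x.val y.val ≤ k → k < max x.val y.val → ⟨k, hk⟩ ∈ A

lemma conn_refl (A : Finset (Fin M)) (x : Fin (M+1)) : conn A x x := by
  intro k hk h1 h2; omega

lemma conn_symm {A : Finset (Fin M)} {x y : Fin (M+1)} (h : conn A x y) : conn A y x := by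
  intro k hk h1 h2; exact h k hk (by omega) (by omega)

lemma conn_trans {A : Finset (Fin M)} {x y z : Fin (M+1)}
    (h1 : conn A x y) (h2 : conn A y z) : conn A x z := by
  intro k hk hl hr
  rcases (by omega : (min x.val y.val ≤ k ∧ k < max x.val y.val) ∨
      (min y.val z.val ≤ k ∧ k < max y.val z.val)) with ⟨a, b⟩ | ⟨a, b⟩
  · exact h1 k hk a b
  · exact h2 k hk a b

/-- the subgroup of permutations preserving `conn`-classes -/
def Bl (A : Finset (Fin M)) : Subgroup (Equiv.Perm (Fin (M+1))) where
  carrier := {π | ∀ x, conn A x (π x)}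
  one_mem' := fun x => conn_refl A x
  mul_mem' := by
    intro π ρ hπ hρ x
    exact conn_trans (hρ x) (hπ (ρ x))
  inv_mem' := by
    intro π hπ x
    have := hπ (π⁻¹ x)
    rw [show π (π⁻¹ x) = x from (Equiv.eq_symm_apply π).mp rfl] at this
    exact conn_symm this

lemma wsub_le_bl (A : Finset (Fin M)) : Wsub A ≤ Bl A := by
  rw [Wsub, Subgroup.closure_le]
  rintro _ ⟨a, ha, rfl⟩ x
  by_cases hx : x = a.castSucc ∨ x = a.succ
  · have key : ∀ k (hk : k < M), a.val ≤ k → k < a.val + 1 → ⟨k, hk⟩ ∈ A := by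
      intro k hk h1 h2
      have : k = a.val := by omega
      subst this
      have : (⟨a.val, hk⟩ : Fin M) = a := by apply Fin.ext; rfl
      rw [this]; exact_mod_cast ha
    rcases hx with rfl | rfl
    · intro k hk h1 h2
      rw [sT, Equiv.swap_apply_left] at h1 h2
      simp only [Fin.coe_castSucc, Fin.val_succ] at h1 h2
      exact key k hk (by omega) (by omega)
    · intro k hk h1 h2
      rw [sT, Equiv.swap_apply_right] at h1 h2
      simp only [Fin.coe_castSucc, Fin.val_succ] at h1 h2
      exact key k hk (by omega) (by omega)
  · push_neg at hx
    rw [sT, Equiv.swap_apply_of_ne_of_ne hx.1 hx.2]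
    exact conn_refl A x

/-- an A-increasing permutation is strictly monotone on conn-classes -/
lemma ainc_strictMonoOn {A : Finset (Fin M)} {σ : Equiv.Perm (Fin (M+1))}
    (hσ : Ainc A σ) : ∀ x y : Fin (M+1), conn A x y → x < y → σ x < σ y := by
  suffices H : ∀ d (x y : Fin (M+1)), y.val = x.val + d + 1 → conn A x y → σ x < σ y by
    intro x y hc hxy
    have : y.val = x.val + (y.val - x.val - 1) + 1 := by
      have := hxy; rw [Fin.lt_def] at this; omega
    exact H _ x y this hc
  intro d
  induction d with
  | zero =>
    intro x y hy hc
    have hxM : x.val < M := by omega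
    have hmem : (⟨x.val, hxM⟩ : Fin M) ∈ A := hc x.val hxM (by omega) (by omega)
    have h1 : (⟨x.val, hxM⟩ : Fin M).castSucc = x := by apply Fin.ext; rfl
    have h2 : (⟨x.val, hxM⟩ : Fin M).succ = y := Fin.ext (by simp; omega)
    have := hσ _ hmem
    rwa [h1, h2] at this
  | succ d ih =>
    intro x y hy hc
    have hxM : x.val + 1 < M + 1 := by omega
    set z : Fin (M+1) := ⟨x.val + 1, hxM⟩ with hz
    have hzv : z.val = x.val + 1 := rfl
    have hcz : conn A x z := fun k hk h1 h2 => hc k hk (by omega) (by omega)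
    have hzy : conn A z y := fun k hk h1 h2 => hc k hk (by omega) (by omega)
    have hxM' : x.val < M := by omega
    have hmem : (⟨x.val, hxM'⟩ : Fin M) ∈ A := hcz x.val hxM' (by omega) (by omega)
    have h1 : (⟨x.val, hxM'⟩ : Fin M).castSucc = x := Fin.ext rfl
    have h2 : (⟨x.val, hxM'⟩ : Fin M).succ = z := Fin.ext rfl
    have hb := hσ _ hmem
    rw [h1, h2] at hb
    exact lt_trans hb (ih z y (by omega) hzy)
lemma bl_strictMono {A : Finset (Fin M)} {σ ρ : Equiv.Perm (Fin (M+1))}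
    (hσ : Ainc A σ) (hρ : ρ ∈ Bl A) (hσρ : Ainc A (σ * ρ)) :
    ∀ x y : Fin (M+1), conn A x y → x < y → ρ x < ρ y := by
  intro x y hc hxy
  have h1 : σ (ρ x) < σ (ρ y) := ainc_strictMonoOn hσρ x y hc hxy
  have hcρ : conn A (ρ x) (ρ y) :=
    conn_trans (conn_symm (hρ x)) (conn_trans hc (hρ y))
  rcases lt_trichotomy (ρ x) (ρ y) with h | h | h
  · exact h
  · exact absurd (congrArg σ h) (ne_of_lt h1)
  · exact absurd (ainc_strictMonoOn hσ _ _ (conn_symm hcρ) h) (by omega)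

lemma bl_unique {A : Finset (Fin M)} {σ ρ : Equiv.Perm (Fin (M+1))}
    (hσ : Ainc A σ) (hρ : ρ ∈ Bl A) (hσρ : Ainc A (σ * ρ)) : ρ = 1 := by
  have mono := bl_strictMono hσ hρ hσρ
  have key : ∀ v : ℕ, ∀ x : Fin (M+1), x.val = v → ρ x = x := by
    intro v
    induction v using Nat.strong_induction_on with
    | _ v ih =>
      intro x hx
      have hfix : ∀ y : Fin (M+1), y < x → ρ y = y := fun y hy =>
        ih y.val (by rw [← hx]; exact hy) y rfl
      have hge : x ≤ ρ x := by
        by_contra h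
        push_neg at h
        have := hfix (ρ x) h
        exact absurd (ρ.injective this) (by intro e; rw [e] at h; exact lt_irrefl _ h)
      rcases eq_or_lt_of_le hge with h | h
      · exact h.symm
      · exfalso
        obtain ⟨z, hz⟩ : ∃ z, ρ z = x := ⟨ρ⁻¹ x, (Equiv.eq_symm_apply ρ).mp rfl⟩
        rcases lt_trichotomy z x with hlt | rfl | hgt
        · have := hfix z hlt; rw [this] at hz; exact absurd hz (ne_of_lt hlt)
        · rw [hz] at h; exact lt_irrefl _ h
        · have hcz : conn A x z := by
            have := hρ z; rw [hz] at this; exact conn_symm this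
          have := mono x z hcz hgt
          rw [hz] at this
          exact absurd (lt_trans h this) (lt_irrefl _)
  ext x
  exact congrArg Fin.val (key x.val x rfl)

noncomputable def invCt (σ : Equiv.Perm (Fin (M+1))) : ℕ :=
  (Finset.univ.filter (fun p : Fin (M+1) × Fin (M+1) => p.1 < p.2 ∧ σ p.2 < σ p.1)).card

lemma invCt_decrease {σ : Equiv.Perm (Fin (M+1))} {a : Fin M}
    (h : σ a.succ < σ a.castSucc) : invCt (σ * sT a) < invCt σ := by
  classical
  set u := a.castSucc with hu
  set v := a.succ with hv
  have huv : u.val + 1 = v.val := by simp [hu, hv]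
  set s := sT a with hs
  have hsu : s u = v := Equiv.swap_apply_left u v
  have hsv : s v = u := Equiv.swap_apply_right u v
  have hso : ∀ x, x ≠ u → x ≠ v → s x = x := fun x h1 h2 => Equiv.swap_apply_of_ne_of_ne h1 h2
  have huvmem : (u, v) ∈ Finset.univ.filter
      (fun p : Fin (M+1) × Fin (M+1) => p.1 < p.2 ∧ σ p.2 < σ p.1) := by
    simp only [mem_filter, mem_univ, true_and]
    exact ⟨by rw [Fin.lt_def]; omega, h⟩
  have key : ∀ p : Fin (M+1) × Fin (M+1), p.1 < p.2 → p ≠ (u, v) → s p.1 < s p.2 := by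
    rintro ⟨i, j⟩ hij hne
    simp only [Fin.lt_def] at hij ⊢
    by_cases hiu : i = u
    · by_cases hjv : j = v
      · exact absurd (by rw [hiu, hjv]) hne
      · have hju : j ≠ u := by intro e; rw [hiu, e] at hij; omega
        rw [hiu, hsu, hso j hju hjv]
        have : j.val ≠ v.val := fun e => hjv (Fin.ext e)
        rw [hiu] at hij; omega
    · by_cases hiv : i = v
      · have hju : j ≠ u := by intro e; rw [hiv, e] at hij; omega
        have hjv : j ≠ v := by intro e; rw [hiv, e] at hij; omega
        rw [hiv, hsv, hso j hju hjv]
        rw [hiv] at hij; omega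
      · rw [hso i hiu hiv]
        by_cases hju : j = u
        · rw [hju, hsu]; rw [hju] at hij; omega
        · by_cases hjv : j = v
          · rw [hjv, hsv]
            have : i.val ≠ u.val := fun e => hiu (Fin.ext e)
            rw [hjv] at hij; omega
          · rw [hso j hju hjv]; exact hij
  have hle : invCt (σ * s) ≤ ((Finset.univ.filter
      (fun p : Fin (M+1) × Fin (M+1) => p.1 < p.2 ∧ σ p.2 < σ p.1)).erase (u, v)).card := by
    apply Finset.card_le_card_of_injOn (fun p => (s p.1, s p.2))
    · rintro ⟨i, j⟩ hp
      simp only [Finset.mem_coe, invCt, mem_filter, mem_univ, true_and] at hp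
      obtain ⟨hij, hinv⟩ := hp
      have hne : (i, j) ≠ (u, v) := by
        intro e
        have hi : i = u := congrArg Prod.fst e
        have hj : j = v := congrArg Prod.snd e
        rw [hi, hj] at hinv
        simp only [Equiv.Perm.mul_apply, hsu, hsv] at hinv
        exact lt_asymm h hinv
      simp only [Finset.mem_coe, mem_erase, mem_filter, mem_univ, true_and]
      refine ⟨?_, key (i, j) hij hne, ?_⟩
      · intro e
        have e1 : s i = u := congrArg Prod.fst e
        have e2 : s j = v := congrArg Prod.snd e
        have hi : i = v := s.injective (by rw [e1, hsv])
        have hj : j = u := s.injective (by rw [e2, hsu])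
        rw [Fin.lt_def, hi, hj] at hij
        omega
      · simpa only [Equiv.Perm.mul_apply] using hinv
    · rintro ⟨i, j⟩ _ ⟨i', j'⟩ _ e
      have e1 : s i = s i' := congrArg Prod.fst e
      have e2 : s j = s j' := congrArg Prod.snd e
      exact Prod.ext (s.injective e1) (s.injective e2)
  calc invCt (σ * s) ≤ _ := hle
    _ < _ := Finset.card_erase_lt_of_mem huvmem
lemma exists_sort (A : Finset (Fin M)) (σ : Equiv.Perm (Fin (M+1))) :
    ∃ τ ∈ Wsub A, Ainc A (σ * τ) := by
  classical
  generalize hN : invCt σ = N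
  induction N using Nat.strong_induction_on generalizing σ with
  | _ N ih =>
    by_cases hA : Ainc A σ
    · exact ⟨1, one_mem _, by rwa [mul_one]⟩
    · unfold Ainc at hA
      push_neg at hA
      obtain ⟨a, ha, hdes⟩ := hA
      have hne : σ a.castSucc ≠ σ a.succ := by
        intro e
        have := σ.injective e
        have := congrArg Fin.val this
        simp at this
      have hdes' : σ a.succ < σ a.castSucc := by
        rcases lt_or_eq_of_le hdes with h' | h'
        · exact h'
        · exact absurd h'.symm hne
      have hdec := invCt_decrease hdes'
      obtain ⟨τ', hτ'W, hτ'⟩ := ih (invCt (σ * sT a)) (hN ▸ hdec) (σ * sT a) rfl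
      refine ⟨sT a * τ', ?_, ?_⟩
      · exact mul_mem (Subgroup.subset_closure ⟨a, ha, rfl⟩) hτ'W
      · rwa [← mul_assoc]

lemma factorial_eq (A : Finset (Fin M)) :
    (M + 1).factorial = Ncount A * Nat.card (Wsub A) := by
  classical
  have hbij : Function.Bijective (fun p : {σ : Equiv.Perm (Fin (M+1)) // Ainc A σ} × (Wsub A) =>
      (p.1.1 * p.2.1 : Equiv.Perm (Fin (M+1)))) := by
    constructor
    · rintro ⟨⟨σ, hσ⟩, ⟨τ, hτ⟩⟩ ⟨⟨σ', hσ'⟩, ⟨τ', hτ'⟩⟩ e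
      simp only at e
      have hρW : τ * τ'⁻¹ ∈ Wsub A := mul_mem hτ (inv_mem hτ')
      have hσ'' : σ * (τ * τ'⁻¹) = σ' := by
        rw [← mul_assoc, e, mul_assoc, mul_inv_cancel, mul_one]
      have hone : τ * τ'⁻¹ = 1 :=
        bl_unique hσ (wsub_le_bl A hρW) (by rw [hσ'']; exact hσ')
      have hττ' : τ = τ' := by
        have := congrArg (· * τ') hone
        simpa [mul_assoc] using this
      have hσσ' : σ = σ' := by rw [← hσ'', hone, mul_one]
      simp [Prod.ext_iff, Subtype.ext_iff, hσσ', hττ']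
    · intro π
      obtain ⟨τ, hτW, hτ⟩ := exists_sort A π
      refine ⟨⟨⟨π * τ, hτ⟩, ⟨τ⁻¹, inv_mem hτW⟩⟩, ?_⟩
      simp [mul_assoc]
  have heq := Nat.card_eq_of_bijective _ hbij
  rw [Nat.card_prod] at heq
  have h2 : Nat.card (Equiv.Perm (Fin (M+1))) = (M+1).factorial := by
    rw [Nat.card_eq_fintype_card, Fintype.card_perm, Fintype.card_fin]
  rw [← h2, ← heq]
  congr 1
  rw [Nat.card_eq_fintype_card, Fintype.card_subtype, Ncount]

lemma ncount_pos (A : Finset (Fin M)) : 0 < Ncount A := by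
  have hf := factorial_eq A
  have hp := Nat.factorial_pos (M + 1)
  rcases Nat.eq_zero_or_pos (Ncount A) with h | h
  · rw [h, zero_mul] at hf; omega
  · exact h
lemma sum_powerset_pow {α : Type*} [DecidableEq α] (s : Finset α) (x : Polynomial ℚ) :
    ∑ A ∈ s.powerset, x ^ A.card = (x + 1) ^ s.card := by
  classical
  induction s using Finset.induction_on with
  | empty => simp
  | @insert a s ha ih =>
    rw [Finset.powerset_insert, Finset.sum_union]
    · rw [Finset.sum_image (by
        intro A hA B hB e
        simp only [Finset.mem_coe, Finset.mem_powerset] at hA hB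
        have ha' : a ∉ A := fun h => ha (hA h)
        have hb' : a ∉ B := fun h => ha (hB h)
        rw [← Finset.erase_insert ha', ← Finset.erase_insert hb', e]
        )]
      have : ∀ A ∈ s.powerset, x ^ (insert a A).card = x * x ^ A.card := by
        intro A hA
        rw [Finset.card_insert_of_notMem (fun h => ha (Finset.mem_powerset.mp hA h))]
        ring
      rw [Finset.sum_congr rfl this, ← Finset.mul_sum, ih,
        Finset.card_insert_of_notMem ha]
      ring
    · rw [Finset.disjoint_left]
      intro A hA hA'
      simp only [Finset.mem_image, Finset.mem_powerset] at hA hA'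
      obtain ⟨B, hB, rfl⟩ := hA'
      exact ha (hA (Finset.mem_insert_self a B))

lemma main_identity :
    ∑ A : Finset (Fin M), (Ncount A : ℚ) • ((X : Polynomial ℚ) - 1) ^ A.card
      = ∑ σ : Equiv.Perm (Fin (M+1)), (X : Polynomial ℚ) ^ (M - des σ) := by
  classical
  have step1 : ∀ A : Finset (Fin M), (Ncount A : ℚ) • ((X : Polynomial ℚ) - 1) ^ A.card
      = ∑ σ : Equiv.Perm (Fin (M+1)),
          (if A ⊆ (DesF σ)ᶜ then ((X : Polynomial ℚ) - 1) ^ A.card else 0) := by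
    intro A
    have : Ncount A = (Finset.univ.filter
        (fun σ : Equiv.Perm (Fin (M+1)) => A ⊆ (DesF σ)ᶜ)).card := by
      unfold Ncount
      congr 1
      apply Finset.filter_congr
      intro σ _
      rw [ainc_iff_disjoint]
      simp only [Finset.subset_iff, Finset.mem_compl]
    rw [this, Finset.card_filter]
    push_cast
    rw [Finset.sum_smul]
    apply Finset.sum_congr rfl
    intro σ _
    split <;> simp
  rw [Finset.sum_congr rfl (fun A _ => step1 A), Finset.sum_comm]
  apply Finset.sum_congr rfl
  intro σ _
  rw [← Finset.sum_filter]
  have : Finset.univ.filter (fun A : Finset (Fin M) => A ⊆ (DesF σ)ᶜ) = (DesF σ)ᶜ.powerset := by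
    ext A
    simp [Finset.mem_powerset]
  rw [this, sum_powerset_pow]
  rw [sub_add_cancel, Finset.card_compl, Fintype.card_fin, des_eq_card]

lemma palindrome :
    ∑ σ : Equiv.Perm (Fin (M+1)), (X : Polynomial ℚ) ^ (M - des σ) = Euler (M + 1) := by
  classical
  rw [Euler]
  apply Fintype.sum_equiv (Equiv.mulRight (Fin.revPerm : Equiv.Perm (Fin (M+1))))
  intro σ
  congr 1
  have hdes : des ((Equiv.mulRight Fin.revPerm) σ) = M - des σ := by
    rw [des_eq_card, des_eq_card]
    have hmem : ∀ i : Fin M, i ∈ DesF (σ * Fin.revPerm) ↔ i.rev ∉ DesF σ := by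
      intro i
      unfold DesF
      simp only [Finset.mem_filter, Finset.mem_univ, true_and]
      have e1 : (Fin.revPerm : Equiv.Perm (Fin (M+1))) i.succ = (i.rev).castSucc := by
        apply Fin.ext
        simp [Fin.rev]
      have e2 : (Fin.revPerm : Equiv.Perm (Fin (M+1))) i.castSucc = (i.rev).succ := by
        apply Fin.ext
        simp [Fin.rev]
        omega
      rw [Equiv.Perm.mul_apply, Equiv.Perm.mul_apply, e1, e2, not_lt]
      constructor
      · intro h; exact le_of_lt h
      · intro h
        rcases lt_or_eq_of_le h with h' | h'
        · exact h'
        · exfalso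
          have := σ.injective h'
          have := congrArg Fin.val this
          simp at this
    have : DesF (σ * Fin.revPerm) = ((DesF σ)ᶜ).image Fin.rev := by
      ext i
      rw [hmem i]
      constructor
      · intro h
        refine Finset.mem_image.mpr ⟨i.rev, ?_, Fin.rev_rev i⟩
        simpa using h
      · intro h
        obtain ⟨j, hj, rfl⟩ := Finset.mem_image.mp h
        simpa [Fin.rev_rev] using hj
    have hrev : ((Equiv.mulRight (Fin.revPerm : Equiv.Perm (Fin (M+1)))) σ) = σ * Fin.revPerm := rfl
    rw [hrev, this, Finset.card_image_of_injective _ Fin.rev_injective,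
      Finset.card_compl, Fintype.card_fin]
  rw [hdes]
section Specific

variable {m : ℕ}

/-- the last index -/
def jj (m : ℕ) : Fin (m + 2) := ⟨m + 1, by omega⟩

lemma sTjj_fixes (x : Fin (m + 3)) (hx : x.val < m + 1) : sT (jj m) x = x := by
  apply Equiv.swap_apply_of_ne_of_ne
  · intro e; have := congrArg Fin.val e; simp [jj] at this; omega
  · intro e; have := congrArg Fin.val e; simp [jj] at this; omega

lemma sTjj_cs : sT (jj m) (jj m).castSucc = (jj m).succ := Equiv.swap_apply_left _ _
lemma sTjj_s : sT (jj m) (jj m).succ = (jj m).castSucc := Equiv.swap_apply_right _ _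

lemma ncount_halve (A : Finset (Fin (m + 2))) (hA : ∀ i ∈ A, i.val < m) :
    Ncount A = 2 * Ncount (insert (jj m) A) := by
  classical
  have hfix : ∀ (σ : Equiv.Perm (Fin (m+3))) (a : Fin (m+2)), a ∈ A →
      ((σ * sT (jj m)) a.castSucc = σ a.castSucc ∧ (σ * sT (jj m)) a.succ = σ a.succ) := by
    intro σ a ha
    constructor
    · rw [Equiv.Perm.mul_apply, sTjj_fixes]
      simp only [Fin.coe_castSucc]
      have := hA a ha; omega
    · rw [Equiv.Perm.mul_apply, sTjj_fixes]
      simp only [Fin.val_succ]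
      have := hA a ha; omega
  have hainc : ∀ σ : Equiv.Perm (Fin (m+3)), Ainc A σ → Ainc A (σ * sT (jj m)) := by
    intro σ hσ a ha
    rw [(hfix σ a ha).1, (hfix σ a ha).2]
    exact hσ a ha
  have hjA : (jj m) ∉ A := fun h => by have := hA (jj m) h; simp [jj] at this
  have hsplit : ∀ σ : Equiv.Perm (Fin (m+3)),
      Ainc (insert (jj m) A) σ ↔ Ainc A σ ∧ σ (jj m).castSucc < σ (jj m).succ := by
    intro σ
    unfold Ainc
    constructor
    · intro h
      exact ⟨fun a ha => h a (Finset.mem_insert_of_mem ha), h (jj m) (Finset.mem_insert_self (jj m) A)⟩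
    · rintro ⟨h1, h2⟩ a ha
      rcases Finset.mem_insert.mp ha with rfl | ha'
      · exact h2
      · exact h1 a ha'
  unfold Ncount
  rw [← Finset.card_filter_add_card_filter_not
    (s := Finset.univ.filter (fun σ : Equiv.Perm (Fin (m+3)) => Ainc A σ))
    (p := fun σ => σ (jj m).castSucc < σ (jj m).succ)]
  have e1 : (Finset.univ.filter (fun σ : Equiv.Perm (Fin (m+3)) => Ainc A σ)).filter
      (fun σ => σ (jj m).castSucc < σ (jj m).succ)
      = Finset.univ.filter (fun σ : Equiv.Perm (Fin (m+3)) => Ainc (insert (jj m) A) σ) := by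
    rw [Finset.filter_filter]
    apply Finset.filter_congr
    intro σ _
    rw [hsplit σ]
  have e2 : ((Finset.univ.filter (fun σ : Equiv.Perm (Fin (m+3)) => Ainc A σ)).filter
      (fun σ => ¬ σ (jj m).castSucc < σ (jj m).succ)).card
      = (Finset.univ.filter (fun σ : Equiv.Perm (Fin (m+3)) => Ainc (insert (jj m) A) σ)).card := by
    apply Finset.card_bij' (fun σ _ => σ * sT (jj m)) (fun σ _ => σ * sT (jj m))
    · intro σ hσ
      simp only [Finset.mem_filter, Finset.mem_univ, true_and] at hσ ⊢
      obtain ⟨h1, h2⟩ := hσ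
      rw [hsplit]
      refine ⟨hainc σ h1, ?_⟩
      rw [Equiv.Perm.mul_apply, Equiv.Perm.mul_apply, sTjj_cs, sTjj_s]
      have hne : σ (jj m).castSucc ≠ σ (jj m).succ := by
        intro e
        have := congrArg Fin.val (σ.injective e)
        simp [jj] at this
      rcases lt_or_eq_of_le (le_of_not_gt h2) with h' | h'
      · exact h'
      · exact absurd h'.symm hne
    · intro σ hσ
      simp only [Finset.mem_filter, Finset.mem_univ, true_and] at hσ ⊢
      rw [hsplit] at hσ
      obtain ⟨h1, h2⟩ := hσ
      refine ⟨hainc σ h1, ?_⟩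
      rw [Equiv.Perm.mul_apply, Equiv.Perm.mul_apply, sTjj_cs, sTjj_s]
      omega
    · intro σ _
      rw [mul_assoc, sT, Equiv.swap_mul_self, mul_one]
    · intro σ _
      rw [mul_assoc, sT, Equiv.swap_mul_self, mul_one]
  rw [e1, e2]
  exact (two_mul _).symm

end Specific
section Embed

variable {m : ℕ}

lemma via_swap {α β : Type*} [DecidableEq α] [DecidableEq β] (ι : α ↪ β) (x y : α) :
    Equiv.Perm.viaEmbedding (Equiv.swap x y) ι = Equiv.swap (ι x) (ι y) := by
  ext z
  by_cases hz : z ∈ Set.range ι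
  · obtain ⟨w, rfl⟩ := hz
    rw [Equiv.Perm.viaEmbedding_apply]
    rcases eq_or_ne w x with rfl | hwx
    · rw [Equiv.swap_apply_left, Equiv.swap_apply_left]
    · rcases eq_or_ne w y with rfl | hwy
      · rw [Equiv.swap_apply_right, Equiv.swap_apply_right]
      · rw [Equiv.swap_apply_of_ne_of_ne hwx hwy,
          Equiv.swap_apply_of_ne_of_ne (fun e => hwx (ι.injective e))
            (fun e => hwy (ι.injective e))]
  · rw [Equiv.Perm.viaEmbedding_apply_of_notMem _ _ z hz,
      Equiv.swap_apply_of_ne_of_ne (fun e => hz ⟨x, e.symm⟩) (fun e => hz ⟨y, e.symm⟩)]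

lemma wsub_card_eq (A' : Finset (Fin m)) :
    Nat.card (Wsub ((A'.image (Fin.castLE (by omega : m ≤ m + 2))) : Finset (Fin (m+2))))
      = Nat.card (Wsub A') := by
  classical
  set ι : Fin (m+1) ↪ Fin (m+3) := Fin.castLEEmb (by omega) with hι
  have hgen : ∀ a : Fin m,
      Equiv.Perm.viaEmbeddingHom ι (sT a) = sT (Fin.castLE (by omega : m ≤ m + 2) a) := by
    intro a
    rw [Equiv.Perm.viaEmbeddingHom_apply, sT, via_swap, sT]
    congr 1 <;> apply Fin.ext <;> simp [hι]
  have hmap : (Wsub A').map (Equiv.Perm.viaEmbeddingHom ι)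
      = Wsub (A'.image (Fin.castLE (by omega : m ≤ m + 2))) := by
    rw [Wsub, MonoidHom.map_closure, Wsub]
    congr 1
    rw [Set.image_image, Finset.coe_image, Set.image_image]
    exact Set.image_congr (fun a _ => hgen a)
  have hcard := Nat.card_congr
    (Subgroup.equivMapOfInjective (Wsub A') _ (Equiv.Perm.viaEmbeddingHom_injective ι)).toEquiv
  rw [hmap] at hcard
  exact hcard.symm

lemma ncount_insert_eq (A' : Finset (Fin m)) :
    2 * Ncount (insert (jj m) (A'.image (Fin.castLE (by omega : m ≤ m + 2))))
      = (m + 3) * (m + 2) * Ncount A' := by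
  classical
  set B : Finset (Fin (m+2)) := A'.image (Fin.castLE (by omega : m ≤ m + 2)) with hB
  have hBlt : ∀ i ∈ B, i.val < m := by
    intro i hi
    obtain ⟨a, _, rfl⟩ := Finset.mem_image.mp hi
    exact a.isLt
  have h1 := factorial_eq (M := m + 2) B
  have h2 := factorial_eq (M := m) A'
  have hc := wsub_card_eq A'
  have hpos : 0 < Nat.card (Wsub A') := Nat.card_pos
  have hfact : (m + 2 + 1).factorial = (m + 3) * (m + 2) * (m + 1).factorial := by
    rw [show m + 2 + 1 = (m + 2) + 1 from rfl, Nat.factorial_succ,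
      show m + 2 = (m + 1) + 1 from rfl, Nat.factorial_succ]
    ring
  have key : Ncount B * Nat.card (Wsub A') = ((m + 3) * (m + 2) * Ncount A') * Nat.card (Wsub A') := by
    rw [← hc, ← h1]
    rw [hfact, h2]
    rw [hc]
    ring
  have hNB : Ncount B = (m + 3) * (m + 2) * Ncount A' :=
    Nat.eq_of_mul_eq_mul_right hpos key
  rw [← ncount_halve B hBlt, hNB]

end Embed
section Final

variable {m : ℕ}

def kk (m : ℕ) : Fin (m + 2) := ⟨m, by omega⟩

lemma sameComp_jj {A : Finset (Fin (m+2))} (hk : kk m ∉ A) {b : Fin (m+2)}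
    (h : sameComp A (jj m) b) : b = jj m := by
  induction h with
  | refl => rfl
  | @tail b c h1 h2 ih =>
    rcases h2 with ⟨h2a, h2b, hor⟩
    rw [ih] at hor
    exfalso
    have hcl := c.isLt
    rcases hor with h' | h'
    · simp [jj] at h'
      omega
    · have hc : c = kk m := by
        apply Fin.ext
        simp [jj] at h'
        simp [kk]
        omega
      exact hk (hc ▸ h2b)

lemma noCompIn_iff (A : Finset (Fin (m+2))) :
    noCompIn A {jj m} ↔ (jj m ∉ A ∨ kk m ∈ A) := by
  constructor
  · intro h
    by_contra hcon
    push_neg at hcon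
    obtain ⟨hj, hk⟩ := hcon
    obtain ⟨b, hbA, hbJ, hcomp⟩ := h (jj m) hj
    rw [Finset.mem_singleton] at hbJ
    exact hbJ (sameComp_jj hk hcomp)
  · intro h a ha
    rcases h with hj | hk
    · refine ⟨a, ha, ?_, Relation.ReflTransGen.refl⟩
      rw [Finset.mem_singleton]
      rintro rfl
      exact hj ha
    · by_cases haj : a = jj m
      · subst haj
        refine ⟨kk m, hk, ?_, Relation.ReflTransGen.single ⟨ha, hk, Or.inr (by simp [kk, jj])⟩⟩
        rw [Finset.mem_singleton]
        intro e
        have := congrArg Fin.val e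
        simp [kk, jj] at this
      · exact ⟨a, ha, by rw [Finset.mem_singleton]; exact haj, Relation.ReflTransGen.refl⟩

lemma not_commute_jk : ¬ Commute (sT (jj m)) (sT (kk m)) := by
  intro h
  have hx := DFunLike.congr_fun h ((kk m).castSucc : Fin (m+3))
  have e1 : sT (kk m) (kk m).castSucc = (kk m).succ := Equiv.swap_apply_left _ _
  have e2 : (kk m).succ = (jj m).castSucc := by apply Fin.ext; simp [kk, jj]
  have e3 : sT (jj m) (kk m).castSucc = (kk m).castSucc := by
    apply sTjj_fixes
    simp [kk]
  rw [Equiv.Perm.mul_apply, Equiv.Perm.mul_apply, e1, e2, sTjj_cs, e3, e1] at hx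
  have := congrArg Fin.val hx
  simp [jj, kk] at this

lemma astar_k (A : Finset (Fin (m+2))) (hk : kk m ∈ A) : Astar A {jj m} = A := by
  rw [Astar]
  have he : ({jj m} : Finset (Fin (m+2))).filter
      (fun j => ∀ a ∈ A, Commute (sT j) (sT a)) = ∅ := by
    rw [Finset.filter_eq_empty_iff]
    intro x hx
    rw [Finset.mem_singleton] at hx
    subst hx
    intro hcomm
    exact not_commute_jk (hcomm (kk m) hk)
  rw [he, Finset.union_empty]

lemma astar_nojk (A : Finset (Fin (m+2))) (hj : jj m ∉ A) (hk : kk m ∉ A) :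
    Astar A {jj m} = insert (jj m) A := by
  classical
  have hA : ∀ i ∈ A, i.val < m := by
    intro i hi
    have h1 : i ≠ jj m := fun e => hj (e ▸ hi)
    have h2 : i ≠ kk m := fun e => hk (e ▸ hi)
    have h3 := i.isLt
    rw [Fin.ne_iff_vne] at h1 h2
    simp [jj] at h1
    simp [kk] at h2
    omega
  rw [Astar]
  have he : ({jj m} : Finset (Fin (m+2))).filter
      (fun j => ∀ a ∈ A, Commute (sT j) (sT a)) = {jj m} := by
    rw [Finset.filter_singleton, if_pos]
    intro a ha
    apply Equiv.Perm.Disjoint.commute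
    intro x
    by_cases hx : x.val < m + 1
    · left; exact sTjj_fixes x hx
    · right
      apply Equiv.swap_apply_of_ne_of_ne
      · intro e
        have h5 := congrArg Fin.val e
        rw [Fin.coe_castSucc] at h5
        have h6 := hA a ha
        omega
      · intro e
        have h5 := congrArg Fin.val e
        rw [Fin.val_succ] at h5
        have h6 := hA a ha
        omega
  rw [he, Finset.union_comm, ← Finset.insert_eq]

lemma coef_eq (B : Finset (Fin (m+2))) :
    ((m + 2 + 1).factorial : ℚ) / (Nat.card (Wsub B) : ℚ) = (Ncount B : ℚ) := by
  have h := factorial_eq (M := m+2) B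
  have hpos : 0 < Nat.card (Wsub B) := Nat.card_pos
  rw [div_eq_iff (by exact_mod_cast hpos.ne')]
  exact_mod_cast h

lemma global_eq (M : ℕ) :
    ∑ A : Finset (Fin M), (Ncount A : ℚ) • ((X : Polynomial ℚ) - 1) ^ A.card
      = Euler (M + 1) := by
  rw [main_identity, palindrome]

lemma choose_two (m : ℕ) : 2 * ((m + 3).choose 2) = (m + 3) * (m + 2) := by
  rw [Nat.choose_two_right]
  have hd : 2 ∣ (m + 3) * (m + 3 - 1) := by
    have := Nat.even_mul_succ_self (m + 2)
    rw [show m + 3 - 1 = m + 2 from rfl, mul_comm]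
    exact this.two_dvd
  rw [Nat.mul_div_cancel' hd]
  rfl

lemma main_m (m : ℕ) :
    ∑ A ∈ Finset.univ.filter (fun A : Finset (Fin (m+2)) => noCompIn A {jj m}),
      (Ncount (Astar A {jj m}) : ℚ) • ((X : Polynomial ℚ) - 1) ^ A.card
    = Euler (m+3) - ((m+3).choose 2 : ℚ) • (X * Euler (m+1)) := by
  classical
  set F0 : Finset (Finset (Fin (m+2))) :=
    Finset.univ.filter (fun A => jj m ∉ A ∧ kk m ∉ A) with hF0
  set F1 : Finset (Finset (Fin (m+2))) :=
    Finset.univ.filter (fun A => kk m ∈ A) with hF1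
  set F2 : Finset (Finset (Fin (m+2))) :=
    Finset.univ.filter (fun A => jj m ∈ A ∧ kk m ∉ A) with hF2
  have hmem0 : ∀ A, A ∈ F0 ↔ (jj m ∉ A ∧ kk m ∉ A) := by
    intro A; rw [hF0, Finset.mem_filter]; simp
  have hmem1 : ∀ A, A ∈ F1 ↔ kk m ∈ A := by
    intro A; rw [hF1, Finset.mem_filter]; simp
  have hmem2 : ∀ A, A ∈ F2 ↔ (jj m ∈ A ∧ kk m ∉ A) := by
    intro A; rw [hF2, Finset.mem_filter]; simp
  have hd01 : Disjoint F0 F1 := by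
    rw [Finset.disjoint_left]
    intro A h0 h1
    rw [hmem0] at h0; rw [hmem1] at h1
    exact h0.2 h1
  have hd012 : Disjoint (F0 ∪ F1) F2 := by
    rw [Finset.disjoint_left]
    intro A h01 h2
    rw [hmem2] at h2
    rcases Finset.mem_union.mp h01 with h | h
    · rw [hmem0] at h; exact h.1 h2.1
    · rw [hmem1] at h; exact h2.2 h
  have hF : Finset.univ.filter (fun A : Finset (Fin (m+2)) => noCompIn A {jj m})
      = F0 ∪ F1 := by
    ext A
    rw [Finset.mem_filter, Finset.mem_union, hmem0, hmem1, noCompIn_iff]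
    simp only [Finset.mem_univ, true_and]
    tauto
  have hU : (Finset.univ : Finset (Finset (Fin (m+2)))) = (F0 ∪ F1) ∪ F2 := by
    ext A
    simp only [Finset.mem_univ, Finset.mem_union, hmem0, hmem1, hmem2, true_iff]
    tauto
  -- global sum
  have hglob : ∑ A ∈ (F0 ∪ F1) ∪ F2, (Ncount A : ℚ) • ((X : Polynomial ℚ) - 1) ^ A.card
      = Euler (m + 3) := by
    rw [← hU]
    exact global_eq (m + 2)
  rw [Finset.sum_union hd012, Finset.sum_union hd01] at hglob
  -- rewrite LHS
  rw [hF, Finset.sum_union hd01]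
  have hrw0 : ∑ A ∈ F0, (Ncount (Astar A {jj m}) : ℚ) • ((X : Polynomial ℚ) - 1) ^ A.card
      = ∑ A ∈ F0, (Ncount (insert (jj m) A) : ℚ) • ((X : Polynomial ℚ) - 1) ^ A.card := by
    apply Finset.sum_congr rfl
    intro A hA
    rw [hmem0] at hA
    rw [astar_nojk A hA.1 hA.2]
  have hrw1 : ∑ A ∈ F1, (Ncount (Astar A {jj m}) : ℚ) • ((X : Polynomial ℚ) - 1) ^ A.card
      = ∑ A ∈ F1, (Ncount A : ℚ) • ((X : Polynomial ℚ) - 1) ^ A.card := by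
    apply Finset.sum_congr rfl
    intro A hA
    rw [hmem1] at hA
    rw [astar_k A hA]
  rw [hrw0, hrw1]
  -- halving on F0
  have hhalf : ∑ A ∈ F0, (Ncount A : ℚ) • ((X : Polynomial ℚ) - 1) ^ A.card
      = ∑ A ∈ F0, ((2 : ℚ) * Ncount (insert (jj m) A)) • ((X : Polynomial ℚ) - 1) ^ A.card := by
    apply Finset.sum_congr rfl
    intro A hA
    rw [hmem0] at hA
    have hAlt : ∀ i ∈ A, i.val < m := by
      intro i hi
      have h1 : i ≠ jj m := fun e => hA.1 (e ▸ hi)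
      have h2 : i ≠ kk m := fun e => hA.2 (e ▸ hi)
      have h3 := i.isLt
      rw [Fin.ne_iff_vne] at h1 h2
      simp [jj] at h1
      simp [kk] at h2
      omega
    rw [ncount_halve A hAlt]
    push_cast
    ring_nf
  -- F2 reindex
  have hF2sum : ∑ A ∈ F2, (Ncount A : ℚ) • ((X : Polynomial ℚ) - 1) ^ A.card
      = ∑ A ∈ F0, (Ncount (insert (jj m) A) : ℚ) • ((X : Polynomial ℚ) - 1) ^ (A.card + 1) := by
    apply Finset.sum_bij' (fun A _ => A.erase (jj m)) (fun A _ => insert (jj m) A)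
    · intro A hA
      rw [hmem2] at hA
      exact Finset.insert_erase hA.1
    · intro A hA
      rw [hmem0] at hA
      exact Finset.erase_insert hA.1
    · intro A hA
      rw [hmem2] at hA
      rw [Finset.insert_erase hA.1, Finset.card_erase_of_mem hA.1]
      congr 2
      have : 1 ≤ A.card := Finset.card_pos.mpr ⟨jj m, hA.1⟩
      omega
    · intro A hA
      rw [hmem2] at hA
      rw [hmem0]
      constructor
      · exact Finset.notMem_erase _ _
      · intro h; exact hA.2 (Finset.mem_of_mem_erase h)
    · intro A hA
      rw [hmem0] at hA
      rw [hmem2]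
      exact ⟨Finset.mem_insert_self _ _, by
        intro h
        rcases Finset.mem_insert.mp h with h' | h'
        · have := congrArg Fin.val h'; simp [kk, jj] at this
        · exact hA.2 h'⟩
  -- identify the correction sum with a sum over Finset (Fin m)
  have hG : ∑ A ∈ F0, (Ncount (insert (jj m) A) : ℚ) • ((X : Polynomial ℚ) - 1) ^ A.card
      = ((m+3).choose 2 : ℚ) • Euler (m + 1) := by
    have hre : ∑ A ∈ F0, (Ncount (insert (jj m) A) : ℚ) • ((X : Polynomial ℚ) - 1) ^ A.card
        = ∑ A' : Finset (Fin m), (Ncount (insert (jj m)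
            (A'.image (Fin.castLE (by omega : m ≤ m + 2)))) : ℚ) •
              ((X : Polynomial ℚ) - 1) ^ A'.card := by
      symm
      apply Finset.sum_bij (fun A' _ => A'.image (Fin.castLE (by omega : m ≤ m + 2)))
      · intro A' _
        rw [hmem0]
        constructor
        · intro h
          obtain ⟨a, _, ha⟩ := Finset.mem_image.mp h
          have := congrArg Fin.val ha
          have := a.isLt
          simp [jj, Fin.castLE] at *
          omega
        · intro h
          obtain ⟨a, _, ha⟩ := Finset.mem_image.mp h
          have := congrArg Fin.val ha
          have := a.isLt
          simp [kk, Fin.castLE] at *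
          omega
      · intro A' _ B' _ e
        exact Finset.image_injective (Fin.castLE_injective _) e
      · intro A hA
        rw [hmem0] at hA
        have hAlt : ∀ i ∈ A, i.val < m := by
          intro i hi
          have h1 : i ≠ jj m := fun e => hA.1 (e ▸ hi)
          have h2 : i ≠ kk m := fun e => hA.2 (e ▸ hi)
          have h3 := i.isLt
          rw [Fin.ne_iff_vne] at h1 h2
          simp [jj] at h1
          simp [kk] at h2
          omega
        refine ⟨A.attach.image (fun i => (⟨i.1.val, hAlt i.1 i.2⟩ : Fin m)), Finset.mem_univ _, ?_⟩
        ext x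
        constructor
        · intro hx
          obtain ⟨b, hb, rfl⟩ := Finset.mem_image.mp hx
          obtain ⟨i, _, rfl⟩ := Finset.mem_image.mp hb
          have he : Fin.castLE (by omega : m ≤ m + 2) (⟨i.1.val, hAlt i.1 i.2⟩ : Fin m) = i.1 :=
            Fin.ext rfl
          rw [he]
          exact i.2
        · intro hx
          apply Finset.mem_image.mpr
          refine ⟨⟨x.val, hAlt x hx⟩, ?_, Fin.ext rfl⟩
          exact Finset.mem_image.mpr ⟨⟨x, hx⟩, Finset.mem_attach _ _, rfl⟩
      · intro A' _
        rw [Finset.card_image_of_injective _ (Fin.castLE_injective _)]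
    rw [hre]
    have hco : ∀ A' : Finset (Fin m),
        (Ncount (insert (jj m) (A'.image (Fin.castLE (by omega : m ≤ m + 2)))) : ℚ)
          = ((m+3).choose 2 : ℚ) * (Ncount A' : ℚ) := by
      intro A'
      have h1 := ncount_insert_eq A'
      have h2 := choose_two m
      have h3 : 2 * Ncount (insert (jj m) (A'.image (Fin.castLE (by omega : m ≤ m + 2))))
          = 2 * ((m+3).choose 2 * Ncount A') := by
        rw [← mul_assoc, h2]
        exact h1
      have h4 : Ncount (insert (jj m) (A'.image (Fin.castLE (by omega : m ≤ m + 2))))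
          = (m+3).choose 2 * Ncount A' := by omega
      rw [h4]
      push_cast
      ring
    rw [Finset.sum_congr rfl (fun A' _ => by rw [hco A'])]
    rw [← global_eq m]
    rw [Finset.smul_sum]
    apply Finset.sum_congr rfl
    intro A' _
    rw [mul_smul]
  -- put it all together
  have hEuler : ∑ A ∈ F1, (Ncount A : ℚ) • ((X : Polynomial ℚ) - 1) ^ A.card
      = Euler (m + 3)
        - ∑ A ∈ F0, (Ncount A : ℚ) • ((X : Polynomial ℚ) - 1) ^ A.card
        - ∑ A ∈ F2, (Ncount A : ℚ) • ((X : Polynomial ℚ) - 1) ^ A.card := by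
    rw [← hglob]; ring
  rw [hEuler, hhalf, hF2sum]
  have hTS : (∑ A ∈ F0, (Ncount (insert (jj m) A) : ℚ) • ((X : Polynomial ℚ) - 1) ^ (A.card + 1))
      + (∑ A ∈ F0, (Ncount (insert (jj m) A) : ℚ) • ((X : Polynomial ℚ) - 1) ^ A.card)
      = ((m+3).choose 2 : ℚ) • (X * Euler (m+1)) := by
    rw [← Finset.sum_add_distrib]
    have hterm : ∀ A ∈ F0, (Ncount (insert (jj m) A) : ℚ) • ((X : Polynomial ℚ) - 1) ^ (A.card + 1)
        + (Ncount (insert (jj m) A) : ℚ) • ((X : Polynomial ℚ) - 1) ^ A.card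
        = X * ((Ncount (insert (jj m) A) : ℚ) • ((X : Polynomial ℚ) - 1) ^ A.card) := by
      intro A _
      rw [mul_smul_comm, ← smul_add]
      congr 1
      ring
    rw [Finset.sum_congr rfl hterm, ← Finset.mul_sum, hG, mul_smul_comm]
  have hhalf2 : ∑ A ∈ F0, ((2:ℚ) * Ncount (insert (jj m) A)) • ((X : Polynomial ℚ) - 1) ^ A.card
      = (∑ A ∈ F0, (Ncount (insert (jj m) A) : ℚ) • ((X : Polynomial ℚ) - 1) ^ A.card)
      + ∑ A ∈ F0, (Ncount (insert (jj m) A) : ℚ) • ((X : Polynomial ℚ) - 1) ^ A.card := by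
    rw [← Finset.sum_add_distrib]
    apply Finset.sum_congr rfl
    intro A _
    rw [← add_smul]
    congr 1
    ring
  rw [hhalf2, ← hTS]
  ring

end Final
open scoped Classical in
theorem hpoly_J_sn (n : ℕ) (hn : 2 ≤ n) :
    ∑ A ∈ Finset.univ.filter (fun A : Finset (Fin n) =>
        noCompIn A {⟨n - 1, by omega⟩}),
      (((n + 1).factorial : ℚ) /
          (Nat.card ↥(Wsub (Astar A {⟨n - 1, by omega⟩})) : ℚ)) • (X - 1) ^ A.card
      = Euler (n + 1) - ((n + 1).choose 2 : ℚ) • (X * Euler (n - 1)) := by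
  obtain ⟨m, rfl⟩ : ∃ m, n = m + 2 := ⟨n - 2, by omega⟩
  refine Eq.trans (Finset.sum_congr rfl ?_) (main_m m)
  intro A _
  rw [coef_eq]
  rfl
end Aux
end

section
/- Let 1 ≤ k ≤ n, let S = {s_1,...,s_n} be the simple transpositions of S_{n+1}, and let J(k,n) = {s_{n-k+1},...,s_n}. Define S(J(k,n)) = {A ⊆ S : no connected component of A is contained in J(k,n)}, and for A ∈ S(J(k,n)) set A*_k = A ∪ {s ∈ J(k,n) : s commutes with every element of A}, and h_k(t) = Σ_{A ∈ S(J(k,n))} ((n+1)!/|W_{A*_k}|)(t-1)^{|A|}. Then for 1 ≤ k ≤ n: h_k(t) = h_{k-1}(t) - C(n+1, k+1)(t^k + t^{k-1} + ... + t) E_{n-k}(t), where h_0(t) = E_{n+1}(t). -/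
open Polynomial Finset

/-- `J(k,n) = {s_{n-k+1}, ..., s_n}` as a subset of the index set `Fin n`. -/
def Jset (n k : ℕ) : Finset (Fin n) :=
  Finset.univ.filter (fun j : Fin n => n - k ≤ (j : ℕ))

open scoped Classical in
/-- The `h`-polynomial of `X(J(k,n))`. -/
noncomputable def hpol (n k : ℕ) : Polynomial ℚ :=
  ∑ A ∈ Finset.univ.filter (fun A : Finset (Fin n) => noCompIn A (Jset n k)),
    (((n + 1).factorial : ℚ) /
        (Nat.card ↥(Wsub (Astar A (Jset n k))) : ℚ)) • (X - 1) ^ A.card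
open Equiv Equiv.Perm Finset

namespace HRec

variable {n : ℕ}

/-- number of "cuts" (non-members of `B`) strictly below position `x`. -/
def cuts (B : Finset (Fin n)) (x : Fin (n + 1)) : ℕ :=
  (univ.filter (fun i : Fin n => (i : ℕ) < (x : ℕ) ∧ i ∉ B)).card

lemma cuts_mono {B : Finset (Fin n)} {x y : Fin (n + 1)} (h : x ≤ y) :
    cuts B x ≤ cuts B y := by
  apply Finset.card_le_card
  intro i hi
  simp only [Finset.mem_filter, Finset.mem_univ, true_and] at hi ⊢
  exact ⟨lt_of_lt_of_le hi.1 h, hi.2⟩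

lemma cuts_succ_of_mem {B : Finset (Fin n)} {i : Fin n} (h : i ∈ B) :
    cuts B i.succ = cuts B i.castSucc := by
  unfold cuts
  congr 1
  apply Finset.filter_congr
  intro j _
  simp only [Fin.val_succ, Fin.coe_castSucc, eq_iff_iff]
  constructor
  · rintro ⟨hj, hjB⟩
    refine ⟨?_, hjB⟩
    rcases Nat.lt_succ_iff_lt_or_eq.mp hj with h' | h'
    · exact h'
    · exfalso; apply hjB; have : j = i := Fin.ext h'; rwa [this]
  · rintro ⟨hj, hjB⟩; exact ⟨Nat.lt_succ_of_lt hj, hjB⟩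

lemma cuts_succ_of_not_mem {B : Finset (Fin n)} {i : Fin n} (h : i ∉ B) :
    cuts B i.succ = cuts B i.castSucc + 1 := by
  unfold cuts
  have he : (univ.filter (fun j : Fin n => (j : ℕ) < (i.succ : ℕ) ∧ j ∉ B)) =
      insert i (univ.filter (fun j : Fin n => (j : ℕ) < (i.castSucc : ℕ) ∧ j ∉ B)) := by
    ext j
    simp only [Finset.mem_filter, Finset.mem_univ, true_and, Finset.mem_insert,
      Fin.val_succ, Fin.coe_castSucc]
    constructor
    · rintro ⟨hj, hjB⟩
      rcases Nat.lt_succ_iff_lt_or_eq.mp hj with h' | h'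
      · exact Or.inr ⟨h', hjB⟩
      · exact Or.inl (Fin.ext h')
    · rintro (rfl | ⟨hj, hjB⟩)
      · exact ⟨Nat.lt_succ_self _, h⟩
      · exact ⟨Nat.lt_succ_of_lt hj, hjB⟩
  rw [he, Finset.card_insert_of_notMem]
  simp

lemma inc_step {B : Finset (Fin n)} {u : Perm (Fin (n + 1))}
    (hu : ∀ i ∈ B, u i.castSucc < u i.succ) {x z : Fin (n + 1)}
    (hz : (z : ℕ) = (x : ℕ) + 1) (hc : cuts B x = cuts B z) : u x < u z := by
  have hxn : (x : ℕ) < n := by omega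
  set i : Fin n := ⟨(x : ℕ), hxn⟩ with hi
  have hx : x = i.castSucc := Fin.ext rfl
  have hzz : z = i.succ := Fin.ext (by simp [hi, hz])
  have hiB : i ∈ B := by
    by_contra hiB
    have := cuts_succ_of_not_mem hiB
    rw [← hx, ← hzz] at this
    omega
  rw [hx, hzz]; exact hu i hiB

/-- an "increasing at B" permutation is strictly monotone on each block. -/
lemma inc_strictMono_on {B : Finset (Fin n)} {u : Perm (Fin (n + 1))}
    (hu : ∀ i ∈ B, u i.castSucc < u i.succ) :
    ∀ x y : Fin (n + 1), x < y → cuts B x = cuts B y → u x < u y := by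
  have key : ∀ d : ℕ, ∀ x y : Fin (n + 1), (y : ℕ) = (x : ℕ) + d + 1 →
      cuts B x = cuts B y → u x < u y := by
    intro d
    induction d with
    | zero => exact fun x y hxy hc => inc_step hu (by omega) hc
    | succ d ih =>
      intro x y hxy hc
      have hzn : (x : ℕ) + 1 < n + 1 := by omega
      set z : Fin (n + 1) := ⟨(x : ℕ) + 1, hzn⟩ with hz
      have h1 : cuts B x ≤ cuts B z := cuts_mono (by rw [Fin.le_def]; simp [hz])
      have h2 : cuts B z ≤ cuts B y := cuts_mono (by rw [Fin.le_def]; simp [hz]; omega)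
      exact (inc_step hu (by simp [hz]) (by omega)).trans (ih z y (by simp [hz]; omega) (by omega))
  intro x y hxy hc
  have hv : (y : ℕ) = (x : ℕ) + ((y : ℕ) - (x : ℕ) - 1) + 1 := by
    have := (Fin.lt_def).mp hxy; omega
  exact key _ x y hv hc

lemma sT_apply_castSucc {i : Fin n} : sT i i.castSucc = i.succ := by simp [sT]

lemma sT_apply_succ {i : Fin n} : sT i i.succ = i.castSucc := by simp [sT]

lemma sT_apply_of_ne {i : Fin n} {x : Fin (n + 1)} (h1 : x ≠ i.castSucc) (h2 : x ≠ i.succ) :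
    sT i x = x := swap_apply_of_ne_of_ne h1 h2

lemma cuts_sT {B : Finset (Fin n)} {i : Fin n} (hi : i ∈ B) (x : Fin (n + 1)) :
    cuts B (sT i x) = cuts B x := by
  by_cases h1 : x = i.castSucc
  · rw [h1, sT_apply_castSucc, cuts_succ_of_mem hi]
  by_cases h2 : x = i.succ
  · rw [h2, sT_apply_succ, cuts_succ_of_mem hi]
  · rw [sT_apply_of_ne h1 h2]

/-- the subgroup of permutations preserving the block function. -/
def presCuts (B : Finset (Fin n)) : Subgroup (Perm (Fin (n + 1))) where
  carrier := {v | ∀ x, cuts B (v x) = cuts B x}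
  mul_mem' := by
    intro v w hv hw x
    simp only [Set.mem_setOf_eq] at hv hw ⊢
    rw [Perm.mul_apply, hv, hw]
  one_mem' := by intro x; simp
  inv_mem' := by
    intro v hv x
    simp only [Set.mem_setOf_eq] at hv ⊢
    conv_rhs => rw [← (Perm.eq_inv_iff_eq.mp rfl : v (v⁻¹ x) = x)]
    rw [hv]

lemma Wsub_le_presCuts (B : Finset (Fin n)) : Wsub B ≤ presCuts B := by
  rw [Wsub, Subgroup.closure_le]
  rintro _ ⟨i, hi, rfl⟩
  intro x
  exact cuts_sT (by simpa using hi) x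

lemma sT_mem_Wsub {B : Finset (Fin n)} {i : Fin n} (hi : i ∈ B) : sT i ∈ Wsub B :=
  Subgroup.subset_closure ⟨i, by simpa using hi, rfl⟩

lemma fin_le_apply {m : ℕ} {f : Fin m → Fin m} (h : StrictMono f) (x : Fin m) : x ≤ f x :=
  @StrictMono.le_apply (Fin m) _ (inferInstance : WellFoundedLT (Fin m)) f h x

/-- A nontrivial block-preserving permutation has a descent, at a position in `B`. -/
lemma presCuts_descent {B : Finset (Fin n)} {v : Perm (Fin (n + 1))}
    (hv : ∀ x, cuts B (v x) = cuts B x) (hv1 : v ≠ 1) :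
    ∃ i ∈ B, v i.succ < v i.castSucc := by
  by_contra hcon
  push_neg at hcon
  have hne : ∀ i : Fin n, v i.castSucc ≠ v i.succ := by
    intro i hh
    exact absurd (v.injective hh) (Fin.castSucc_lt_succ (i := i)).ne
  have hmono : StrictMono v := by
    rw [Fin.strictMono_iff_lt_succ]
    intro i
    by_cases hiB : i ∈ B
    · exact lt_of_le_of_ne (not_lt.mp (fun h => absurd h (by simpa using hcon i hiB))) (hne i)
    · by_contra hlt
      push_neg at hlt
      have hlt' : v i.succ < v i.castSucc :=
        lt_of_le_of_ne hlt (fun h => hne i h.symm)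
      have c1 : cuts B (v i.succ) ≤ cuts B (v i.castSucc) := cuts_mono hlt'.le
      rw [hv, hv, cuts_succ_of_not_mem hiB] at c1
      omega
  apply hv1
  have hinv : StrictMono (v⁻¹ : Perm (Fin (n + 1))) := by
    intro a b hab
    by_contra h
    push_neg at h
    have := hmono.monotone h
    simp only [Perm.inv_def, Equiv.apply_symm_apply] at this
    exact absurd hab (not_lt.mpr this)
  ext x
  have h1 : x ≤ v x := fin_le_apply hmono x
  have h2 : v x ≤ x := by
    have := hmono.monotone (fin_le_apply hinv x)
    simpa using this
  simp only [Perm.one_apply]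
  exact le_antisymm h2 h1

end HRec
open Equiv Equiv.Perm Finset

namespace HRec

variable {n : ℕ}

/-- Permutations increasing at every position of `B`. -/
def IncSet (B : Finset (Fin n)) : Finset (Perm (Fin (n + 1))) :=
  univ.filter (fun σ => ∀ i ∈ B, σ i.castSucc < σ i.succ)

lemma mem_IncSet {B : Finset (Fin n)} {σ : Perm (Fin (n + 1))} :
    σ ∈ IncSet B ↔ ∀ i ∈ B, σ i.castSucc < σ i.succ := by
  simp [IncSet]

lemma sT_val {i : Fin n} (x : Fin (n + 1)) :
    ((sT i x : Fin (n + 1)) : ℕ) =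
      if (x : ℕ) = (i : ℕ) then (i : ℕ) + 1
      else if (x : ℕ) = (i : ℕ) + 1 then (i : ℕ) else (x : ℕ) := by
  by_cases h1 : x = i.castSucc
  · subst h1; rw [sT_apply_castSucc]; simp
  by_cases h2 : x = i.succ
  · subst h2; rw [sT_apply_succ]; simp
  · rw [sT_apply_of_ne h1 h2]
    rw [if_neg, if_neg]
    · intro hc; exact h2 (Fin.ext (by simpa using hc))
    · intro hc; exact h1 (Fin.ext (by simpa using hc))

def badInv (B : Finset (Fin n)) (σ : Perm (Fin (n + 1))) : ℕ :=
  (univ.filter (fun p : Fin (n + 1) × Fin (n + 1) =>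
    p.1 < p.2 ∧ cuts B p.1 = cuts B p.2 ∧ σ p.2 < σ p.1)).card

lemma badInv_lt {B : Finset (Fin n)} {σ : Perm (Fin (n + 1))} {i : Fin n}
    (hi : i ∈ B) (hdes : σ i.succ < σ i.castSucc) :
    badInv B (σ * sT i) < badInv B σ := by
  classical
  set P := (univ.filter (fun p : Fin (n + 1) × Fin (n + 1) =>
    p.1 < p.2 ∧ cuts B p.1 = cuts B p.2 ∧ σ p.2 < σ p.1)) with hP
  set pair₀ : Fin (n + 1) × Fin (n + 1) := (i.castSucc, i.succ) with hpair
  have hpair₀ : pair₀ ∈ P := by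
    simp only [hP, Finset.mem_filter, Finset.mem_univ, true_and, hpair]
    exact ⟨Fin.castSucc_lt_succ (i := i), (cuts_succ_of_mem hi).symm, hdes⟩
  have hsub : badInv B (σ * sT i) ≤ (P.erase pair₀).card := by
    apply Finset.card_le_card_of_injOn (fun p => (sT i p.1, sT i p.2))
    · intro p hp
      replace hp : p ∈ (univ.filter (fun p : Fin (n + 1) × Fin (n + 1) =>
        p.1 < p.2 ∧ cuts B p.1 = cuts B p.2 ∧ (σ * sT i) p.2 < (σ * sT i) p.1)) := hp
      rw [Finset.mem_filter] at hp
      simp only [Finset.mem_univ, true_and, Perm.mul_apply] at hp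
      obtain ⟨hlt, hcuts, hinv⟩ := hp
      have hnepair : ¬((p.1 : ℕ) = (i : ℕ) ∧ (p.2 : ℕ) = (i : ℕ) + 1) := by
        rintro ⟨ha, hb⟩
        have e1 : p.1 = i.castSucc := Fin.ext (by simpa using ha)
        have e2 : p.2 = i.succ := Fin.ext (by simpa using hb)
        rw [e1, e2, sT_apply_castSucc, sT_apply_succ] at hinv
        exact absurd hinv (asymm hdes)
      rw [Finset.mem_coe, Finset.mem_erase]
      constructor
      · -- image ≠ pair₀
        intro hc
        have h1 : sT i p.1 = i.castSucc := congrArg Prod.fst hc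
        have h2 : sT i p.2 = i.succ := congrArg Prod.snd hc
        have e1 : p.1 = i.succ := by
          apply (sT i).injective; rw [h1, sT_apply_succ]
        have e2 : p.2 = i.castSucc := by
          apply (sT i).injective; rw [h2, sT_apply_castSucc]
        rw [e1, e2] at hlt
        exact absurd hlt (asymm (Fin.castSucc_lt_succ (i := i)))
      · simp only [hP, Finset.mem_filter, Finset.mem_univ, true_and]
        refine ⟨?_, ?_, hinv⟩
        · rw [Fin.lt_def, sT_val, sT_val]
          have hlt' : (p.1 : ℕ) < (p.2 : ℕ) := hlt
          split_ifs <;> omega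
        · rw [cuts_sT hi, cuts_sT hi]; exact hcuts
    · intro p _ q _ hpq
      have h1 := congrArg Prod.fst hpq
      have h2 := congrArg Prod.snd hpq
      simp only at h1 h2
      exact Prod.ext ((sT i).injective h1) ((sT i).injective h2)
  calc badInv B (σ * sT i) ≤ (P.erase pair₀).card := hsub
    _ < P.card := Finset.card_erase_lt_of_mem hpair₀

lemma exists_decomp (B : Finset (Fin n)) :
    ∀ N (σ : Perm (Fin (n + 1))), badInv B σ ≤ N →
      ∃ u ∈ IncSet B, ∃ v ∈ Wsub B, σ = u * v := by
  intro N
  induction N with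
  | zero =>
    intro σ h0
    by_cases hσ : σ ∈ IncSet B
    · exact ⟨σ, hσ, 1, one_mem _, (mul_one σ).symm⟩
    · exfalso
      rw [mem_IncSet] at hσ
      push_neg at hσ
      obtain ⟨i, hi, hd⟩ := hσ
      have hne : σ i.castSucc ≠ σ i.succ := fun h =>
        absurd (σ.injective h) (Fin.castSucc_lt_succ (i := i)).ne
      have hdes : σ i.succ < σ i.castSucc := lt_of_le_of_ne hd (fun h => hne h.symm)
      have := badInv_lt hi hdes
      omega
  | succ N ih =>
    intro σ h
    by_cases hσ : σ ∈ IncSet B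
    · exact ⟨σ, hσ, 1, one_mem _, (mul_one σ).symm⟩
    · rw [mem_IncSet] at hσ
      push_neg at hσ
      obtain ⟨i, hi, hd⟩ := hσ
      have hne : σ i.castSucc ≠ σ i.succ := fun h =>
        absurd (σ.injective h) (Fin.castSucc_lt_succ (i := i)).ne
      have hdes : σ i.succ < σ i.castSucc := lt_of_le_of_ne hd (fun h => hne h.symm)
      have hlt := badInv_lt hi hdes
      obtain ⟨u, hu, v, hv, he⟩ := ih (σ * sT i) (by omega)
      refine ⟨u, hu, v * sT i, mul_mem hv (sT_mem_Wsub hi), ?_⟩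
      have hss : sT i * sT i = 1 := by
        rw [sT]; exact Equiv.swap_mul_self _ _
      calc σ = σ * sT i * sT i := by rw [mul_assoc, hss, mul_one]
        _ = u * v * sT i := by rw [he]
        _ = u * (v * sT i) := by rw [mul_assoc]

lemma decomp_unique {B : Finset (Fin n)} {u₁ u₂ v₁ v₂ : Perm (Fin (n + 1))}
    (h₁ : u₁ ∈ IncSet B) (h₂ : u₂ ∈ IncSet B)
    (hv₁ : v₁ ∈ Wsub B) (hv₂ : v₂ ∈ Wsub B) (he : u₁ * v₁ = u₂ * v₂) :
    u₁ = u₂ ∧ v₁ = v₂ := by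
  have hvmem : v₂ * v₁⁻¹ ∈ Wsub B := mul_mem hv₂ (inv_mem hv₁)
  have hu : u₂ * (v₂ * v₁⁻¹) = u₁ := by
    rw [← mul_assoc, ← he, mul_assoc, mul_inv_cancel, mul_one]
  have hv1 : v₂ * v₁⁻¹ = 1 := by
    by_contra hne
    have hvp : ∀ x, cuts B ((v₂ * v₁⁻¹) x) = cuts B x := Wsub_le_presCuts B hvmem
    obtain ⟨i, hiB, hd⟩ := presCuts_descent hvp hne
    set v := v₂ * v₁⁻¹
    have hc1 : cuts B (v i.succ) = cuts B (v i.castSucc) := by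
      rw [hvp, hvp, cuts_succ_of_mem hiB]
    have hmono := inc_strictMono_on (mem_IncSet.mp h₂)
    have : u₂ (v i.succ) < u₂ (v i.castSucc) := hmono _ _ hd hc1
    have hu1 : u₁ i.succ < u₁ i.castSucc := by
      rw [← hu]; exact this
    exact absurd hu1 (asymm (mem_IncSet.mp h₁ i hiB))
  have hveq : v₁ = v₂ := by
    have := hv1
    rw [mul_inv_eq_one] at this
    exact this.symm
  refine ⟨?_, hveq⟩
  have := hu
  rw [hv1, mul_one] at this
  exact this.symm

lemma card_IncSet_mul_card_Wsub (B : Finset (Fin n)) :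
    (IncSet B).card * Nat.card (Wsub B) = (n + 1).factorial := by
  classical
  have hbij : Function.Bijective
      (fun uv : {x // x ∈ IncSet B} × ↥(Wsub B) =>
        (uv.1 : Perm (Fin (n + 1))) * (uv.2 : Perm (Fin (n + 1)))) := by
    constructor
    · rintro ⟨⟨u₁, hu₁⟩, ⟨w₁, hw₁⟩⟩ ⟨⟨u₂, hu₂⟩, ⟨w₂, hw₂⟩⟩ heq
      simp only at heq
      obtain ⟨e1, e2⟩ := decomp_unique hu₁ hu₂ hw₁ hw₂ heq
      simp [Prod.ext_iff, Subtype.ext_iff, e1, e2]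
    · intro σ
      obtain ⟨u, hu, v, hv, he⟩ := exists_decomp B (badInv B σ) σ le_rfl
      exact ⟨⟨⟨u, hu⟩, ⟨v, hv⟩⟩, he.symm⟩
  have hcard := Nat.card_eq_of_bijective _ hbij
  rw [Nat.card_prod] at hcard
  have h1 : Nat.card {x // x ∈ IncSet B} = (IncSet B).card := by
    rw [Nat.card_eq_fintype_card, Fintype.card_coe]
  have h2 : Nat.card (Perm (Fin (n + 1))) = (n + 1).factorial := by
    rw [Nat.card_eq_fintype_card, Fintype.card_perm, Fintype.card_fin]
  rw [h1, h2] at hcard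
  exact hcard

end HRec
open Equiv Equiv.Perm Finset Polynomial

namespace HRec

variable {n : ℕ}

lemma Jset_zero (N : ℕ) : Jset N 0 = ∅ := by
  ext j
  simp only [Jset, Finset.mem_filter, Finset.mem_univ, true_and, Finset.notMem_empty, iff_false]
  have := j.isLt
  omega

lemma noCompIn_empty {N : ℕ} (A : Finset (Fin N)) : noCompIn A ∅ :=
  fun a ha => ⟨a, ha, by simp, Relation.ReflTransGen.refl⟩

lemma Astar_empty {N : ℕ} (A : Finset (Fin N)) : Astar A ∅ = A := by
  rw [Astar]
  simp

lemma hpol_zero_simp (N : ℕ) : hpol N 0 =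
    ∑ A : Finset (Fin N),
      (((N + 1).factorial : ℚ) / (Nat.card ↥(Wsub A) : ℚ)) • (X - 1) ^ A.card := by
  classical
  rw [hpol]
  rw [Finset.filter_true_of_mem (fun A _ => by rw [Jset_zero]; exact noCompIn_empty A)]
  apply Finset.sum_congr rfl
  intro A _
  rw [Jset_zero, Astar_empty]

lemma des_eq_card {σ : Perm (Fin (n + 1))} :
    des σ = (univ.filter (fun i : Fin n => σ i.succ < σ i.castSucc)).card := by
  classical
  rw [des, Nat.card_eq_fintype_card, Fintype.card_subtype]
  apply Finset.card_bij (fun (i : Fin (n + 1)) hi =>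
    (⟨(i : ℕ), by
      simp only [Finset.mem_filter, Finset.mem_univ, true_and] at hi
      obtain ⟨h, -⟩ := hi
      omega⟩ : Fin n))
  · intro i hi
    simp only [Finset.mem_filter, Finset.mem_univ, true_and] at hi ⊢
    obtain ⟨h, hlt⟩ := hi
    exact hlt
  · intro i hi j hj hij
    have h2 := congrArg Fin.val hij
    exact Fin.ext h2
  · intro j hj
    simp only [Finset.mem_filter, Finset.mem_univ, true_and] at hj
    refine ⟨j.castSucc, ?_, ?_⟩
    · simp only [Finset.mem_filter, Finset.mem_univ, true_and]
      exact ⟨by simp only [Fin.coe_castSucc]; omega, hj⟩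
    · exact Fin.ext rfl

def NonDes (σ : Perm (Fin (n + 1))) : Finset (Fin n) :=
  univ.filter (fun i => σ i.castSucc < σ i.succ)

lemma des_mul_rev (σ : Perm (Fin (n + 1))) :
    des (σ * (Fin.revPerm : Perm (Fin (n + 1)))) = (NonDes σ).card := by
  rw [des_eq_card]
  apply Finset.card_bij (fun (i : Fin n) _ => Fin.rev i)
  · intro i hi
    simp only [Finset.mem_filter, Finset.mem_univ, true_and, Perm.mul_apply,
      Fin.revPerm_apply] at hi
    simp only [NonDes, Finset.mem_filter, Finset.mem_univ, true_and]
    have e1 : Fin.rev i.succ = (Fin.rev i).castSucc := by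
      apply Fin.ext
      simp only [Fin.val_rev, Fin.val_succ, Fin.coe_castSucc]
      omega
    have e2 : Fin.rev i.castSucc = (Fin.rev i).succ := by
      apply Fin.ext
      simp only [Fin.val_rev, Fin.val_succ, Fin.coe_castSucc]
      omega
    rw [e1, e2] at hi
    exact hi
  · intro i _ j _ hij
    exact Fin.rev_injective hij
  · intro j hj
    simp only [NonDes, Finset.mem_filter, Finset.mem_univ, true_and] at hj
    refine ⟨Fin.rev j, ?_, Fin.rev_rev j⟩
    simp only [Finset.mem_filter, Finset.mem_univ, true_and, Perm.mul_apply, Fin.revPerm_apply]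
    have e1 : Fin.rev (Fin.rev j).succ = j.castSucc := by
      apply Fin.ext
      simp only [Fin.val_rev, Fin.val_succ, Fin.coe_castSucc]
      omega
    have e2 : Fin.rev (Fin.rev j).castSucc = j.succ := by
      apply Fin.ext
      simp only [Fin.val_rev, Fin.val_succ, Fin.coe_castSucc]
      omega
    rw [e1, e2]
    exact hj

lemma sum_powerset_pow {α : Type*} [DecidableEq α] (s : Finset α) :
    ∑ A ∈ s.powerset, (X - 1 : Polynomial ℚ) ^ A.card = X ^ s.card := by
  induction s using Finset.induction_on with
  | empty => simp
  | @insert a s ha ih =>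
    rw [Finset.powerset_insert, Finset.sum_union, Finset.sum_image, Finset.card_insert_of_notMem ha]
    · have hrw : ∀ A ∈ s.powerset, (X - 1 : Polynomial ℚ) ^ (insert a A).card =
          (X - 1) * (X - 1) ^ A.card := by
        intro A hA
        rw [Finset.mem_powerset] at hA
        rw [Finset.card_insert_of_notMem (fun hc => ha (hA hc)), pow_succ]
        ring
      rw [Finset.sum_congr rfl hrw, ← Finset.mul_sum, ih, pow_succ]
      ring
    · intro A hA B hB hAB
      rw [Finset.mem_coe, Finset.mem_powerset] at hA hB
      have : ∀ x ∈ A, x ∈ B := by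
        intro x hx
        have : x ∈ insert a B := by rw [← hAB]; exact Finset.mem_insert_of_mem hx
        rcases Finset.mem_insert.mp this with rfl | h
        · exact absurd hx (fun hx => ha (hA hx))
        · exact h
      have h2 : ∀ x ∈ B, x ∈ A := by
        intro x hx
        have : x ∈ insert a A := by rw [hAB]; exact Finset.mem_insert_of_mem hx
        rcases Finset.mem_insert.mp this with rfl | h
        · exact absurd hx (fun hx => ha (hB hx))
        · exact h
      exact Finset.Subset.antisymm this h2
    · rw [Finset.disjoint_right]
      intro A hA
      rw [Finset.mem_image] at hA
      obtain ⟨B, hB, rfl⟩ := hA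
      rw [Finset.mem_powerset]
      intro hc
      exact ha (hc (Finset.mem_insert_self a B))

theorem hpol_zero (N : ℕ) : hpol N 0 = Euler (N + 1) := by
  classical
  rw [hpol_zero_simp]
  have coeff : ∀ A : Finset (Fin N),
      ((N + 1).factorial : ℚ) / (Nat.card ↥(Wsub A) : ℚ) = ((IncSet A).card : ℚ) := by
    intro A
    have hK := card_IncSet_mul_card_Wsub A
    have hpos : 0 < Nat.card ↥(Wsub A) := Nat.card_pos
    rw [eq_comm, eq_div_iff (by exact_mod_cast hpos.ne')]
    exact_mod_cast congrArg (fun t : ℕ => (t : ℚ)) hK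
  calc ∑ A : Finset (Fin N), (((N + 1).factorial : ℚ) / (Nat.card ↥(Wsub A) : ℚ)) • (X - 1) ^ A.card
      = ∑ A : Finset (Fin N), ∑ σ ∈ IncSet A, (X - 1) ^ A.card := by
        apply Finset.sum_congr rfl
        intro A _
        rw [coeff A, Finset.sum_const, Nat.cast_smul_eq_nsmul]
    _ = ∑ A : Finset (Fin N), ∑ σ : Perm (Fin (N + 1)),
          if (∀ i ∈ A, σ i.castSucc < σ i.succ) then (X - 1 : Polynomial ℚ) ^ A.card else 0 := by
        apply Finset.sum_congr rfl
        intro A _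
        rw [IncSet, Finset.sum_filter]
    _ = ∑ σ : Perm (Fin (N + 1)), ∑ A : Finset (Fin N),
          if (∀ i ∈ A, σ i.castSucc < σ i.succ) then (X - 1 : Polynomial ℚ) ^ A.card else 0 :=
        Finset.sum_comm
    _ = ∑ σ : Perm (Fin (N + 1)), ∑ A ∈ (NonDes σ).powerset, (X - 1 : Polynomial ℚ) ^ A.card := by
        apply Finset.sum_congr rfl
        intro σ _
        rw [← Finset.sum_filter]
        apply Finset.sum_congr _ (fun _ _ => rfl)
        ext A
        simp only [NonDes, Finset.mem_filter, Finset.mem_univ, true_and,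
          Finset.mem_powerset, Finset.subset_iff]
        try tauto
    _ = ∑ σ : Perm (Fin (N + 1)), (X : Polynomial ℚ) ^ (NonDes σ).card := by
        apply Finset.sum_congr rfl
        intro σ _
        exact sum_powerset_pow _
    _ = ∑ σ : Perm (Fin (N + 1)), (X : Polynomial ℚ) ^ des (σ * (Fin.revPerm : Perm (Fin (N + 1)))) := by
        apply Finset.sum_congr rfl
        intro σ _
        rw [des_mul_rev]
    _ = ∑ σ : Perm (Fin (N + 1)), (X : Polynomial ℚ) ^ des σ := by
        apply Fintype.sum_bijective (fun σ : Perm (Fin (N + 1)) => σ * Fin.revPerm)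
          (Group.mulRight_bijective _)
        intro σ
        rfl
    _ = Euler (N + 1) := rfl

end HRec
open Equiv Equiv.Perm Finset Polynomial

namespace HRec

variable {n : ℕ}

/-- `extendDomain` of a swap is a swap. -/
lemma extendDomain_swap {α β : Type*} [DecidableEq α] [DecidableEq β] {p : β → Prop}
    [DecidablePred p] (f : α ≃ Subtype p) (a b : α) :
    (Equiv.swap a b).extendDomain f = Equiv.swap ((f a : β)) ((f b : β)) := by
  have hinj : Function.Injective (fun y : α => ((f y : β))) := fun y z hyz =>
    f.injective (Subtype.ext hyz)
  ext x
  by_cases hp : p x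
  · rw [Perm.extendDomain_apply_subtype _ f hp]
    set y := f.symm ⟨x, hp⟩ with hy
    have hx : ((f y : β)) = x := by rw [hy]; simp
    rw [← hx]
    exact (hinj.swap_apply a b y).symm
  · rw [Perm.extendDomain_apply_not_subtype _ f hp, swap_apply_of_ne_of_ne]
    · intro hc; rw [hc] at hp; exact hp (f a).2
    · intro hc; rw [hc] at hp; exact hp (f b).2

def winEquiv (o n' : ℕ) (h : o + (n' + 1) ≤ n + 1) :
    Fin (n' + 1) ≃ {x : Fin (n + 1) // o ≤ (x : ℕ) ∧ (x : ℕ) < o + (n' + 1)} where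
  toFun i := ⟨⟨o + (i : ℕ), by have := i.isLt; omega⟩, by constructor <;> simp <;> omega⟩
  invFun x := ⟨(x.1 : ℕ) - o, by obtain ⟨h1, h2⟩ := x.2; omega⟩
  left_inv i := by apply Fin.ext; simp
  right_inv x := by
    apply Subtype.ext; apply Fin.ext
    obtain ⟨h1, h2⟩ := x.2
    simp
    omega

noncomputable def ΨHom (o n' : ℕ) (h : o + (n' + 1) ≤ n + 1) :
    Perm (Fin (n' + 1)) →* Perm (Fin (n + 1)) :=
  extendDomainHom (winEquiv o n' h)

def shiftEmb (o n' : ℕ) (h : o + (n' + 1) ≤ n + 1) : Fin n' ↪ Fin n where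
  toFun i := ⟨o + (i : ℕ), by have := i.isLt; omega⟩
  inj' := by
    intro a b hab
    have := congrArg Fin.val hab
    simp only at this
    exact Fin.ext (by omega)

lemma ΨHom_sT (o n' : ℕ) (h : o + (n' + 1) ≤ n + 1) (i : Fin n') :
    ΨHom o n' h (sT i) = sT (shiftEmb o n' h i) := by
  rw [ΨHom, sT, extendDomainHom_apply, extendDomain_swap, sT]
  congr 1
  all_goals apply Fin.ext
  all_goals simp [winEquiv, shiftEmb]

lemma map_Wsub (o n' : ℕ) (h : o + (n' + 1) ≤ n + 1) (B : Finset (Fin n')) :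
    Subgroup.map (ΨHom o n' h) (Wsub B) = Wsub (B.map (shiftEmb o n' h)) := by
  rw [Wsub, MonoidHom.map_closure, Wsub]
  congr 1
  rw [Finset.coe_map, Set.image_image, Set.image_image]
  apply Set.image_congr
  intro i _
  exact ΨHom_sT o n' h i

lemma card_Wsub_map (o n' : ℕ) (h : o + (n' + 1) ≤ n + 1) (B : Finset (Fin n')) :
    Nat.card (Wsub (B.map (shiftEmb o n' h))) = Nat.card (Wsub B) := by
  rw [← map_Wsub]
  exact (Nat.card_congr
    (Subgroup.equivMapOfInjective _ _ (extendDomainHom_injective _)).toEquiv).symm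

lemma Wsub_univ_top : Wsub (univ : Finset (Fin n)) = ⊤ := by
  rw [eq_top_iff]
  intro x _
  have hm := Equiv.Perm.mclosure_swap_castSucc_succ n
  have hx : x ∈ Submonoid.closure (Set.range fun i : Fin n => Equiv.swap i.castSucc i.succ) := by
    rw [hm]; trivial
  refine Submonoid.closure_le.mpr ?_ hx
  intro y hy
  apply Subgroup.subset_closure
  obtain ⟨i, rfl⟩ := hy
  exact ⟨i, by simp, rfl⟩

lemma card_Wsub_univ : Nat.card (Wsub (univ : Finset (Fin n))) = (n + 1).factorial := by
  rw [Wsub_univ_top]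
  rw [Subgroup.card_top, Nat.card_eq_fintype_card, Fintype.card_perm, Fintype.card_fin]

lemma card_Wsub_empty : Nat.card (Wsub (∅ : Finset (Fin n))) = 1 := by
  rw [Wsub]
  simp only [Finset.coe_empty, Set.image_empty, Subgroup.closure_empty]
  exact Subgroup.card_bot

/-- interval of indices `[a, b]` (as naturals). -/
def Iv (n a b : ℕ) : Finset (Fin n) := univ.filter (fun j => a ≤ (j : ℕ) ∧ (j : ℕ) ≤ b)

/-- tail of indices `[t, n-1]`. -/
def Tl (n t : ℕ) : Finset (Fin n) := univ.filter (fun j => t ≤ (j : ℕ))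

lemma Iv_eq_map (a b : ℕ) (hab : a ≤ b + 1) (hb : b + 1 ≤ n) :
    Iv n a b = (univ : Finset (Fin (b + 1 - a))).map (shiftEmb a (b + 1 - a) (by omega)) := by
  ext j
  simp only [Iv, Finset.mem_filter, Finset.mem_univ, true_and, Finset.mem_map, shiftEmb,
    Function.Embedding.coeFn_mk]
  constructor
  · rintro ⟨h1, h2⟩
    refine ⟨⟨(j : ℕ) - a, by omega⟩, ?_⟩
    apply Fin.ext
    simp [DFunLike.coe]
    omega
  · rintro ⟨i, rfl⟩
    have := i.isLt
    constructor <;> simp [DFunLike.coe] <;> omega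

lemma card_Wsub_Iv (a b : ℕ) (hab : a ≤ b + 1) (hb : b + 1 ≤ n) :
    Nat.card (Wsub (Iv n a b)) = (b + 2 - a).factorial := by
  rw [Iv_eq_map a b hab hb, card_Wsub_map, card_Wsub_univ]
  congr 1
  omega

lemma Tl_eq_Iv (t : ℕ) : Tl n t = Iv n t (n - 1) := by
  ext j
  have := j.isLt
  simp only [Tl, Iv, Finset.mem_filter, Finset.mem_univ, true_and]
  omega

lemma Tl_empty_of (t : ℕ) (ht : n ≤ t) : Tl n t = ∅ := by
  ext j
  have := j.isLt
  simp only [Tl, Finset.mem_filter, Finset.mem_univ, true_and, Finset.notMem_empty, iff_false]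
  omega

lemma card_Wsub_Tl (t : ℕ) (hn : 1 ≤ n) (ht : t ≤ n + 1) :
    Nat.card (Wsub (Tl n t)) = (n + 1 - t).factorial := by
  by_cases h : t ≤ n - 1
  · rw [Tl_eq_Iv, card_Wsub_Iv t (n - 1) (by omega) (by omega)]
    congr 1
    omega
  · rw [Tl_empty_of t (by omega), card_Wsub_empty]
    have : n + 1 - t ≤ 1 := by omega
    interval_cases h2 : (n + 1 - t) <;> simp

/-- support of the generators indexed by `B`. -/
def suppT (B : Finset (Fin n)) : Set (Fin (n + 1)) :=
  {x | ∃ i ∈ B, (x : ℕ) = (i : ℕ) ∨ (x : ℕ) = (i : ℕ) + 1}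

def fixOut (T : Set (Fin (n + 1))) : Subgroup (Perm (Fin (n + 1))) where
  carrier := {v | ∀ x, x ∉ T → v x = x}
  mul_mem' := by
    intro v w hv hw x hx
    rw [Perm.mul_apply, hw x hx, hv x hx]
  one_mem' := by intro x _; rfl
  inv_mem' := by
    intro v hv x hx
    have := hv x hx
    conv_lhs => rw [← this]
    rw [(Perm.inv_eq_iff_eq.mpr rfl : v⁻¹ (v x) = x)]

lemma Wsub_le_fixOut (B : Finset (Fin n)) : Wsub B ≤ fixOut (suppT B) := by
  rw [Wsub, Subgroup.closure_le]
  rintro _ ⟨i, hi, rfl⟩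
  intro x hx
  apply sT_apply_of_ne
  · intro hc
    exact hx ⟨i, by simpa using hi, Or.inl (by rw [hc]; simp)⟩
  · intro hc
    exact hx ⟨i, by simpa using hi, Or.inr (by rw [hc]; simp)⟩

lemma card_Wsub_union (B₁ B₂ : Finset (Fin n))
    (hsep : ∀ i ∈ B₁, ∀ j ∈ B₂, (i : ℕ) + 2 ≤ (j : ℕ)) :
    Nat.card (Wsub (B₁ ∪ B₂)) = Nat.card (Wsub B₁) * Nat.card (Wsub B₂) := by
  classical
  have hdisj : ∀ x : Fin (n + 1), x ∈ suppT B₁ → x ∉ suppT B₂ := by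
    rintro x ⟨i, hi, hxi⟩ ⟨j, hj, hxj⟩
    have := hsep i hi j hj
    omega
  have hcomm : ∀ (v : (Wsub B₁)) (w : (Wsub B₂)),
      Commute ((Wsub B₁).subtype v) ((Wsub B₂).subtype w) := by
    intro v w
    apply Equiv.Perm.Disjoint.commute
    intro x
    by_cases hx : x ∈ suppT B₁
    · exact Or.inr (Wsub_le_fixOut B₂ w.2 x (hdisj x hx))
    · exact Or.inl (Wsub_le_fixOut B₁ v.2 x hx)
  set f := MonoidHom.noncommCoprod ((Wsub B₁).subtype) ((Wsub B₂).subtype) hcomm with hf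
  have hinj : Function.Injective f := by
    rw [injective_iff_map_eq_one]
    rintro ⟨v, w⟩ hvw
    have hmul : (v : Perm (Fin (n + 1))) * (w : Perm (Fin (n + 1))) = 1 := hvw
    have hv1 : (v : Perm (Fin (n + 1))) = 1 := by
      ext x
      by_cases hx : x ∈ suppT B₁
      · have hw : (w : Perm (Fin (n + 1))) x = x := by
          by_contra hc
          exact hc (Wsub_le_fixOut B₂ w.2 x (hdisj x hx))
        have : (v : Perm (Fin (n + 1))) x = ((v : Perm (Fin (n + 1))) *
            (w : Perm (Fin (n + 1)))) x := by rw [Perm.mul_apply, hw]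
        rw [this, hmul]
        try rfl
      · rw [Wsub_le_fixOut B₁ v.2 x hx]
        try rfl
    have hw1 : (w : Perm (Fin (n + 1))) = 1 := by
      rw [hv1, one_mul] at hmul
      exact hmul
    have : v = 1 := Subtype.ext hv1
    have hw2 : w = 1 := Subtype.ext hw1
    rw [this, hw2]
    rfl
  have hrange : f.range = Wsub (B₁ ∪ B₂) := by
    apply le_antisymm
    · rintro x ⟨⟨v, w⟩, rfl⟩
      have h1 : Wsub B₁ ≤ Wsub (B₁ ∪ B₂) := by
        apply Subgroup.closure_mono
        apply Set.image_mono
        simp only [Finset.coe_union]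
        exact Set.subset_union_left
      have h2 : Wsub B₂ ≤ Wsub (B₁ ∪ B₂) := by
        apply Subgroup.closure_mono
        apply Set.image_mono
        simp only [Finset.coe_union]
        exact Set.subset_union_right
      exact mul_mem (h1 v.2) (h2 w.2)
    · rw [Wsub, Subgroup.closure_le]
      rintro _ ⟨i, hi, rfl⟩
      simp only [Finset.coe_union, Set.mem_union, Finset.mem_coe] at hi
      rcases hi with hi | hi
      · refine ⟨(⟨sT i, sT_mem_Wsub hi⟩, 1), ?_⟩
        simp [hf, MonoidHom.noncommCoprod]
      · refine ⟨(1, ⟨sT i, sT_mem_Wsub hi⟩), ?_⟩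
        simp [hf, MonoidHom.noncommCoprod]
  calc Nat.card (Wsub (B₁ ∪ B₂)) = Nat.card f.range := by rw [hrange]
    _ = Nat.card ((Wsub B₁) × (Wsub B₂)) :=
        (Nat.card_congr (MonoidHom.ofInjective hinj).toEquiv).symm
    _ = Nat.card (Wsub B₁) * Nat.card (Wsub B₂) := Nat.card_prod _ _

end HRec
open Equiv Equiv.Perm Finset Polynomial

namespace HRec

variable {n : ℕ}

/-- `{s_j : j + 2 ≤ m}`, the generators strictly left of the window. -/
def LowS (n m : ℕ) : Finset (Fin n) := univ.filter (fun j => (j : ℕ) + 2 ≤ m)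

lemma mem_Iv {a b : ℕ} {j : Fin n} : j ∈ Iv n a b ↔ a ≤ (j : ℕ) ∧ (j : ℕ) ≤ b := by
  simp [Iv]

lemma mem_Tl {t : ℕ} {j : Fin n} : j ∈ Tl n t ↔ t ≤ (j : ℕ) := by simp [Tl]

lemma mem_LowS {m : ℕ} {j : Fin n} : j ∈ LowS n m ↔ (j : ℕ) + 2 ≤ m := by simp [LowS]

lemma card_Iv (a b : ℕ) (hab : a ≤ b + 1) (hb : b + 1 ≤ n) : (Iv n a b).card = b + 1 - a := by
  rw [Iv_eq_map a b hab hb, Finset.card_map, Finset.card_univ, Fintype.card_fin]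

lemma commute_sT_far {i j : Fin n} (h : (i : ℕ) + 2 ≤ (j : ℕ) ∨ (j : ℕ) + 2 ≤ (i : ℕ)) :
    Commute (sT i) (sT j) := by
  apply Equiv.Perm.Disjoint.commute
  intro x
  by_cases hx : (x : ℕ) = (i : ℕ) ∨ (x : ℕ) = (i : ℕ) + 1
  · right
    apply sT_apply_of_ne
    · intro hc; have := congrArg Fin.val hc; simp at this; omega
    · intro hc; have := congrArg Fin.val hc; simp at this; omega
  · left
    push_neg at hx
    apply sT_apply_of_ne
    · intro hc; have := congrArg Fin.val hc; simp at this; omega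
    · intro hc; have := congrArg Fin.val hc; simp at this; omega

lemma commute_sT_self (i : Fin n) : Commute (sT i) (sT i) := Commute.refl _

lemma not_commute_sT_succ {i j : Fin n} (h : (i : ℕ) + 1 = (j : ℕ)) :
    ¬ Commute (sT i) (sT j) := by
  intro hcom
  have hiv := i.isLt
  have hjv := j.isLt
  set x₀ : Fin (n + 1) := i.castSucc with hx₀
  have h1 : sT j x₀ = x₀ := by
    apply sT_apply_of_ne
    · intro hc; have := congrArg Fin.val hc; simp [hx₀] at this; omega
    · intro hc; have := congrArg Fin.val hc; simp [hx₀] at this; omega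
  have h2 : sT i x₀ = i.succ := sT_apply_castSucc
  have h3 : i.succ = j.castSucc := Fin.ext (by simp; omega)
  have h4 : sT j i.succ = j.succ := by rw [h3]; exact sT_apply_castSucc
  have heval := congrArg (fun p : Perm (Fin (n + 1)) => p x₀) hcom
  simp only [Perm.mul_apply] at heval
  rw [h1, h2, h4] at heval
  have := congrArg Fin.val heval
  simp at this
  omega

lemma not_commute_sT_adj {i j : Fin n} (h : (i : ℕ) + 1 = (j : ℕ) ∨ (j : ℕ) + 1 = (i : ℕ)) :
    ¬ Commute (sT i) (sT j) := by
  rcases h with h | h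
  · exact not_commute_sT_succ h
  · intro hc
    exact not_commute_sT_succ h hc.symm

/-- everything between the endpoints of a path in `A` lies in `A`. -/
lemma sameComp_between {A : Finset (Fin n)} {a b : Fin n} (h : sameComp A a b) (ha : a ∈ A) :
    ∀ c : Fin n, (((a : ℕ) ≤ c ∧ (c : ℕ) ≤ b) ∨ ((b : ℕ) ≤ c ∧ (c : ℕ) ≤ a)) → c ∈ A := by
  induction h with
  | refl =>
    intro c hc
    have : c = a := Fin.ext (by omega)
    rwa [this]
  | @tail b' b hab hstep ih =>
    obtain ⟨hb'A, hbA, hadj⟩ := hstep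
    intro c hc
    by_cases hcb : (c : ℕ) = (b : ℕ)
    · have : c = b := Fin.ext hcb
      rwa [this]
    · apply ih
      omega

/-- walking down an interval contained in `A`. -/
lemma sameComp_down {A : Finset (Fin n)} :
    ∀ d (x y : Fin n), (x : ℕ) = (y : ℕ) + d →
      (∀ c : Fin n, (y : ℕ) ≤ (c : ℕ) → (c : ℕ) ≤ (x : ℕ) → c ∈ A) → sameComp A x y := by
  intro d
  induction d with
  | zero =>
    intro x y h _
    have hxy : x = y := Fin.ext (by omega)
    rw [hxy]
    exact Relation.ReflTransGen.refl
  | succ d ih =>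
    intro x y h hsub
    have hxpos : 1 ≤ (x : ℕ) := by omega
    set x' : Fin n := ⟨(x : ℕ) - 1, by have := x.isLt; omega⟩ with hx'
    have hx'v : (x' : ℕ) = (x : ℕ) - 1 := rfl
    apply Relation.ReflTransGen.head (b := x')
    · exact ⟨hsub x (by omega) le_rfl, hsub x' (by omega) (by omega), Or.inr (by omega)⟩
    · apply ih x' y (by omega)
      intro c hc1 hc2
      exact hsub c hc1 (by omega)

lemma noCompIn_of_low {m : ℕ} {A : Finset (Fin n)} (hA : A ⊆ LowS n m) (t : ℕ) (ht : m ≤ t) :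
    noCompIn A (Tl n t) := by
  intro a ha
  refine ⟨a, ha, ?_, Relation.ReflTransGen.refl⟩
  rw [mem_Tl]
  have := mem_LowS.mp (hA ha)
  omega

/-- the `Astar` of a low set w.r.t. a tail is the union. -/
lemma Astar_low {m : ℕ} {A : Finset (Fin n)} (hA : A ⊆ LowS n m) (t : ℕ) (ht : m ≤ t) :
    Astar A (Tl n t) = A ∪ Tl n t := by
  classical
  rw [Astar]
  congr 1
  apply Finset.filter_true_of_mem
  intro j hj
  intro a ha
  apply commute_sT_far
  right
  have := mem_LowS.mp (hA ha)
  have := mem_Tl.mp hj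
  omega

lemma card_Wsub_union_low {m : ℕ} {A : Finset (Fin n)} (hA : A ⊆ LowS n m) {B : Finset (Fin n)}
    (hB : ∀ j ∈ B, m ≤ (j : ℕ)) :
    Nat.card (Wsub (A ∪ B)) = Nat.card (Wsub A) * Nat.card (Wsub B) := by
  apply card_Wsub_union
  intro i hi j hj
  have := mem_LowS.mp (hA hi)
  have := hB j hj
  omega

/-- Astar of a `low ∪ interval` set with respect to the tail `J(k-1)`. -/
lemma Astar_term2 {m e : ℕ} {A' : Finset (Fin n)} (hA' : A' ⊆ LowS n m)
    (hme : m ≤ e) (hen : e ≤ n - 1) (hn : 1 ≤ n) :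
    Astar (A' ∪ Iv n m e) (Tl n (m + 1)) = (A' ∪ Iv n m e) ∪ Tl n (e + 2) := by
  classical
  rw [Astar]
  congr 1
  ext j
  rw [Finset.mem_filter, mem_Tl, mem_Tl]
  constructor
  · rintro ⟨hj, hcond⟩
    by_contra hje
    push_neg at hje
    -- j ≤ e + 1 and j ≥ m + 1 : j is adjacent to an element of Iv n m e
    have hjlt := j.isLt
    set a : Fin n := ⟨(j : ℕ) - 1, by omega⟩ with ha
    have hav : (a : ℕ) = (j : ℕ) - 1 := rfl
    have haIv : a ∈ A' ∪ Iv n m e := by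
      apply Finset.mem_union_right
      rw [mem_Iv]
      omega
    have := hcond a haIv
    exact not_commute_sT_adj (Or.inl (by omega)) this.symm
  · intro hj
    have hjlt := j.isLt
    refine ⟨by omega, ?_⟩
    intro a haA
    rcases Finset.mem_union.mp haA with ha | ha
    · apply commute_sT_far
      right
      have := mem_LowS.mp (hA' ha)
      omega
    · apply commute_sT_far
      right
      have := mem_Iv.mp ha
      omega

lemma card_Wsub_term2 {m e : ℕ} {A' : Finset (Fin n)} (hA' : A' ⊆ LowS n m)
    (hme : m ≤ e) (hen : e ≤ n - 1) (hn : 1 ≤ n) :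
    Nat.card (Wsub ((A' ∪ Iv n m e) ∪ Tl n (e + 2)))
      = Nat.card (Wsub A') * (e + 2 - m).factorial * (n - e - 1).factorial := by
  have h1 : Nat.card (Wsub ((A' ∪ Iv n m e) ∪ Tl n (e + 2)))
      = Nat.card (Wsub (A' ∪ Iv n m e)) * Nat.card (Wsub (Tl n (e + 2))) := by
    apply card_Wsub_union
    intro i hi j hj
    rw [mem_Tl] at hj
    rcases Finset.mem_union.mp hi with h | h
    · have := mem_LowS.mp (hA' h); omega
    · have := mem_Iv.mp h; omega
  have h2 : Nat.card (Wsub (A' ∪ Iv n m e)) = Nat.card (Wsub A') * Nat.card (Wsub (Iv n m e)) :=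
    card_Wsub_union_low hA' (fun j hj => (mem_Iv.mp hj).1)
  have h3 : Nat.card (Wsub (Iv n m e)) = (e + 2 - m).factorial :=
    card_Wsub_Iv m e (by omega) (by omega)
  have h4 : Nat.card (Wsub (Tl n (e + 2))) = (n - e - 1).factorial := by
    rw [card_Wsub_Tl (e + 2) hn (by omega)]
    congr 1
    omega
  rw [h1, h2, h3, h4]

end HRec
open Equiv Equiv.Perm Finset Polynomial

namespace HRec

variable {n : ℕ}

lemma eulerLow (m : ℕ) (hmn : m ≤ n) :
    ∑ A ∈ (LowS n m).powerset,
      ((m.factorial : ℚ) / (Nat.card ↥(Wsub A) : ℚ)) • ((X : Polynomial ℚ) - 1) ^ A.card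
      = Euler m := by
  classical
  rcases Nat.eq_zero_or_pos m with rfl | hm
  · have hL : LowS n 0 = ∅ := by ext j; simp [LowS]
    rw [hL, Finset.powerset_empty, Finset.sum_singleton, Finset.card_empty, card_Wsub_empty]
    have hE : Euler 0 = 1 := by
      rw [Euler]
      have h1 : ∀ σ : Perm (Fin 0), (X : Polynomial ℚ) ^ des σ = 1 := by
        intro σ
        have hd : des σ = 0 := by rw [des]; exact Nat.card_of_isEmpty
        rw [hd, pow_zero]
      rw [Finset.sum_congr rfl (fun σ _ => h1 σ), Finset.sum_const]
      have hcard : Fintype.card (Perm (Fin 0)) = 1 := by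
        rw [Fintype.card_perm]; simp
      rw [Finset.card_univ, hcard, one_smul]
    rw [hE]
    norm_num
  · obtain ⟨m', rfl⟩ : ∃ m', m = m' + 1 := ⟨m - 1, by omega⟩
    rw [show Euler (m' + 1) = hpol m' 0 from (hpol_zero m').symm, hpol_zero_simp m']
    have hle : 0 + (m' + 1) ≤ n + 1 := by omega
    set emb := shiftEmb 0 m' hle with hemb
    have hval : ∀ a : Fin m', ((emb a : Fin n) : ℕ) = (a : ℕ) := by
      intro a; simp [hemb, shiftEmb]
    apply Finset.sum_nbij' (i := fun A => A.preimage emb (emb.injective.injOn))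
      (j := fun A' => A'.map emb)
    · intro A _; exact Finset.mem_univ _
    · intro A' _
      rw [Finset.mem_powerset]
      intro x hx
      rw [Finset.mem_map] at hx
      obtain ⟨a, _, rfl⟩ := hx
      rw [mem_LowS, hval]
      have := a.isLt
      omega
    · intro A hA
      rw [Finset.mem_powerset] at hA
      ext x
      rw [Finset.mem_map]
      constructor
      · rintro ⟨a, ha, rfl⟩
        rw [Finset.mem_preimage] at ha
        exact ha
      · intro hx
        have hxm : (x : ℕ) < m' := by
          have := mem_LowS.mp (hA hx)
          omega
        refine ⟨⟨(x : ℕ), hxm⟩, ?_, ?_⟩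
        · rw [Finset.mem_preimage]
          have : emb ⟨(x : ℕ), hxm⟩ = x := Fin.ext (by rw [hval])
          rwa [this]
        · exact Fin.ext (by rw [hval])
    · intro A' _
      ext a
      rw [Finset.mem_preimage, Finset.mem_map']
    · intro A hA
      have hrw : A = (A.preimage emb (emb.injective.injOn)).map emb := by
        rw [Finset.mem_powerset] at hA
        ext x
        rw [Finset.mem_map]
        constructor
        · intro hx
          have hxm : (x : ℕ) < m' := by
            have := mem_LowS.mp (hA hx)
            omega
          refine ⟨⟨(x : ℕ), hxm⟩, ?_, ?_⟩
          · rw [Finset.mem_preimage]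
            have : emb ⟨(x : ℕ), hxm⟩ = x := Fin.ext (by rw [hval])
            rwa [this]
          · exact Fin.ext (by rw [hval])
        · rintro ⟨a, ha, rfl⟩
          rw [Finset.mem_preimage] at ha
          exact ha
      conv_lhs => rw [hrw]
      rw [card_Wsub_map, Finset.card_map]

lemma low_of_commute_m {m : ℕ} {mF : Fin n} (hv : (mF : ℕ) = m) {A : Finset (Fin n)}
    (hA : noCompIn A (Tl n m)) (hmA : mF ∉ A)
    (hcond : ∀ a ∈ A, Commute (sT mF) (sT a)) :
    A ⊆ LowS n m := by
  intro a ha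
  rw [mem_LowS]
  obtain ⟨b, hbA, hbJ, hsc⟩ := hA a ha
  rw [mem_Tl] at hbJ
  push_neg at hbJ
  have hfact : ∀ x ∈ A, (x : ℕ) ≠ m ∧ (x : ℕ) + 1 ≠ m ∧ (x : ℕ) ≠ m + 1 := by
    intro x hx
    refine ⟨?_, ?_, ?_⟩
    · intro hc
      exact hmA (by rwa [show mF = x from Fin.ext (by omega)])
    · intro hc
      exact not_commute_sT_adj (i := x) (j := mF) (Or.inl (by omega)) ((hcond x hx).symm)
    · intro hc
      exact not_commute_sT_adj (i := mF) (j := x) (Or.inl (by omega)) (hcond x hx)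
  obtain ⟨h1, h2, h3⟩ := hfact a ha
  by_contra hlow
  push_neg at hlow
  have ham : m + 2 ≤ (a : ℕ) := by omega
  exact hmA (sameComp_between hsc ha mF (Or.inr ⟨by omega, by omega⟩))

lemma str_decomp {m : ℕ} (hmn : m < n) {A : Finset (Fin n)}
    (h1 : noCompIn A (Tl n (m + 1))) (h0 : ¬ noCompIn A (Tl n m)) :
    A.filter (fun x : Fin n => (x : ℕ) + 2 ≤ m) ⊆ LowS n m ∧
    m ≤ (A.filter (fun x : Fin n => m ≤ (x : ℕ))).sup (fun x : Fin n => (x : ℕ)) ∧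
    (A.filter (fun x : Fin n => m ≤ (x : ℕ))).sup (fun x : Fin n => (x : ℕ)) ≤ n - 1 ∧
    A = A.filter (fun x : Fin n => (x : ℕ) + 2 ≤ m) ∪
        Iv n m ((A.filter (fun x : Fin n => m ≤ (x : ℕ))).sup (fun x : Fin n => (x : ℕ))) := by
  classical
  set mF : Fin n := ⟨m, hmn⟩ with hmF
  have hmFv : (mF : ℕ) = m := rfl
  rw [noCompIn] at h0
  push_neg at h0
  obtain ⟨a, haA, hcomp⟩ := h0
  obtain ⟨b₀, hb₀A, hb₀J, hsc₀⟩ := h1 a haA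
  rw [mem_Tl] at hb₀J
  push_neg at hb₀J
  have hb₀m : (b₀ : ℕ) = m := by
    by_contra hc
    exact hcomp b₀ hb₀A (by rw [mem_Tl]; omega) hsc₀
  have hb₀F : b₀ = mF := Fin.ext (by omega)
  have hmFA : mF ∈ A := by rwa [hb₀F] at hb₀A
  have hscm : sameComp A a mF := by rwa [hb₀F] at hsc₀
  have hclaim1 : ∀ x ∈ A, (x : ℕ) + 1 ≠ m := by
    intro x hx hc
    have hrel : sameComp A a x :=
      Relation.ReflTransGen.tail hscm ⟨hmFA, hx, Or.inr (by omega)⟩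
    exact hcomp x hx (by rw [mem_Tl]; omega) hrel
  have hclaim2 : ∀ x ∈ A, m ≤ (x : ℕ) → ∀ c : Fin n, m ≤ (c : ℕ) → (c : ℕ) ≤ (x : ℕ) → c ∈ A := by
    intro x hx hmx c hc1 hc2
    obtain ⟨b, hbA, hbJ, hscx⟩ := h1 x hx
    rw [mem_Tl] at hbJ
    push_neg at hbJ
    have hbm : (b : ℕ) = m := by
      by_contra hcb
      have hblt : (b : ℕ) < m := by omega
      set c' : Fin n := ⟨m - 1, by omega⟩ with hc'
      have hc'v : (c' : ℕ) = m - 1 := rfl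
      have hmem : c' ∈ A := sameComp_between hscx hx c' (Or.inr ⟨by omega, by omega⟩)
      exact hclaim1 _ hmem (by omega)
    exact sameComp_between hscx hx c (Or.inr ⟨by omega, by omega⟩)
  set e := (A.filter (fun x : Fin n => m ≤ (x : ℕ))).sup (fun x : Fin n => (x : ℕ)) with he
  have hmemfil : mF ∈ A.filter (fun x : Fin n => m ≤ (x : ℕ)) := by
    rw [Finset.mem_filter]
    exact ⟨hmFA, le_of_eq hmFv.symm⟩
  have hme : m ≤ e :=
    le_trans (le_of_eq hmFv.symm) (Finset.le_sup (f := fun x : Fin n => (x : ℕ)) hmemfil)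
  have hen : e ≤ n - 1 := Finset.sup_le (fun x _ => by have := x.isLt; omega)
  have hfil : A.filter (fun x : Fin n => m ≤ (x : ℕ)) = Iv n m e := by
    ext j
    rw [Finset.mem_filter, mem_Iv]
    constructor
    · rintro ⟨hj, hmj⟩
      exact ⟨hmj, Finset.le_sup (f := fun x : Fin n => (x : ℕ))
        (Finset.mem_filter.mpr ⟨hj, hmj⟩)⟩
    · rintro ⟨hmj, hje⟩
      obtain ⟨xm, hxm, hxe⟩ := Finset.exists_mem_eq_sup
        (A.filter (fun x : Fin n => m ≤ (x : ℕ))) ⟨_, hmemfil⟩ (fun x : Fin n => (x : ℕ))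
      rw [Finset.mem_filter] at hxm
      rw [← he] at hxe
      refine ⟨hclaim2 xm hxm.1 hxm.2 j hmj (by omega), hmj⟩
  refine ⟨fun x hx => mem_LowS.mpr (Finset.mem_filter.mp hx).2, hme, hen, ?_⟩
  rw [← hfil]
  ext x
  rw [Finset.mem_union, Finset.mem_filter, Finset.mem_filter]
  constructor
  · intro hx
    rcases le_or_gt m (x : ℕ) with h | h
    · exact Or.inr ⟨hx, h⟩
    · refine Or.inl ⟨hx, ?_⟩
      have := hclaim1 x hx
      omega
  · rintro (⟨h, _⟩ | ⟨h, _⟩) <;> exact h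

lemma mem_S1_diff {m e : ℕ} (hmn : m < n) {A' : Finset (Fin n)}
    (hA' : A' ⊆ LowS n m) (hme : m ≤ e) (hen : e ≤ n - 1) :
    noCompIn (A' ∪ Iv n m e) (Tl n (m + 1)) ∧ ¬ noCompIn (A' ∪ Iv n m e) (Tl n m) := by
  set mF : Fin n := ⟨m, hmn⟩ with hmF
  have hmFv : (mF : ℕ) = m := rfl
  have hmFmem : mF ∈ A' ∪ Iv n m e :=
    Finset.mem_union_right _ (mem_Iv.mpr ⟨by omega, by omega⟩)
  constructor
  · intro a ha
    rcases Finset.mem_union.mp ha with h | h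
    · refine ⟨a, ha, ?_, Relation.ReflTransGen.refl⟩
      rw [mem_Tl]
      have := mem_LowS.mp (hA' h)
      omega
    · refine ⟨mF, hmFmem, by rw [mem_Tl]; omega, ?_⟩
      have haIv := mem_Iv.mp h
      apply sameComp_down ((a : ℕ) - m) a mF (by omega)
      intro c hc1 hc2
      exact Finset.mem_union_right _ (mem_Iv.mpr ⟨by omega, by omega⟩)
  · intro hcon
    obtain ⟨b, hbA, hbJ, hsc⟩ := hcon _ hmFmem
    rw [mem_Tl] at hbJ
    push_neg at hbJ
    have hm1 : 1 ≤ m := by omega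
    set c' : Fin n := ⟨m - 1, by omega⟩ with hc'
    have hc'v : (c' : ℕ) = m - 1 := rfl
    have hcmem : c' ∈ A' ∪ Iv n m e :=
      sameComp_between hsc hmFmem c' (Or.inr ⟨by omega, by omega⟩)
    rcases Finset.mem_union.mp hcmem with h | h
    · have := mem_LowS.mp (hA' h)
      omega
    · have := mem_Iv.mp h
      omega

lemma Jset_eq_Tl (k : ℕ) : Jset n k = Tl n (n - k) := rfl

lemma Jset_pred {k : ℕ} (hk1 : 1 ≤ k) (hkn : k ≤ n) : Jset n (k - 1) = Tl n (n - k + 1) := by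
  unfold Jset Tl
  apply Finset.filter_congr
  intro j _
  first
  | omega
  | (simp only [eq_iff_iff]; omega)

lemma Tl_insert {m : ℕ} (hmn : m < n) : Tl n m = insert (⟨m, hmn⟩ : Fin n) (Tl n (m + 1)) := by
  set mF : Fin n := ⟨m, hmn⟩ with hmF
  have hmFv : (mF : ℕ) = m := rfl
  ext j
  rw [mem_Tl, Finset.mem_insert, mem_Tl]
  constructor
  · intro h
    rcases eq_or_lt_of_le h with h' | h'
    · exact Or.inl (Fin.ext (by omega))
    · exact Or.inr (by omega)
  · rintro (rfl | h) <;> omega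

end HRec
open Equiv Equiv.Perm Finset Polynomial

namespace HRec

lemma rat_key (k : ℕ) (y : ℚ) :
    ∑ j ∈ Finset.range (k + 2), ((k + 1).choose j : ℚ) * y ^ j = (y + 1) ^ (k + 1) := by
  have hp := add_pow y 1 (k + 1)
  rw [hp]
  apply Finset.sum_congr rfl
  intro j _
  rw [one_pow]
  ring

lemma rat_key2 (k : ℕ) (y : ℚ) :
    ∑ j ∈ Finset.range (k + 2), ((k + 1).choose j : ℚ) * y ^ j
      = 1 + (k + 1) * y + ∑ i ∈ Finset.Icc 1 k, ((k + 1).choose (i + 1) : ℚ) * y ^ (i + 1) := by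
  rw [Finset.sum_range_succ' _ (k + 1), Finset.sum_range_succ' _ k]
  have hre : ∑ i ∈ Finset.Icc 1 k, ((k + 1).choose (i + 1) : ℚ) * y ^ (i + 1)
      = ∑ i ∈ Finset.range k, ((k + 1).choose (i + 1 + 1) : ℚ) * y ^ (i + 1 + 1) := by
    apply Finset.sum_nbij' (i := fun i => i - 1) (j := fun i => i + 1)
    · intro a ha; rw [Finset.mem_Icc] at ha; rw [Finset.mem_range]; omega
    · intro a ha; rw [Finset.mem_range] at ha; rw [Finset.mem_Icc]; omega
    · intro a ha; rw [Finset.mem_Icc] at ha; omega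
    · intro a ha; omega
    · intro a ha
      rw [Finset.mem_Icc] at ha
      have h1 : a - 1 + 1 = a := by omega
      rw [h1]
  rw [hre]
  simp [Nat.choose]
  ring

lemma rat_id (k : ℕ) (hk1 : 1 ≤ k) (x : ℚ) :
    (k : ℚ) + ∑ i ∈ Finset.Icc 1 k, ((k + 1).choose (i + 1) : ℚ) * (x - 1) ^ i
      = ∑ i ∈ Finset.Icc 1 k, x ^ i := by
  by_cases hx : x = 1
  · subst hx
    have h1 : ∀ i ∈ Finset.Icc 1 k, ((k + 1).choose (i + 1) : ℚ) * ((1 : ℚ) - 1) ^ i = 0 := by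
      intro i hi
      rw [Finset.mem_Icc] at hi
      rw [sub_self, zero_pow (by omega), mul_zero]
    rw [Finset.sum_congr rfl h1, Finset.sum_const_zero, add_zero]
    have h2 : ∀ i ∈ Finset.Icc 1 k, (1 : ℚ) ^ i = 1 := fun i _ => one_pow i
    rw [Finset.sum_congr rfl h2, Finset.sum_const, Nat.card_Icc]
    simp
  · have hx1 : x - 1 ≠ 0 := sub_ne_zero.mpr hx
    apply mul_right_cancel₀ hx1
    have hmulL : ((k : ℚ) + ∑ i ∈ Finset.Icc 1 k, ((k + 1).choose (i + 1) : ℚ) * (x - 1) ^ i)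
        * (x - 1)
        = (k : ℚ) * (x - 1) + ∑ i ∈ Finset.Icc 1 k, ((k + 1).choose (i + 1) : ℚ)
          * (x - 1) ^ (i + 1) := by
      rw [add_mul, Finset.sum_mul]
      congr 1
      apply Finset.sum_congr rfl
      intro i _
      rw [pow_succ]
      ring
    have hbig : (1 : ℚ) + (k + 1) * (x - 1) + ∑ i ∈ Finset.Icc 1 k,
        ((k + 1).choose (i + 1) : ℚ) * (x - 1) ^ (i + 1) = x ^ (k + 1) := by
      rw [← rat_key2 k (x - 1), rat_key k (x - 1), sub_add_cancel]
    have hmulR : (∑ i ∈ Finset.Icc 1 k, x ^ i) * (x - 1) = x ^ (k + 1) - x := by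
      have hIcc : ∑ i ∈ Finset.Icc 1 k, x ^ i
          = (∑ i ∈ Finset.range (k + 1), x ^ i) - 1 := by
        rw [Finset.range_eq_Ico, ← Finset.Ico_add_one_right_eq_Icc]
        have : Finset.Ico 0 (k + 1) = Finset.Ico 0 1 ∪ Finset.Ico 1 (k + 1) := by
          rw [Finset.Ico_union_Ico_eq_Ico] <;> omega
        rw [this, Finset.sum_union (Finset.Ico_disjoint_Ico_consecutive 0 1 (k + 1))]
        simp
      rw [hIcc, sub_mul, geom_sum_mul, one_mul]
      ring
    rw [hmulL, hmulR, ← hbig]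
    ring
  
lemma poly_id (k : ℕ) (hk1 : 1 ≤ k) :
    C (k : ℚ) + ∑ i ∈ Finset.Icc 1 k, C (((k + 1).choose (i + 1) : ℕ) : ℚ)
        * ((X : Polynomial ℚ) - 1) ^ i
      = ∑ i ∈ Finset.Icc 1 k, (X : Polynomial ℚ) ^ i := by
  apply Polynomial.funext
  intro x
  simp only [eval_add, eval_finset_sum, eval_mul, eval_pow, eval_sub, eval_one, eval_X, eval_C]
  exact rat_id k hk1 x

lemma scalarT1 (n k m : ℕ) (hmk : m + k = n) (w : ℚ) (hw : w ≠ 0) :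
    ((n + 1).factorial : ℚ) / (w * (k.factorial : ℚ))
      - ((n + 1).factorial : ℚ) / (w * ((k + 1).factorial : ℚ))
      = ((n + 1).choose (k + 1) : ℚ) * (k : ℚ) * ((m.factorial : ℚ) / w) := by
  have hCh : ((n + 1).factorial : ℚ)
      = ((n + 1).choose (k + 1) : ℚ) * ((k + 1).factorial : ℚ) * (m.factorial : ℚ) := by
    have h := Nat.choose_mul_factorial_mul_factorial (show k + 1 ≤ n + 1 by omega)
    have h2 : n + 1 - (k + 1) = m := by omega
    rw [h2] at h
    exact_mod_cast h.symm
  have hfs : ((k + 1).factorial : ℚ) = ((k : ℚ) + 1) * (k.factorial : ℚ) := by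
    rw [Nat.factorial_succ]; push_cast; ring
  have hkfac : (k.factorial : ℚ) ≠ 0 := by exact_mod_cast (Nat.factorial_pos k).ne'
  have hk1q : ((k : ℚ) + 1) ≠ 0 := by positivity
  rw [hCh, hfs]
  field_simp
  ring

lemma scalarT2 (n k m i : ℕ) (hmk : m + k = n) (h1 : 1 ≤ i) (hik : i ≤ k) (w : ℚ) (hw : w ≠ 0) :
    ((n + 1).factorial : ℚ) / (w * ((i + 1).factorial : ℚ) * ((k - i).factorial : ℚ))
      = ((n + 1).choose (k + 1) : ℚ) * ((k + 1).choose (i + 1) : ℚ)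
        * ((m.factorial : ℚ) / w) := by
  have hCh : ((n + 1).factorial : ℚ)
      = ((n + 1).choose (k + 1) : ℚ) * ((k + 1).factorial : ℚ) * (m.factorial : ℚ) := by
    have h := Nat.choose_mul_factorial_mul_factorial (show k + 1 ≤ n + 1 by omega)
    have h2 : n + 1 - (k + 1) = m := by omega
    rw [h2] at h
    exact_mod_cast h.symm
  have hBin : ((k + 1).factorial : ℚ)
      = ((k + 1).choose (i + 1) : ℚ) * ((i + 1).factorial : ℚ) * ((k - i).factorial : ℚ) := by
    have h := Nat.choose_mul_factorial_mul_factorial (show i + 1 ≤ k + 1 by omega)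
    have h2 : k + 1 - (i + 1) = k - i := by omega
    rw [h2] at h
    exact_mod_cast h.symm
  have hifac : ((i + 1).factorial : ℚ) ≠ 0 := by exact_mod_cast (Nat.factorial_pos _).ne'
  have hkifac : (((k - i).factorial : ℚ)) ≠ 0 := by exact_mod_cast (Nat.factorial_pos _).ne'
  rw [hCh, hBin]
  field_simp

end HRec
open Equiv Equiv.Perm Finset Polynomial

namespace HRec

theorem key_rec (n k : ℕ) (hk1 : 1 ≤ k) (hkn : k ≤ n) :
    hpol n (k - 1) - hpol n k
      = ((n + 1).choose (k + 1) : ℚ) •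
        ((∑ i ∈ Finset.Icc 1 k, (X : Polynomial ℚ) ^ i) * Euler (n - k)) := by
  classical
  set m := n - k with hmdef
  have hmk : m + k = n := by omega
  have hmn : m < n := by omega
  have hn1 : 1 ≤ n := by omega
  rw [hpol, hpol, Jset_pred hk1 hkn, Jset_eq_Tl, ← hmdef]
  have hsub : (univ.filter (fun A : Finset (Fin n) => noCompIn A (Tl n m)))
      ⊆ (univ.filter (fun A : Finset (Fin n) => noCompIn A (Tl n (m + 1)))) := by
    apply Finset.monotone_filter_right
    intro A _ hA
    intro a ha
    obtain ⟨b, hb, hbJ, hsc⟩ := hA a ha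
    rw [mem_Tl] at hbJ
    exact ⟨b, hb, by rw [mem_Tl]; omega, hsc⟩
  rw [← Finset.sum_sdiff hsub, add_sub_assoc, ← Finset.sum_sub_distrib]
  -- evaluate the first (difference) piece : T1
  have hT1 : ∑ A ∈ (univ.filter (fun A : Finset (Fin n) => noCompIn A (Tl n m))),
      ((((n + 1).factorial : ℚ) / (Nat.card ↥(Wsub (Astar A (Tl n (m + 1)))) : ℚ)) •
        ((X : Polynomial ℚ) - 1) ^ A.card
       - (((n + 1).factorial : ℚ) / (Nat.card ↥(Wsub (Astar A (Tl n m))) : ℚ)) •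
        ((X : Polynomial ℚ) - 1) ^ A.card)
      = (((n + 1).choose (k + 1) : ℚ) * (k : ℚ)) • Euler m := by
    have hpow : (LowS n m).powerset ⊆
        univ.filter (fun A : Finset (Fin n) => noCompIn A (Tl n m)) := by
      intro A hA
      rw [Finset.mem_powerset] at hA
      rw [Finset.mem_filter]
      exact ⟨Finset.mem_univ _, noCompIn_of_low hA m le_rfl⟩
    have hvan : ∀ A ∈ univ.filter (fun A : Finset (Fin n) => noCompIn A (Tl n m)),
        A ∉ (LowS n m).powerset →
        ((((n + 1).factorial : ℚ) / (Nat.card ↥(Wsub (Astar A (Tl n (m + 1)))) : ℚ)) •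
          ((X : Polynomial ℚ) - 1) ^ A.card
         - (((n + 1).factorial : ℚ) / (Nat.card ↥(Wsub (Astar A (Tl n m))) : ℚ)) •
          ((X : Polynomial ℚ) - 1) ^ A.card) = 0 := by
      intro A hA hnot
      rw [Finset.mem_filter] at hA
      have heq : Astar A (Tl n m) = Astar A (Tl n (m + 1)) := by
        rw [Tl_insert hmn, Astar, Astar, Finset.filter_insert]
        split_ifs with hcnd
        · by_cases hmA : (⟨m, hmn⟩ : Fin n) ∈ A
          · rw [Finset.union_insert, Finset.insert_eq_self.mpr (Finset.mem_union_left _ hmA)]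
          · exact absurd (Finset.mem_powerset.mpr
              (low_of_commute_m (mF := ⟨m, hmn⟩) rfl hA.2 hmA hcnd)) hnot
        · rfl
      rw [heq, sub_self]
    rw [← Finset.sum_subset hpow hvan, ← eulerLow m (le_of_lt hmn), Finset.smul_sum]
    apply Finset.sum_congr rfl
    intro A hA
    rw [Finset.mem_powerset] at hA
    have hW1 : Nat.card ↥(Wsub (Astar A (Tl n (m + 1)))) = Nat.card ↥(Wsub A) * k.factorial := by
      rw [Astar_low hA (m + 1) (by omega),
        card_Wsub_union_low hA (fun j hj => by rw [mem_Tl] at hj; omega),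
        card_Wsub_Tl (m + 1) hn1 (by omega)]
      congr 2
      omega
    have hW0 : Nat.card ↥(Wsub (Astar A (Tl n m))) = Nat.card ↥(Wsub A) * (k + 1).factorial := by
      rw [Astar_low hA m le_rfl,
        card_Wsub_union_low hA (fun j hj => by rw [mem_Tl] at hj; omega),
        card_Wsub_Tl m hn1 (by omega)]
      congr 2
      omega
    rw [hW1, hW0]
    have hw : ((Nat.card ↥(Wsub A) : ℚ)) ≠ 0 := by
      have : 0 < Nat.card ↥(Wsub A) := Nat.card_pos
      exact_mod_cast this.ne'
    rw [smul_smul, ← sub_smul]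
    congr 1
    push_cast
    linear_combination scalarT1 n k m hmk (Nat.card ↥(Wsub A) : ℚ) hw
  -- evaluate the second piece : T2
  have hT2 : ∑ A ∈ ((univ.filter (fun A : Finset (Fin n) => noCompIn A (Tl n (m + 1)))) \
      (univ.filter (fun A : Finset (Fin n) => noCompIn A (Tl n m)))),
      (((n + 1).factorial : ℚ) / (Nat.card ↥(Wsub (Astar A (Tl n (m + 1)))) : ℚ)) •
        ((X : Polynomial ℚ) - 1) ^ A.card
      = ∑ i ∈ Finset.Icc 1 k, (((n + 1).choose (k + 1) : ℚ) * (((k + 1).choose (i + 1) : ℕ) : ℚ)) •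
          (Euler m * ((X : Polynomial ℚ) - 1) ^ i) := by
    have hmem : ∀ A ∈ ((univ.filter (fun A : Finset (Fin n) => noCompIn A (Tl n (m + 1)))) \
        (univ.filter (fun A : Finset (Fin n) => noCompIn A (Tl n m)))),
        noCompIn A (Tl n (m + 1)) ∧ ¬ noCompIn A (Tl n m) := by
      intro A hA
      rw [Finset.mem_sdiff, Finset.mem_filter, Finset.mem_filter] at hA
      exact ⟨hA.1.2, fun hc => hA.2 ⟨Finset.mem_univ _, hc⟩⟩
    have hval : ∀ (A' : Finset (Fin n)), A' ⊆ LowS n m → ∀ e, m ≤ e → e ≤ n - 1 →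
        (((n + 1).factorial : ℚ) /
            (Nat.card ↥(Wsub (Astar (A' ∪ Iv n m e) (Tl n (m + 1)))) : ℚ)) •
          ((X : Polynomial ℚ) - 1) ^ (A' ∪ Iv n m e).card
        = (((n + 1).factorial : ℚ) /
            ((Nat.card ↥(Wsub A') : ℚ) * ((e + 2 - m).factorial : ℚ)
              * ((n - e - 1).factorial : ℚ))) •
          ((X : Polynomial ℚ) - 1) ^ (A'.card + (e + 1 - m)) := by
      intro A' hA' e hme hen
      rw [Astar_term2 hA' hme hen hn1, card_Wsub_term2 hA' hme hen hn1]
      have hcard : (A' ∪ Iv n m e).card = A'.card + (e + 1 - m) := by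
        rw [Finset.card_union_of_disjoint, card_Iv m e (by omega) (by omega)]
        rw [Finset.disjoint_left]
        intro x hx hx2
        have := mem_LowS.mp (hA' hx)
        have := mem_Iv.mp hx2
        omega
      rw [hcard]
      congr 1
      push_cast
      ring
    have hstep : ∑ A ∈ ((univ.filter (fun A : Finset (Fin n) => noCompIn A (Tl n (m + 1)))) \
        (univ.filter (fun A : Finset (Fin n) => noCompIn A (Tl n m)))),
        (((n + 1).factorial : ℚ) / (Nat.card ↥(Wsub (Astar A (Tl n (m + 1)))) : ℚ)) •
          ((X : Polynomial ℚ) - 1) ^ A.card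
        = ∑ p ∈ (LowS n m).powerset ×ˢ Finset.Icc m (n - 1),
          (((n + 1).factorial : ℚ) /
            ((Nat.card ↥(Wsub p.1) : ℚ) * ((p.2 + 2 - m).factorial : ℚ)
              * ((n - p.2 - 1).factorial : ℚ))) •
          ((X : Polynomial ℚ) - 1) ^ (p.1.card + (p.2 + 1 - m)) := by
      apply Finset.sum_nbij'
        (i := fun A => (A.filter (fun x : Fin n => (x : ℕ) + 2 ≤ m),
          (A.filter (fun x : Fin n => m ≤ (x : ℕ))).sup (fun x : Fin n => (x : ℕ))))
        (j := fun p => p.1 ∪ Iv n m p.2)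
      · intro A hA
        obtain ⟨h1, h0⟩ := hmem A hA
        obtain ⟨hl, hme, hen, -⟩ := str_decomp hmn h1 h0
        rw [Finset.mem_product]
        exact ⟨Finset.mem_powerset.mpr hl, Finset.mem_Icc.mpr ⟨hme, hen⟩⟩
      · intro p hp
        rw [Finset.mem_product] at hp
        have hA' := Finset.mem_powerset.mp hp.1
        obtain ⟨hme, hen⟩ := Finset.mem_Icc.mp hp.2
        obtain ⟨hc1, hc0⟩ := mem_S1_diff hmn hA' hme hen
        rw [Finset.mem_sdiff, Finset.mem_filter, Finset.mem_filter]
        exact ⟨⟨Finset.mem_univ _, hc1⟩, fun hc => hc0 hc.2⟩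
      · intro A hA
        obtain ⟨h1, h0⟩ := hmem A hA
        obtain ⟨-, -, -, hdec⟩ := str_decomp hmn h1 h0
        exact hdec.symm
      · intro p hp
        rw [Finset.mem_product] at hp
        have hA' := Finset.mem_powerset.mp hp.1
        obtain ⟨hme, hen⟩ := Finset.mem_Icc.mp hp.2
        have hc1 : (p.1 ∪ Iv n m p.2).filter (fun x : Fin n => (x : ℕ) + 2 ≤ m) = p.1 := by
          ext x
          rw [Finset.mem_filter, Finset.mem_union, mem_Iv]
          constructor
          · rintro ⟨hx | hx, hxm⟩
            · exact hx
            · omega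
          · intro hx
            exact ⟨Or.inl hx, mem_LowS.mp (hA' hx)⟩
        have hfil : (p.1 ∪ Iv n m p.2).filter (fun x : Fin n => m ≤ (x : ℕ)) = Iv n m p.2 := by
          ext x
          rw [Finset.mem_filter, Finset.mem_union, mem_Iv]
          constructor
          · rintro ⟨hx | hx, hxm⟩
            · have := mem_LowS.mp (hA' hx)
              omega
            · exact hx
          · intro hx
            exact ⟨Or.inr hx, hx.1⟩
        have hc2 : ((p.1 ∪ Iv n m p.2).filter (fun x : Fin n => m ≤ (x : ℕ))).sup
            (fun x : Fin n => (x : ℕ)) = p.2 := by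
          rw [hfil]
          apply le_antisymm
          · apply Finset.sup_le
            intro x hx
            exact (mem_Iv.mp hx).2
          · have hmem2 : (⟨p.2, by omega⟩ : Fin n) ∈ Iv n m p.2 :=
              mem_Iv.mpr ⟨hme, le_rfl⟩
            exact Finset.le_sup (f := fun x : Fin n => (x : ℕ)) hmem2
        exact Prod.ext hc1 hc2
      · intro A hA
        obtain ⟨h1, h0⟩ := hmem A hA
        obtain ⟨hl, hme, hen, hdec⟩ := str_decomp hmn h1 h0
        conv_lhs => rw [hdec]
        exact hval _ hl _ hme hen
    rw [hstep, Finset.sum_product]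
    have hswap : ∀ A' ∈ (LowS n m).powerset,
        (∑ e ∈ Finset.Icc m (n - 1),
          (((n + 1).factorial : ℚ) /
            ((Nat.card ↥(Wsub A') : ℚ) * ((e + 2 - m).factorial : ℚ)
              * ((n - e - 1).factorial : ℚ))) •
          ((X : Polynomial ℚ) - 1) ^ (A'.card + (e + 1 - m)))
        = ∑ i ∈ Finset.Icc 1 k, (((n + 1).choose (k + 1) : ℚ) * (((k + 1).choose (i + 1) : ℕ) : ℚ)) •
            (((m.factorial : ℚ) / (Nat.card ↥(Wsub A') : ℚ)) •
              (((X : Polynomial ℚ) - 1) ^ A'.card * ((X : Polynomial ℚ) - 1) ^ i)) := by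
      intro A' _
      have hw : ((Nat.card ↥(Wsub A') : ℚ)) ≠ 0 := by
        have : 0 < Nat.card ↥(Wsub A') := Nat.card_pos
        exact_mod_cast this.ne'
      apply Finset.sum_nbij' (i := fun e => e + 1 - m) (j := fun i => m + i - 1)
      · intro e he
        rw [Finset.mem_Icc] at he ⊢
        omega
      · intro i hi
        rw [Finset.mem_Icc] at hi ⊢
        omega
      · intro e he
        rw [Finset.mem_Icc] at he
        omega
      · intro i hi
        rw [Finset.mem_Icc] at hi
        omega
      · intro e he
        rw [Finset.mem_Icc] at he
        rw [smul_smul, ← pow_add]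
        congr 1
        have h1e : e + 2 - m = (e + 1 - m) + 1 := by omega
        have h2e : n - e - 1 = k - (e + 1 - m) := by omega
        rw [h1e, h2e]
        linear_combination scalarT2 n k m (e + 1 - m) hmk (by omega) (by omega)
          (Nat.card ↥(Wsub A') : ℚ) hw
    rw [Finset.sum_congr rfl hswap, Finset.sum_comm]
    apply Finset.sum_congr rfl
    intro i _
    rw [← Finset.smul_sum]
    congr 1
    rw [← eulerLow m (le_of_lt hmn), Finset.sum_mul]
    apply Finset.sum_congr rfl
    intro A' _
    rw [smul_mul_assoc]
  rw [hT1, hT2]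
  -- final polynomial identity
  rw [← poly_id k hk1, add_mul, Finset.sum_mul, smul_add, Finset.smul_sum]
  rw [add_comm]
  congr 1
  · rw [smul_eq_C_mul, smul_eq_C_mul, C_mul, mul_assoc]
  · apply Finset.sum_congr rfl
    intro i _
    rw [smul_eq_C_mul, smul_eq_C_mul, C_mul]
    ring

end HRec

theorem hpoly_recurrence (n k : ℕ) (hk1 : 1 ≤ k) (hkn : k ≤ n) :
    hpol n 0 = Euler (n + 1) ∧
    hpol n k = hpol n (k - 1) -
      ((n + 1).choose (k + 1) : ℚ) • ((∑ i ∈ Finset.Icc 1 k, X ^ i) * Euler (n - k)) := by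
  refine ⟨HRec.hpol_zero n, ?_⟩
  have key := HRec.key_rec n k hk1 hkn
  rw [← key]
  ring
end
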